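/- arXiv:1805.12047 — 10 statements merged into one kernel-verified Lean document; each statement's English description precedes it below -/
import Mathlib

section
/- If μ is non-degenerate in degree d, then the nodes of any quadrature rule for μ of degree 2d with at most d+1 nodes are pairwise distinct, and moreover any quadrature rule for μ of degree 2d has at least d+1 nodes. -/
open MeasureTheory Polynomial

/-- The k-th moment of a measure on ℝ. -/
noncomputable def mom (μ : Measure ℝ) (k : ℕ) : ℝ := ∫ t, t ^ k ∂μ

/-- Non-degeneracy in degree d: moments up to degree 2d exist and
∫ f dμ > 0 for every nonzero nonnegative polynomial of degree ≤ 2d. -/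
def NonDeg (μ : Measure ℝ) (d : ℕ) : Prop :=
  (∀ k ≤ 2 * d, Integrable (fun t => t ^ k) μ) ∧
  ∀ f : Polynomial ℝ, f ≠ 0 → f.natDegree ≤ 2 * d → (∀ x, 0 ≤ f.eval x) →
    0 < ∫ t, f.eval t ∂μ

/-- Evaluation of a polynomial at a node in ℝ ∪ {∞}: at `some a` it is `f(a)`;
at `none` (infinity) it is the coefficient of degree D. -/
noncomputable def ev (D : ℕ) (x : Option ℝ) (f : Polynomial ℝ) : ℝ :=
  x.elim (f.coeff D) (fun a => f.eval a)

/-- The d × d Hankel-type moment matrix with (i,j) entry m_{i+j+k} (0-based). -/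
noncomputable def hank (μ : Measure ℝ) (d k : ℕ) : Matrix (Fin d) (Fin d) ℝ :=
  Matrix.of fun i j => mom μ ((i : ℕ) + (j : ℕ) + k)


lemma auxcard (μ : Measure ℝ) (d : ℕ) (hnd : NonDeg μ d)
    (n : ℕ) (r : Fin n → Option ℝ) (w : Fin n → ℝ)
    (_hw : ∀ i, 0 < w i)
    (hq : ∀ f : Polynomial ℝ, f.natDegree ≤ 2 * d →
      ∫ t, f.eval t ∂μ = ∑ i, w i * ev (2 * d) (r i) f) :
    d + 1 ≤ (Finset.univ.image r).card := by
  by_contra h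
  push_neg at h
  have hA : (Finset.univ.image r).card ≤ d := by omega
  set A := Finset.univ.image r with hAdef
  set p : Polynomial ℝ := ∏ x ∈ A, x.elim 1 (fun a => X - C a) with hp
  have hfac : ∀ x : Option ℝ, (x.elim 1 (fun a => X - C a) : Polynomial ℝ).Monic := by
    intro x; cases x
    · exact monic_one
    · exact monic_X_sub_C _
  have hpm : p.Monic := monic_prod_of_monic _ _ fun x _ => hfac x
  have hpne : p ≠ 0 := hpm.ne_zero
  have hdeg : p.natDegree = (A.erase none).card := by
    rw [hp, Polynomial.natDegree_prod _ _ (fun x _ => (hfac x).ne_zero)]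
    rw [← Finset.sum_erase A
      (f := fun x => (x.elim 1 (fun a => X - C a) : Polynomial ℝ).natDegree)
      (a := none) (by simp)]
    rw [Finset.card_eq_sum_ones]
    apply Finset.sum_congr rfl
    intro x hx
    cases x
    · simp at hx
    · simp
  have hdegle : p.natDegree ≤ d := by
    rw [hdeg]
    exact le_trans (Finset.card_le_card (Finset.erase_subset _ _)) hA
  set f : Polynomial ℝ := p * p with hf
  have hfdeg : f.natDegree = 2 * p.natDegree := by
    rw [hf, Polynomial.natDegree_mul hpne hpne]; ring
  have hfdegle : f.natDegree ≤ 2 * d := by omega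
  have hnn : ∀ x, 0 ≤ f.eval x := by
    intro x; rw [hf, eval_mul]; exact mul_self_nonneg _
  have hpos : 0 < ∫ t, f.eval t ∂μ :=
    hnd.2 f (mul_ne_zero hpne hpne) hfdegle hnn
  have hzero : ∫ t, f.eval t ∂μ = 0 := by
    rw [hq f hfdegle]
    apply Finset.sum_eq_zero
    intro i _
    have hmem : r i ∈ A := Finset.mem_image_of_mem r (Finset.mem_univ i)
    rcases hri : r i with _ | a
    · rw [hri] at hmem
      have h1 : 1 ≤ A.card := Finset.card_pos.mpr ⟨none, hmem⟩
      have hce : (A.erase none).card = A.card - 1 := Finset.card_erase_of_mem hmem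
      have : f.natDegree < 2 * d := by omega
      simp [ev, Polynomial.coeff_eq_zero_of_natDegree_lt this]
    · rw [hri] at hmem
      have hpz : p.eval a = 0 := by
        rw [hp, Polynomial.eval_prod]
        apply Finset.prod_eq_zero hmem
        simp
      simp [ev, hf, hpz]
  linarith

/-- For μ non-degenerate in degree d: any quadrature rule of degree 2d with at most
d+1 nodes has pairwise distinct nodes, and any quadrature rule of degree 2d has at
least d+1 (distinct) nodes. -/
theorem stmt2 (μ : Measure ℝ) (d : ℕ) (hnd : NonDeg μ d) :
    (∀ (n : ℕ) (r : Fin n → Option ℝ) (w : Fin n → ℝ),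
      (∀ i, 0 < w i) →
      (∀ f : Polynomial ℝ, f.natDegree ≤ 2 * d →
        ∫ t, f.eval t ∂μ = ∑ i, w i * ev (2 * d) (r i) f) →
      n ≤ d + 1 → Function.Injective r) ∧
    (∀ (n : ℕ) (r : Fin n → Option ℝ) (w : Fin n → ℝ),
      (∀ i, 0 < w i) →
      (∀ f : Polynomial ℝ, f.natDegree ≤ 2 * d →
        ∫ t, f.eval t ∂μ = ∑ i, w i * ev (2 * d) (r i) f) →
      d + 1 ≤ (Finset.univ.image r).card) := by
  constructor
  · intro n r w hw hq hn
    have h1 := auxcard μ d hnd n r w hw hq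
    have h2 : (Finset.univ.image r).card ≤ n := by
      simpa using Finset.card_image_le (s := (Finset.univ : Finset (Fin n))) (f := r)
    have hcard : (Finset.univ.image r).card = (Finset.univ : Finset (Fin n)).card := by
      simp only [Finset.card_univ, Fintype.card_fin]
      omega
    have hinj : Set.InjOn r (Finset.univ : Finset (Fin n)) :=
      Finset.card_image_iff.mp hcard
    intro i j hij
    exact hinj (by simp) (by simp) hij
  · intro n r w hw hq
    exact auxcard μ d hnd n r w hw hq
end

section
/- Let μ be non-degenerate in degree d and let r_1,…,r_{d+1} ∈ ℝ ∪ {∞} be nodes of a quadrature rule for μ of degree 2d, with r_1, r_2 ∈ ℝ. Then the bilinear form B_{r_1,r_2}(p,q) = ∫ (r_1 − t)(r_2 − t) p q dμ on ℝ[t]_{≤d−1} is degenerate; equivalently, det(r_1 r_2 M_{d−1} − (r_1 + r_2) M'_{d−1} + M''_{d−1}) = 0, where M_{d−1} = (m_{i+j−2}), M'_{d−1} = (m_{i+j−1}), M''_{d−1} = (m_{i+j}) are d×d Hankel matrices of the moments of μ. -/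
open MeasureTheory Polynomial
open Matrix

/-- If μ is non-degenerate in degree d and r₁,…,r_{d+1} ∈ ℝ ∪ {∞} are the (distinct)
nodes of a quadrature rule for μ of degree 2d with r₁ = x, r₂ = y real, then
det(xy M_{d-1} - (x+y) M'_{d-1} + M''_{d-1}) = 0. -/
theorem stmt3 (μ : Measure ℝ) (d : ℕ) (hd : 1 ≤ d) (hnd : NonDeg μ d)
    (r : Fin (d + 1) → Option ℝ) (w : Fin (d + 1) → ℝ)
    (hw : ∀ i, 0 < w i) (hinj : Function.Injective r)
    (hq : ∀ f : Polynomial ℝ, f.natDegree ≤ 2 * d →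
      ∫ t, f.eval t ∂μ = ∑ i, w i * ev (2 * d) (r i) f)
    (x y : ℝ) (h1 : r ⟨0, by omega⟩ = some x) (h2 : r ⟨1, by omega⟩ = some y) :
    ((x * y) • hank μ d 0 - (x + y) • hank μ d 1 + hank μ d 2).det = 0 := by
  classical
  have hI := hnd.1
  -- integrability of the basic integrands
  have hintg : ∀ k, k + 2 ≤ 2 * d → Integrable (fun t => (x - t) * (y - t) * t ^ k) μ := by
    intro k hk
    have h1' := hI k (by omega)
    have h2' := hI (k+1) (by omega)
    have h3' := hI (k+2) hk
    have he : (fun t : ℝ => (x - t) * (y - t) * t ^ k)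
        = fun t => x * y * t ^ k + (-(x + y)) * t ^ (k+1) + t ^ (k+2) := by
      funext t; ring
    rw [he]
    exact ((h1'.const_mul _).add (h2'.const_mul _)).add h3'
  have hval : ∀ k, k + 2 ≤ 2 * d →
      x * y * mom μ k - (x + y) * mom μ (k+1) + mom μ (k+2)
        = ∫ t, (x - t) * (y - t) * t ^ k ∂μ := by
    intro k hk
    have h1' := hI k (by omega)
    have h2' := hI (k+1) (by omega)
    have h3' := hI (k+2) hk
    have he : (fun t : ℝ => (x - t) * (y - t) * t ^ k)
        = fun t => x * y * t ^ k + (-(x + y)) * t ^ (k+1) + t ^ (k+2) := by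
      funext t; ring
    have e1 : (∫ t, (x * y * t ^ k + -(x + y) * t ^ (k+1)) + t ^ (k+2) ∂μ)
        = (∫ t, x * y * t ^ k + -(x + y) * t ^ (k+1) ∂μ) + ∫ t, t ^ (k+2) ∂μ :=
      integral_add ((h1'.const_mul _).add (h2'.const_mul _)) h3'
    have e2 : (∫ t, x * y * t ^ k + -(x + y) * t ^ (k+1) ∂μ)
        = (∫ t, x * y * t ^ k ∂μ) + ∫ t, -(x + y) * t ^ (k+1) ∂μ :=
      integral_add (h1'.const_mul _) (h2'.const_mul _)
    rw [he, e1, e2, integral_const_mul, integral_const_mul]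
    simp only [mom]; ring
  -- the auxiliary polynomial vanishing at the real nodes r_3,...,r_{d+1}
  set f : ℕ → Polynomial ℝ := fun n =>
    if h : n + 2 < d + 1 then (r ⟨n+2, h⟩).elim 1 (fun a => X - C a) else 1 with hf
  have hfm : ∀ n, (f n).Monic := by
    intro n
    simp only [hf]
    split
    · cases r ⟨n+2, ‹_›⟩ <;> simp [monic_one, monic_X_sub_C]
    · exact monic_one
  have hfd : ∀ n, (f n).natDegree ≤ 1 := by
    intro n
    simp only [hf]
    split
    · cases r ⟨n+2, ‹_›⟩ <;> simp [natDegree_X_sub_C]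
    · simp
  set p : Polynomial ℝ := ∏ n ∈ Finset.range (d - 1), f n with hp
  have hpm : p.Monic := monic_prod_of_monic _ _ fun n _ => hfm n
  have hpd : p.natDegree ≤ d - 1 := by
    refine le_trans (natDegree_prod_le _ _) ?_
    calc ∑ n ∈ Finset.range (d-1), (f n).natDegree
        ≤ ∑ _n ∈ Finset.range (d-1), 1 := Finset.sum_le_sum fun n _ => hfd n
      _ = d - 1 := by simp
  have hpd' : p.natDegree < d := by omega
  -- p vanishes at real nodes with index ≥ 2
  have hpe : ∀ (i : Fin (d+1)) (a : ℝ), 2 ≤ (i : ℕ) → r i = some a → p.eval a = 0 := by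
    intro i a h2i hra
    have hn : (i : ℕ) - 2 ∈ Finset.range (d - 1) := by
      have := i.isLt; simp only [Finset.mem_range]; omega
    have hfn : f ((i : ℕ) - 2) = X - C a := by
      have hlt : (i : ℕ) - 2 + 2 < d + 1 := by have := i.isLt; omega
      have hi : (⟨(i : ℕ) - 2 + 2, hlt⟩ : Fin (d+1)) = i := by
        apply Fin.ext; simp; omega
      simp only [hf, dif_pos hlt, hi, hra, Option.elim]
    rw [hp, eval_prod]
    refine Finset.prod_eq_zero hn ?_
    rw [hfn]; simp
  -- if some node (index ≥ 2) is ∞, the degree of p drops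
  have hnone : ∀ i : Fin (d+1), r i = none → p.natDegree ≤ d - 2 ∧ 2 ≤ d := by
    intro i hri
    have h2i : 2 ≤ (i : ℕ) := by
      by_contra hc
      push_neg at hc
      have hcase : (i : ℕ) = 0 ∨ (i : ℕ) = 1 := by omega
      rcases hcase with hi0 | hi1
      · have hieq : i = (⟨0, by omega⟩ : Fin (d+1)) := Fin.ext (by simpa using hi0)
        rw [hieq, h1] at hri; exact nomatch hri
      · have hieq : i = (⟨1, by omega⟩ : Fin (d+1)) := Fin.ext (by simpa using hi1)
        rw [hieq, h2] at hri; exact nomatch hri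
    have hd2 : 2 ≤ d := by have := i.isLt; omega
    set n := (i : ℕ) - 2 with hn
    have hnr : n ∈ Finset.range (d - 1) := by
      simp only [Finset.mem_range]; have := i.isLt; omega
    have hfn : f n = 1 := by
      have hlt : n + 2 < d + 1 := by have := i.isLt; omega
      have hi : (⟨n + 2, hlt⟩ : Fin (d+1)) = i := by apply Fin.ext; simp; omega
      simp only [hf, dif_pos hlt, hi, hri, Option.elim]
    constructor
    · refine le_trans (natDegree_prod_le _ _) ?_
      rw [← Finset.add_sum_erase _ _ hnr, hfn, natDegree_one, zero_add]
      calc ∑ m ∈ (Finset.range (d-1)).erase n, (f m).natDegree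
          ≤ ∑ _m ∈ (Finset.range (d-1)).erase n, 1 := Finset.sum_le_sum fun m _ => hfd m
        _ = ((Finset.range (d-1)).erase n).card := by simp
        _ ≤ d - 2 := by rw [Finset.card_erase_of_mem hnr, Finset.card_range]; omega
    · exact hd2
  -- the kernel vector
  set v : Fin d → ℝ := fun i => p.coeff i with hv
  have hv0 : v ≠ 0 := by
    intro hc
    have : v ⟨p.natDegree, hpd'⟩ = 0 := by rw [hc]; rfl
    rw [hv] at this
    simp only at this
    rw [hpm.coeff_natDegree] at this
    exact one_ne_zero this
  set M : Matrix (Fin d) (Fin d) ℝ :=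
    (x * y) • hank μ d 0 - (x + y) • hank μ d 1 + hank μ d 2 with hM
  suffices hMv : M *ᵥ v = 0 by
    rw [← Matrix.exists_mulVec_eq_zero_iff]
    exact ⟨v, hv0, hMv⟩
  funext j
  -- the test polynomial
  set g : Polynomial ℝ := (C x - X) * ((C y - X) * (p * X ^ (j : ℕ))) with hg
  have hgd : ∀ e, p.natDegree ≤ e → g.natDegree ≤ 2 + e + (d - 1) := by
    intro e he
    have hx1 : (C x - X : Polynomial ℝ).natDegree ≤ 1 := by
      refine le_trans (natDegree_sub_le _ _) ?_; simp
    have hy1 : (C y - X : Polynomial ℝ).natDegree ≤ 1 := by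
      refine le_trans (natDegree_sub_le _ _) ?_; simp
    have hXj : ((X : Polynomial ℝ) ^ (j : ℕ)).natDegree ≤ d - 1 := by
      rw [natDegree_X_pow]; have := j.isLt; omega
    calc g.natDegree ≤ (C x - X : Polynomial ℝ).natDegree
          + ((C y - X) * (p * X ^ (j : ℕ))).natDegree := natDegree_mul_le
      _ ≤ (C x - X : Polynomial ℝ).natDegree + ((C y - X : Polynomial ℝ).natDegree
            + (p * X ^ (j : ℕ)).natDegree) := by
          gcongr; exact natDegree_mul_le
      _ ≤ (C x - X : Polynomial ℝ).natDegree + ((C y - X : Polynomial ℝ).natDegree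
            + (p.natDegree + ((X : Polynomial ℝ) ^ (j : ℕ)).natDegree)) := by
          gcongr; exact natDegree_mul_le
      _ ≤ 1 + (1 + (e + (d - 1))) := by gcongr
      _ = 2 + e + (d - 1) := by ring
  have hg2d : g.natDegree ≤ 2 * d := le_trans (hgd _ hpd) (by omega)
  -- the quadrature sum vanishes
  have hsum : ∫ t, g.eval t ∂μ = 0 := by
    rw [hq g hg2d]
    refine Finset.sum_eq_zero fun i _ => ?_
    rcases Nat.lt_or_ge (i : ℕ) 2 with hi2 | hi2
    · have hcase : (i : ℕ) = 0 ∨ (i : ℕ) = 1 := by omega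
      rcases hcase with hi0 | hi1
      · have hieq : i = (⟨0, by omega⟩ : Fin (d+1)) := Fin.ext (by simpa using hi0)
        rw [hieq, h1]
        simp [ev, hg]
      · have hieq : i = (⟨1, by omega⟩ : Fin (d+1)) := Fin.ext (by simpa using hi1)
        rw [hieq, h2]
        simp [ev, hg]
    · cases hri : r i with
      | some a =>
        simp only [ev, Option.elim]
        rw [hg]
        simp [hpe i a hi2 hri]
      | none =>
        simp only [ev, Option.elim]
        obtain ⟨hpd2, hd2⟩ := hnone i hri
        have : g.natDegree < 2 * d := lt_of_le_of_lt (hgd _ hpd2) (by omega)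
        rw [coeff_eq_zero_of_natDegree_lt this, mul_zero]
  -- compute the mulVec entry
  have step1 : (M *ᵥ v) j
      = ∑ i : Fin d, (∫ t, (x - t) * (y - t) * t ^ ((j : ℕ) + (i : ℕ)) ∂μ) * v i := by
    rw [Matrix.mulVec, dotProduct]
    refine Finset.sum_congr rfl fun i _ => ?_
    congr 1
    have hMji : M j i = x * y * mom μ ((j:ℕ) + (i:ℕ))
        - (x + y) * mom μ ((j:ℕ) + (i:ℕ) + 1) + mom μ ((j:ℕ) + (i:ℕ) + 2) := by
      simp [hM, hank, Matrix.sub_apply, Matrix.add_apply, Matrix.smul_apply, smul_eq_mul]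
    rw [hMji, hval _ (by have := j.isLt; have := i.isLt; omega)]
  rw [Pi.zero_apply, step1]
  have step2 : ∑ i : Fin d, (∫ t, (x - t) * (y - t) * t ^ ((j : ℕ) + (i : ℕ)) ∂μ) * v i
      = ∫ t, ∑ i : Fin d, (x - t) * (y - t) * t ^ ((j : ℕ) + (i : ℕ)) * v i ∂μ := by
    rw [integral_finset_sum]
    · refine Finset.sum_congr rfl fun i _ => ?_
      exact (integral_mul_const _ _).symm
    · intro i _
      exact (hintg _ (by have := j.isLt; have := i.isLt; omega)).mul_const _
  rw [step2]
  have step3 : ∀ t : ℝ, ∑ i : Fin d, (x - t) * (y - t) * t ^ ((j : ℕ) + (i : ℕ)) * v i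
      = g.eval t := by
    intro t
    have hpt : p.eval t = ∑ i ∈ Finset.range d, p.coeff i * t ^ i :=
      eval_eq_sum_range' hpd' t
    rw [hg]
    simp only [eval_mul, eval_sub, eval_C, eval_X, eval_pow]
    rw [hpt, ← Fin.sum_univ_eq_sum_range (fun i => p.coeff i * t ^ i) d]
    rw [Finset.sum_mul, Finset.mul_sum, Finset.mul_sum]
    refine Finset.sum_congr rfl fun i _ => ?_
    rw [pow_add]; simp only [hv]; ring
  calc (∫ t, ∑ i : Fin d, (x - t) * (y - t) * t ^ ((j : ℕ) + (i : ℕ)) * v i ∂μ)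
      = ∫ t, g.eval t ∂μ := by
        refine integral_congr_ae (Filter.Eventually.of_forall fun t => ?_)
        exact step3 t
    _ = 0 := hsum
end

section
/- Let μ be non-degenerate in degree d and x, y ∈ ℝ. If det(x y M_{d−1} − (x+y) M'_{d−1} + M''_{d−1}) = 0, then there exists a quadrature rule for μ of degree 2d with d+1 nodes in ℝ ∪ {∞} two of which are x and y. -/
open MeasureTheory Polynomial

namespace Quad

noncomputable def LM (μ : Measure ℝ) (d : ℕ) (f : Polynomial ℝ) : ℝ :=
  ∑ k ∈ Finset.range (2 * d + 1), f.coeff k * mom μ k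

lemma LM_add (μ : Measure ℝ) (d : ℕ) (f g : Polynomial ℝ) :
    LM μ d (f + g) = LM μ d f + LM μ d g := by
  simp [LM, add_mul, Finset.sum_add_distrib]

lemma LM_C_mul (μ : Measure ℝ) (d : ℕ) (c : ℝ) (f : Polynomial ℝ) :
    LM μ d (C c * f) = c * LM μ d f := by
  simp [LM, mul_assoc, Finset.mul_sum]

lemma LM_smul (μ : Measure ℝ) (d : ℕ) (c : ℝ) (f : Polynomial ℝ) :
    LM μ d (c • f) = c * LM μ d f := by
  rw [smul_eq_C_mul, LM_C_mul]

lemma LM_sub (μ : Measure ℝ) (d : ℕ) (f g : Polynomial ℝ) :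
    LM μ d (f - g) = LM μ d f - LM μ d g := by
  simp [LM, sub_mul, Finset.sum_sub_distrib]

lemma LM_sum (μ : Measure ℝ) (d : ℕ) {ι : Type*} (s : Finset ι) (F : ι → Polynomial ℝ) :
    LM μ d (∑ i ∈ s, F i) = ∑ i ∈ s, LM μ d (F i) := by
  simp only [LM, finset_sum_coeff, Finset.sum_mul]
  rw [Finset.sum_comm]

lemma LM_C_mul_X_pow (μ : Measure ℝ) (d : ℕ) (c : ℝ) {k : ℕ} (hk : k ≤ 2 * d) :
    LM μ d (C c * X ^ k) = c * mom μ k := by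
  simp only [LM, coeff_C_mul, coeff_X_pow]
  rw [Finset.sum_eq_single k]
  · simp
  · intro b _ hb; simp [hb]
  · intro h; exact absurd (Finset.mem_range.2 (Nat.lt_succ_of_le hk)) h

lemma LM_X_pow (μ : Measure ℝ) (d : ℕ) {k : ℕ} (hk : k ≤ 2 * d) :
    LM μ d (X ^ k) = mom μ k := by
  have := LM_C_mul_X_pow μ d 1 hk; simpa using this

lemma integrable_eval {μ : Measure ℝ} {d : ℕ} (h1 : ∀ k ≤ 2 * d, Integrable (fun t => t ^ k) μ)
    {f : Polynomial ℝ} (hf : f.natDegree ≤ 2 * d) :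
    Integrable (fun t => f.eval t) μ := by
  have hlt : f.natDegree < 2 * d + 1 := Nat.lt_succ_of_le hf
  have : (fun t => f.eval t) =
      fun t => ∑ k ∈ Finset.range (2 * d + 1), f.coeff k * t ^ k := by
    funext t; exact eval_eq_sum_range' hlt t
  rw [this]
  exact integrable_finset_sum _ fun k hk =>
    ((h1 k (Nat.lt_succ_iff.1 (Finset.mem_range.1 hk))).const_mul _)

lemma integral_eq_LM {μ : Measure ℝ} {d : ℕ} (h1 : ∀ k ≤ 2 * d, Integrable (fun t => t ^ k) μ)
    {f : Polynomial ℝ} (hf : f.natDegree ≤ 2 * d) :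
    ∫ t, f.eval t ∂μ = LM μ d f := by
  have hlt : f.natDegree < 2 * d + 1 := Nat.lt_succ_of_le hf
  have h2 : ∫ t, f.eval t ∂μ =
      ∫ t, ∑ k ∈ Finset.range (2 * d + 1), f.coeff k * t ^ k ∂μ := by
    congr 1; funext t; exact eval_eq_sum_range' hlt t
  rw [h2, integral_finset_sum]
  · refine Finset.sum_congr rfl fun k hk => ?_
    rw [integral_const_mul]
    rfl
  · exact fun k hk => (h1 k (Nat.lt_succ_iff.1 (Finset.mem_range.1 hk))).const_mul _

lemma LM_pos {μ : Measure ℝ} {d : ℕ} (hnd : NonDeg μ d) {f : Polynomial ℝ} (hf0 : f ≠ 0)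
    (hfd : f.natDegree ≤ 2 * d) (hfpos : ∀ t, 0 ≤ f.eval t) : 0 < LM μ d f := by
  rw [← integral_eq_LM hnd.1 hfd]
  exact hnd.2 f hf0 hfd hfpos

lemma sign_const {u : Polynomial ℝ} (hu : u ≠ 0) (hroots : u.roots = 0) :
    (∀ t, 0 < u.eval t) ∨ (∀ t, u.eval t < 0) := by
  have hne : ∀ t, u.eval t ≠ 0 := by
    intro t ht
    have : t ∈ u.roots := by rw [mem_roots hu]; exact ht
    simp [hroots] at this
  by_contra h
  push_neg at h
  obtain ⟨⟨a, ha⟩, b, hb⟩ := h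
  have ha' : u.eval a < 0 := lt_of_le_of_ne ha (hne a)
  have hb' : 0 < u.eval b := lt_of_le_of_ne hb (Ne.symm (hne b))
  have hcont : Continuous fun t : ℝ => u.eval t := u.continuous
  have : (0:ℝ) ∈ Set.range fun t : ℝ => u.eval t :=
    intermediate_value_univ a b hcont ⟨le_of_lt ha', le_of_lt hb'⟩
  obtain ⟨c, hc⟩ := this
  exact hne c hc
lemma core {μ : Measure ℝ} {d : ℕ} (hd : 1 ≤ d) (hnd : NonDeg μ d) {g : Polynomial ℝ}
    (hg : g ≠ 0) (hdeg : g.natDegree ≤ d + 1)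
    (horth : ∀ r : Polynomial ℝ, r.natDegree ≤ d - 1 → LM μ d (g * r) = 0) :
    g.roots.Nodup ∧ Multiset.card g.roots = g.natDegree ∧ d ≤ Multiset.card g.roots := by
  classical
  obtain ⟨u, hgu, hcardu, huroots⟩ := g.exists_prod_multiset_X_sub_C_mul
  have hu0 : u ≠ 0 := by rintro rfl; rw [mul_zero] at hgu; exact hg hgu.symm
  set T0 : Finset ℝ := g.roots.toFinset with hT0
  set cnt : ℝ → ℕ := fun a => g.roots.count a with hcnt
  set S : Finset ℝ := T0.filter (fun a => Odd (cnt a)) with hS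
  have hSsub : S ⊆ T0 := Finset.filter_subset _ _
  have hcnt_pos : ∀ a ∈ T0, 1 ≤ cnt a := fun a ha =>
    Multiset.count_pos.2 (Multiset.mem_toFinset.1 ha)
  -- pointwise factorization of g
  have hgeval : ∀ t : ℝ, g.eval t = u.eval t * ∏ a ∈ T0, (t - a) ^ cnt a := by
    intro t
    conv_lhs => rw [← hgu]
    rw [eval_mul, mul_comm]
    congr 1
    rw [g.prod_multiset_root_eq_finset_root, eval_prod]
    refine Finset.prod_congr rfl fun a _ => ?_
    rw [eval_pow, eval_sub, eval_X, eval_C, ← count_roots]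
  -- Step A : d ≤ S.card
  have hScard : d ≤ S.card := by
    by_contra hlt
    push_neg at hlt
    have hSd : S.card ≤ d - 1 := by omega
    set r : Polynomial ℝ := ∏ a ∈ S, (X - C a) with hr
    have hr0 : r ≠ 0 := by
      rw [hr]; exact Finset.prod_ne_zero_iff.2 fun a _ => X_sub_C_ne_zero a
    have hrdeg : r.natDegree = S.card := by
      rw [hr, natDegree_prod _ _ fun a _ => X_sub_C_ne_zero a]
      simp [natDegree_X_sub_C]
    have hgr0 : g * r ≠ 0 := mul_ne_zero hg hr0
    have hgrdeg : (g * r).natDegree ≤ 2 * d := by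
      rw [natDegree_mul hg hr0, hrdeg]; omega
    -- pointwise value
    have hkey : ∀ t : ℝ, (g * r).eval t =
        u.eval t * ∏ a ∈ T0, (t - a) ^ (cnt a + if Odd (cnt a) then 1 else 0) := by
      intro t
      rw [eval_mul, hgeval t, mul_assoc]
      congr 1
      have hre : r.eval t = ∏ a ∈ T0, (t - a) ^ (if Odd (cnt a) then 1 else 0) := by
        rw [hr, eval_prod, hS, Finset.prod_filter]
        refine Finset.prod_congr rfl fun a _ => ?_
        by_cases h : Odd (cnt a) <;> simp [h]
      rw [hre, ← Finset.prod_mul_distrib]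
      refine Finset.prod_congr rfl fun a _ => (pow_add _ _ _).symm
    have hprod_nonneg : ∀ t : ℝ,
        0 ≤ ∏ a ∈ T0, (t - a) ^ (cnt a + if Odd (cnt a) then 1 else 0) := by
      intro t
      refine Finset.prod_nonneg fun a _ => Even.pow_nonneg ?_ _
      by_cases h : Odd (cnt a)
      · simp only [h, if_true]; exact Odd.add_one h
      · simp only [h, if_false, add_zero]; exact (Nat.even_or_odd _).resolve_right h
    have hLM0 : LM μ d (g * r) = 0 := horth r (by omega)
    rcases sign_const hu0 huroots with hpos | hneg
    · have : 0 < LM μ d (g * r) :=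
        LM_pos hnd hgr0 hgrdeg fun t => by
          rw [hkey t]; exact mul_nonneg (le_of_lt (hpos t)) (hprod_nonneg t)
      linarith
    · have hgr0' : g * (-r) ≠ 0 := mul_ne_zero hg (neg_ne_zero.2 hr0)
      have : 0 < LM μ d (g * (-r)) := by
        refine LM_pos hnd hgr0' ?_ fun t => ?_
        · rw [natDegree_mul hg (neg_ne_zero.2 hr0), natDegree_neg, hrdeg]; omega
        · have : (g * -r).eval t = -((g * r).eval t) := by
            rw [eval_mul, eval_neg, eval_mul]; ring
          rw [this, hkey t]
          have := mul_nonneg (le_of_lt (neg_pos.2 (hneg t))) (hprod_nonneg t)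
          linarith [this]
      have h0 : LM μ d (g * (-r)) = 0 := horth (-r) (by rw [natDegree_neg]; omega)
      linarith
  -- Step B : counting
  have hc_le : Multiset.card g.roots ≤ d + 1 := le_trans g.card_roots' hdeg
  have hsum : ∑ a ∈ T0, cnt a = Multiset.card g.roots := Multiset.toFinset_sum_count_eq _
  have hS_sum_le : ∑ a ∈ S, cnt a ≤ ∑ a ∈ T0, cnt a :=
    Finset.sum_le_sum_of_subset hSsub
  have hcard_le_sum : S.card ≤ ∑ a ∈ S, cnt a := by
    calc S.card = ∑ _a ∈ S, 1 := by simp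
    _ ≤ ∑ a ∈ S, cnt a := Finset.sum_le_sum fun a ha => hcnt_pos a (hSsub ha)
  -- all counts on S are 1
  have hcnt_one_S : ∀ a ∈ S, cnt a = 1 := by
    intro a₀ ha₀
    by_contra hne1
    have hodd : Odd (cnt a₀) := (Finset.mem_filter.1 ha₀).2
    have h3 : 3 ≤ cnt a₀ := by
      rcases hodd with ⟨m, hm⟩
      have : 1 ≤ cnt a₀ := hcnt_pos a₀ (hSsub ha₀)
      omega
    have hsplit : ∑ a ∈ S, cnt a = cnt a₀ + ∑ a ∈ S.erase a₀, cnt a := by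
      rw [← Finset.add_sum_erase _ _ ha₀]
    have herase : S.card - 1 ≤ ∑ a ∈ S.erase a₀, cnt a := by
      calc S.card - 1 = ∑ _a ∈ S.erase a₀, 1 := by
            rw [Finset.sum_const, smul_eq_mul, mul_one, Finset.card_erase_of_mem ha₀]
      _ ≤ _ := Finset.sum_le_sum fun a ha => hcnt_pos a (hSsub (Finset.erase_subset _ _ ha))
    omega
  -- every root is in S
  have hT0S : ∀ a ∈ T0, a ∈ S := by
    intro a₀ ha₀
    by_contra hnot
    have heven : ¬ Odd (cnt a₀) := fun h => hnot (Finset.mem_filter.2 ⟨ha₀, h⟩)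
    have h2 : 2 ≤ cnt a₀ := by
      have h1 := hcnt_pos a₀ ha₀
      rcases Nat.even_or_odd (cnt a₀) with he | ho
      · rcases he with ⟨m, hm⟩; omega
      · exact absurd ho heven
    have hins : insert a₀ S ⊆ T0 := by
      intro b hb; rcases Finset.mem_insert.1 hb with rfl | hb
      · exact ha₀
      · exact hSsub hb
    have : ∑ a ∈ insert a₀ S, cnt a ≤ ∑ a ∈ T0, cnt a := Finset.sum_le_sum_of_subset hins
    rw [Finset.sum_insert (fun h => hnot h)] at this
    omega
  have hSeqT0 : S = T0 := Finset.Subset.antisymm hSsub fun a ha => hT0S a ha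
  have hcnt_one : ∀ a ∈ T0, cnt a = 1 := fun a ha => hcnt_one_S a (hT0S a ha)
  have hnodup : g.roots.Nodup := by
    rw [Multiset.nodup_iff_count_le_one]
    intro a
    by_cases ha : a ∈ g.roots
    · exact le_of_eq (hcnt_one a (Multiset.mem_toFinset.2 ha))
    · rw [Multiset.count_eq_zero_of_notMem ha]; omega
  have hcS : Multiset.card g.roots = S.card := by
    rw [← hsum, hSeqT0]
    rw [Finset.sum_congr rfl hcnt_one]
    simp
  have hdc : d ≤ Multiset.card g.roots := by rw [hcS]; exact hScard
  -- Step C : u is constant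
  have hudeg : u.natDegree = 0 := by
    by_contra hne
    have h1 : u.natDegree = 1 := by omega
    have hc1 : u.coeff 1 ≠ 0 := by
      have := leadingCoeff_ne_zero.2 hu0
      rwa [leadingCoeff, h1] at this
    obtain hform := eq_X_add_C_of_natDegree_le_one (le_of_eq h1)
    have hroot : u.eval (-(u.coeff 0) / u.coeff 1) = 0 := by
      conv_lhs => rw [hform]
      rw [eval_add, eval_mul, eval_C, eval_X, eval_C]
      rw [← hform, mul_div_assoc', mul_div_cancel_left₀ _ hc1, neg_add_cancel]
    have hmem : (-(u.coeff 0) / u.coeff 1) ∈ u.roots := by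
      rw [mem_roots hu0]; exact hroot
    rw [huroots] at hmem
    simp at hmem
  refine ⟨hnodup, ?_, hdc⟩
  omega

lemma quad {μ : Measure ℝ} {d : ℕ} (hd : 1 ≤ d) (hnd : NonDeg μ d) {g : Polynomial ℝ}
    (hg : g ≠ 0) (hdeg : g.natDegree ≤ d + 1)
    (horth : ∀ r : Polynomial ℝ, r.natDegree ≤ d - 1 → LM μ d (g * r) = 0)
    (hnodup : g.roots.Nodup) (hcard : Multiset.card g.roots = g.natDegree)
    (hdle : d ≤ Multiset.card g.roots) :
    ∃ (r : Fin (d + 1) → Option ℝ) (w : Fin (d + 1) → ℝ),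
      (∀ i, 0 < w i) ∧ Function.Injective r ∧
      (∀ f : Polynomial ℝ, f.natDegree ≤ 2 * d →
        LM μ d f = ∑ i, w i * ev (2 * d) (r i) f) ∧
      (∀ a ∈ g.roots.toFinset, ∃ i, r i = some a) := by
  classical
  set k := g.natDegree with hk
  set T : Finset ℝ := g.roots.toFinset with hT
  have hTcard : T.card = k := by
    rw [hT, Multiset.toFinset_card_of_nodup hnodup, hcard]
  have hkd : d ≤ k := hcard ▸ hdle
  have hinj : Set.InjOn (id : ℝ → ℝ) T := fun a _ b _ h => h
  set nodal : Polynomial ℝ := ∏ a ∈ T, (X - C a) with hnodal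
  have hmonic : nodal.Monic := monic_prod_of_monic _ _ fun a _ => monic_X_sub_C a
  have hnodal_deg : nodal.natDegree = k := by
    rw [hnodal, natDegree_prod _ _ fun a _ => X_sub_C_ne_zero a]
    simp [natDegree_X_sub_C, hTcard]
  have hnodal_root : ∀ a ∈ T, nodal.eval a = 0 := by
    intro a ha
    rw [hnodal, eval_prod]
    exact Finset.prod_eq_zero ha (by simp)
  -- g = C c * nodal
  have hprod_eq : nodal = (Multiset.map (fun a => X - C a) g.roots).prod := by
    rw [hnodal, Finset.prod_eq_multiset_prod, hT, Multiset.toFinset_val,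
      Multiset.dedup_eq_self.2 hnodup]
  obtain ⟨c, hc0, hcg⟩ : ∃ c : ℝ, c ≠ 0 ∧ C c * nodal = g :=
    ⟨g.leadingCoeff, leadingCoeff_ne_zero.2 hg, by
      rw [hprod_eq]; exact g.C_leadingCoeff_mul_prod_multiset_X_sub_C hcard⟩
  have Horth : ∀ h : Polynomial ℝ, h.natDegree ≤ d - 1 → LM μ d (nodal * h) = 0 := by
    intro h hh
    have h1 : C c⁻¹ * C c = (1 : Polynomial ℝ) := by
      rw [← C_mul, inv_mul_cancel₀ hc0, C_1]
    have h2 : nodal * h = C c⁻¹ * (g * h) := by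
      rw [← hcg, show C c * nodal * h = C c * (nodal * h) from mul_assoc _ _ _,
        ← mul_assoc, h1, one_mul]
    rw [h2, LM_C_mul, horth h hh, mul_zero]
  -- weights at real nodes
  set B : ℝ → Polynomial ℝ := fun a => Lagrange.basis T id a with hB
  have hBdeg : ∀ a ∈ T, (B a).natDegree = k - 1 := by
    intro a ha
    rw [hB]; rw [Lagrange.natDegree_basis hinj ha, hTcard]
  have hB0 : ∀ a ∈ T, B a ≠ 0 := fun a ha => Lagrange.basis_ne_zero hinj ha
  have hBself : ∀ a ∈ T, (B a).eval a = 1 := fun a ha => Lagrange.eval_basis_self hinj ha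
  set wR : ℝ → ℝ := fun a => LM μ d (B a) with hwR
  have hwR_sq : ∀ a ∈ T, wR a = LM μ d (B a ^ 2) := by
    intro a ha
    have hdvd : nodal ∣ B a ^ 2 - B a := by
      rw [hnodal]
      refine Finset.prod_dvd_of_coprime ?_ ?_
      · intro s hs t ht hst
        exact isCoprime_X_sub_C_of_isUnit_sub (sub_ne_zero_of_ne hst).isUnit
      · intro b hb
        rw [dvd_iff_isRoot]
        have hroot : (B a ^ 2 - B a).eval b = 0 := by
          rw [eval_sub, eval_pow]
          by_cases hab : b = a
          · subst hab; rw [hBself b hb]; norm_num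
          · have h0 : (B a).eval b = 0 := by
              have := Lagrange.eval_basis_of_ne (s := T) (v := (id : ℝ → ℝ)) (show a ≠ b from fun h => hab h.symm) hb
              simpa using this
            rw [h0]; norm_num
        exact hroot
    obtain ⟨h₂, hh₂⟩ := hdvd
    have hLM0 : LM μ d (nodal * h₂) = 0 := by
      refine Horth h₂ ?_
      by_cases h20 : h₂ = 0
      · simp [h20]
      · have hD0 : B a ^ 2 - B a ≠ 0 := by
          rw [hh₂]; exact mul_ne_zero hmonic.ne_zero h20
        have hDdeg : (B a ^ 2 - B a).natDegree ≤ 2 * (k - 1) := by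
          refine le_trans (natDegree_sub_le _ _) ?_
          rw [natDegree_pow, hBdeg a ha]
          omega
        have : (nodal * h₂).natDegree = k + h₂.natDegree := by
          rw [natDegree_mul hmonic.ne_zero h20, hnodal_deg]
        rw [hh₂, this] at hDdeg
        omega
    have := LM_sub μ d (B a ^ 2) (B a)
    rw [← hh₂] at hLM0
    rw [hLM0] at this
    rw [hwR]
    linarith
  have hwRpos : ∀ a ∈ T, 0 < wR a := by
    intro a ha
    rw [hwR_sq a ha]
    refine LM_pos hnd (pow_ne_zero 2 (hB0 a ha)) ?_ fun t => ?_
    · rw [natDegree_pow, hBdeg a ha]; omega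
    · rw [eval_pow]; positivity
  -- infinity weight (used when k = d)
  set winf : ℝ := LM μ d (nodal * X ^ d) with hwinf
  have hwinfpos : k = d → 0 < winf := by
    intro hkeq
    have hsubdeg : (nodal - X ^ d).natDegree ≤ d - 1 := by
      rw [natDegree_le_iff_coeff_eq_zero]
      intro m hm
      have hmd : d ≤ m := by omega
      rw [coeff_sub, coeff_X_pow]
      rcases eq_or_lt_of_le hmd with heq | hlt
      · have h1 : nodal.coeff m = 1 := by
          rw [← heq]
          have h2 := hmonic
          rw [Monic, leadingCoeff, hnodal_deg, hkeq] at h2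
          exact h2
        subst heq; simp [h1]
      · have h1 : nodal.coeff m = 0 := coeff_eq_zero_of_natDegree_lt (by omega)
        simp [h1, show m ≠ d by omega]
    have h0 : LM μ d (nodal * (nodal - X ^ d)) = 0 := Horth _ hsubdeg
    have hexp : nodal * (nodal - X ^ d) = nodal * nodal - nodal * X ^ d := by ring
    rw [hexp, LM_sub] at h0
    have hpos : 0 < LM μ d (nodal * nodal) := by
      refine LM_pos hnd (mul_ne_zero hmonic.ne_zero hmonic.ne_zero) ?_ fun t => ?_
      · rw [natDegree_mul hmonic.ne_zero hmonic.ne_zero, hnodal_deg, hkeq]; omega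
      · rw [eval_mul]; exact mul_self_nonneg _
    rw [hwinf]; linarith
  -- Exactness
  have EXA : ∀ f : Polynomial ℝ, f.natDegree ≤ 2 * d →
      LM μ d f = (∑ a ∈ T, f.eval a * wR a) +
        (if k = d then f.coeff (2 * d) * winf else 0) := by
    intro f hf
    set h : Polynomial ℝ := f /ₘ nodal with hh
    set ρ : Polynomial ℝ := f %ₘ nodal with hρ
    have hfe : f = nodal * h + ρ := by
      rw [hh, hρ]
      conv_lhs => rw [← modByMonic_add_div f nodal]
      ring
    have hρdeg : ρ.degree < (k : WithBot ℕ) := by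
      have := degree_modByMonic_lt f hmonic
      rwa [degree_eq_natDegree hmonic.ne_zero, hnodal_deg] at this
    have hρeval : ∀ a ∈ T, ρ.eval a = f.eval a := by
      intro a ha
      rw [hfe, eval_add, eval_mul, hnodal_root a ha, zero_mul, zero_add]
    have hρLM : LM μ d ρ = ∑ a ∈ T, f.eval a * wR a := by
      have hint : ρ = Lagrange.interpolate T id fun i => ρ.eval (id i) :=
        Lagrange.eq_interpolate hinj (by rw [hTcard]; exact hρdeg)
      rw [hint, Lagrange.interpolate_apply, LM_sum]
      refine Finset.sum_congr rfl fun a ha => ?_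
      rw [LM_C_mul, id, hρeval a ha, hwR]
    have hhdeg : h.natDegree ≤ 2 * d - k := by
      rw [hh, natDegree_divByMonic f hmonic, hnodal_deg]
      omega
    have hρ2d : ρ.coeff (2 * d) = 0 := by
      refine coeff_eq_zero_of_degree_lt (lt_of_lt_of_le hρdeg ?_)
      exact_mod_cast Nat.cast_le.2 (by omega : k ≤ 2 * d)
    rcases eq_or_lt_of_le hkd with hkeq | hklt
    · -- k = d : infinity node active
      have hkd' : k = d := hkeq.symm
      rw [if_pos hkd']
      set h' : Polynomial ℝ := h - C (h.coeff d) * X ^ d with hh'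
      have hh'deg : h'.natDegree ≤ d - 1 := by
        rw [natDegree_le_iff_coeff_eq_zero]
        intro m hm
        have hmd : d ≤ m := by omega
        rw [hh', coeff_sub, coeff_C_mul, coeff_X_pow]
        rcases eq_or_lt_of_le hmd with heq | hlt
        · simp [← heq]
        · have h1 : h.coeff m = 0 :=
            coeff_eq_zero_of_natDegree_lt (by omega)
          simp [h1, show m ≠ d by omega]
      have hsplit : nodal * h = nodal * h' + C (h.coeff d) * (nodal * X ^ d) := by
        rw [hh']; ring
      have hLMnh : LM μ d (nodal * h) = h.coeff d * winf := by
        rw [hsplit, LM_add, Horth h' hh'deg, LM_C_mul, zero_add, hwinf]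
      have hcoeff : f.coeff (2 * d) = h.coeff d := by
        rw [hfe, coeff_add, hρ2d, add_zero]
        rcases lt_or_eq_of_le (hhdeg.trans (by omega : 2 * d - k ≤ d)) with hlt | heq
        · have h1 : (nodal * h).natDegree < 2 * d := by
            by_cases h0 : h = 0
            · simp [h0]; omega
            · rw [natDegree_mul hmonic.ne_zero h0, hnodal_deg]; omega
          rw [coeff_eq_zero_of_natDegree_lt h1,
            coeff_eq_zero_of_natDegree_lt hlt]
        · have h2d : 2 * d = nodal.natDegree + h.natDegree := by
            rw [hnodal_deg, ← heq]; omega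
          rw [h2d, coeff_mul_degree_add_degree, hmonic.leadingCoeff, one_mul,
            leadingCoeff, ← heq]
      have hLMf : LM μ d f = LM μ d (nodal * h) + LM μ d ρ := by
        conv_lhs => rw [hfe]
        rw [LM_add]
      rw [hLMf, hρLM, hLMnh, hcoeff]
      ring
    · -- k = d + 1 : no infinity node
      have hkd1 : k = d + 1 := by omega
      rw [if_neg (by omega)]
      have hLMnh : LM μ d (nodal * h) = 0 := Horth h (by omega)
      have hLMf : LM μ d f = LM μ d (nodal * h) + LM μ d ρ := by
        conv_lhs => rw [hfe]
        rw [LM_add]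
      rw [hLMf, hρLM, hLMnh]
      ring
  rcases eq_or_lt_of_le hkd with hkeq | hklt
  · -- k = d : infinity node
    have hkd' : k = d := hkeq.symm
    have hTd : T.card = d := by rw [hTcard, hkd']
    set e := T.orderIsoOfFin hTd with he
    refine ⟨Fin.snoc (fun i => some ((e i : ℝ))) none,
      Fin.snoc (fun i => wR (e i)) winf, ?_, ?_, ?_, ?_⟩
    · intro i
      rcases Fin.eq_castSucc_or_eq_last i with ⟨j, rfl⟩ | rfl
      · rw [Fin.snoc_castSucc]
        exact hwRpos _ (e j).2
      · rw [Fin.snoc_last]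
        exact hwinfpos hkd'
    · intro i j hij
      rcases Fin.eq_castSucc_or_eq_last i with ⟨i', rfl⟩ | rfl <;>
        rcases Fin.eq_castSucc_or_eq_last j with ⟨j', rfl⟩ | rfl
      · rw [Fin.snoc_castSucc, Fin.snoc_castSucc] at hij
        have h1 : (e i' : ℝ) = (e j' : ℝ) := Option.some.inj hij
        have h2 : e i' = e j' := Subtype.ext h1
        rw [e.injective h2]
      · rw [Fin.snoc_castSucc, Fin.snoc_last] at hij; exact absurd hij (by simp)
      · rw [Fin.snoc_castSucc, Fin.snoc_last] at hij; exact absurd hij (by simp)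
      · rfl
    · intro f hf
      rw [EXA f hf, if_pos hkd', Fin.sum_univ_castSucc]
      simp only [Fin.snoc_castSucc, Fin.snoc_last, ev, Option.elim_none, Option.elim_some]
      have hsum : ∑ a ∈ T, f.eval a * wR a
          = ∑ i : Fin d, wR (e i : ℝ) * f.eval (e i : ℝ) := by
        rw [← Finset.sum_coe_sort T (fun a => f.eval a * wR a)]
        rw [← Equiv.sum_comp e.toEquiv (fun s : T => f.eval (s : ℝ) * wR (s : ℝ))]
        exact Finset.sum_congr rfl fun i _ => mul_comm _ _
      rw [hsum, mul_comm (f.coeff (2 * d)) winf]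
    · intro a ha
      refine ⟨(e.symm ⟨a, ha⟩).castSucc, ?_⟩
      rw [Fin.snoc_castSucc]
      simp
  · -- k = d + 1
    have hkd1 : k = d + 1 := by omega
    have hTd : T.card = d + 1 := by rw [hTcard, hkd1]
    set e := T.orderIsoOfFin hTd with he
    refine ⟨fun i => some ((e i : ℝ)), fun i => wR (e i), ?_, ?_, ?_, ?_⟩
    · intro i; exact hwRpos _ (e i).2
    · intro i j hij
      exact e.toEquiv.injective (Subtype.ext (Option.some.inj hij))
    · intro f hf
      rw [EXA f hf, if_neg (by omega), add_zero]
      simp only [ev, Option.elim_some]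
      have hsum : ∑ a ∈ T, f.eval a * wR a
          = ∑ i : Fin (d + 1), wR (e i : ℝ) * f.eval (e i : ℝ) := by
        rw [← Finset.sum_coe_sort T (fun a => f.eval a * wR a)]
        rw [← Equiv.sum_comp e.toEquiv (fun s : T => f.eval (s : ℝ) * wR (s : ℝ))]
        exact Finset.sum_congr rfl fun i _ => mul_comm _ _
      rw [hsum]
    · intro a ha
      exact ⟨e.symm ⟨a, ha⟩, by simp⟩

end Quad

open Quad in
/-- If μ is non-degenerate in degree d and det(xy M_{d-1} - (x+y)M'_{d-1} + M''_{d-1}) = 0,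
then there is a quadrature rule for μ of degree 2d with d+1 distinct nodes in ℝ ∪ {∞},
two of which are x and y. -/
theorem stmt4 (μ : Measure ℝ) (d : ℕ) (hd : 1 ≤ d) (hnd : NonDeg μ d) (x y : ℝ)
    (hdet : ((x * y) • hank μ d 0 - (x + y) • hank μ d 1 + hank μ d 2).det = 0) :
    ∃ (r : Fin (d + 1) → Option ℝ) (w : Fin (d + 1) → ℝ),
      (∀ i, 0 < w i) ∧ Function.Injective r ∧
      (∀ f : Polynomial ℝ, f.natDegree ≤ 2 * d →
        ∫ t, f.eval t ∂μ = ∑ i, w i * ev (2 * d) (r i) f) ∧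
      ∃ i j, i ≠ j ∧ r i = some x ∧ r j = some y := by
  classical
  set A : Matrix (Fin d) (Fin d) ℝ :=
    (x * y) • hank μ d 0 - (x + y) • hank μ d 1 + hank μ d 2 with hA
  obtain ⟨v, hv0, hvA⟩ : ∃ v ≠ 0, A.mulVec v = 0 :=
    Matrix.exists_mulVec_eq_zero_iff.2 hdet
  set p : Polynomial ℝ := ∑ j : Fin d, C (v j) * X ^ (j : ℕ) with hp
  have pcoeff : ∀ n : Fin d, p.coeff (n : ℕ) = v n := by
    intro n
    rw [hp, finset_sum_coeff]
    rw [Finset.sum_eq_single n]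
    · simp
    · intro b _ hb
      rw [coeff_C_mul, coeff_X_pow, if_neg (fun h => hb (Fin.ext h.symm)), mul_zero]
    · intro h; exact absurd (Finset.mem_univ n) h
  have hp0 : p ≠ 0 := by
    intro h
    apply hv0
    funext n
    have := pcoeff n
    rw [h, coeff_zero] at this
    exact this.symm
  have hpdeg : p.natDegree ≤ d - 1 := by
    rw [hp]
    refine natDegree_sum_le_of_forall_le _ _ fun j _ => ?_
    refine le_trans (natDegree_C_mul_le _ _) ?_
    rw [natDegree_X_pow]
    omega
  set q : Polynomial ℝ := (X - C x) * (X - C y) with hq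
  have hq0 : q ≠ 0 := mul_ne_zero (X_sub_C_ne_zero x) (X_sub_C_ne_zero y)
  have hqdeg : q.natDegree = 2 := by
    rw [hq, natDegree_mul (X_sub_C_ne_zero x) (X_sub_C_ne_zero y),
      natDegree_X_sub_C, natDegree_X_sub_C]
  set g : Polynomial ℝ := p * q with hg
  have hg0 : g ≠ 0 := mul_ne_zero hp0 hq0
  have hgdeg : g.natDegree ≤ d + 1 := by
    rw [hg, natDegree_mul hp0 hq0, hqdeg]; omega
  -- LM of q * X^m
  have LMq : ∀ m : ℕ, m + 2 ≤ 2 * d →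
      LM μ d (q * X ^ m) =
        x * y * mom μ m - (x + y) * mom μ (m + 1) + mom μ (m + 2) := by
    intro m hm
    have hqm : q * X ^ m =
        X ^ (m + 2) - C (x + y) * X ^ (m + 1) + C (x * y) * X ^ m := by
      rw [hq, C_add, C_mul]; ring
    rw [hqm, LM_add, LM_sub, LM_X_pow μ d hm, LM_C_mul_X_pow μ d _ (by omega),
      LM_C_mul_X_pow μ d _ (by omega)]
    ring
  -- LM of g * X^i vanishes
  have LMgX : ∀ i : Fin d, LM μ d (g * X ^ (i : ℕ)) = 0 := by
    intro i
    have hsplit : g * X ^ (i : ℕ) =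
        ∑ j : Fin d, C (v j) * (q * X ^ ((i : ℕ) + (j : ℕ))) := by
      rw [hg, hp, Finset.sum_mul, Finset.sum_mul]
      refine Finset.sum_congr rfl fun j _ => ?_
      rw [pow_add]
      ring
    rw [hsplit, LM_sum]
    have hterm : ∀ j : Fin d, LM μ d (C (v j) * (q * X ^ ((i : ℕ) + (j : ℕ))))
        = A i j * v j := by
      intro j
      rw [LM_C_mul, LMq _ (by omega)]
      have : A i j = x * y * mom μ ((i : ℕ) + (j : ℕ))
          - (x + y) * mom μ ((i : ℕ) + (j : ℕ) + 1) + mom μ ((i : ℕ) + (j : ℕ) + 2) := by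
        simp [hA, hank, Matrix.sub_apply, Matrix.add_apply, Matrix.smul_apply, smul_eq_mul]
      rw [this]
      ring
    rw [Finset.sum_congr rfl fun j _ => hterm j]
    have := congr_fun hvA i
    rw [Matrix.mulVec, dotProduct] at this
    simpa using this
  -- general orthogonality
  have horth : ∀ r : Polynomial ℝ, r.natDegree ≤ d - 1 → LM μ d (g * r) = 0 := by
    intro r hr
    have hrd : r.natDegree < d := by omega
    have hrsum : r = ∑ n ∈ Finset.range d, C (r.coeff n) * X ^ n := by
      conv_lhs => rw [r.as_sum_range' d hrd]
      exact Finset.sum_congr rfl fun n _ => (C_mul_X_pow_eq_monomial).symm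
    have hgr : g * r = ∑ n ∈ Finset.range d, C (r.coeff n) * (g * X ^ n) := by
      conv_lhs => rw [hrsum]
      rw [Finset.mul_sum]
      exact Finset.sum_congr rfl fun n _ => by ring
    rw [hgr, LM_sum]
    refine Finset.sum_eq_zero fun n hn => ?_
    have hnd' : n < d := Finset.mem_range.1 hn
    rw [LM_C_mul]
    have := LMgX ⟨n, hnd'⟩
    simp only [Fin.val_mk] at this
    rw [this, mul_zero]
  obtain ⟨hnodup, hcard, hdle⟩ := core hd hnd hg0 hgdeg horth
  obtain ⟨r, w, hwpos, hrinj, hex, hsurj⟩ := quad hd hnd hg0 hgdeg horth hnodup hcard hdle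
  have hxroot : x ∈ g.roots.toFinset := by
    rw [Multiset.mem_toFinset, mem_roots hg0]
    show g.eval x = 0
    rw [hg, hq, eval_mul, eval_mul, eval_sub, eval_X, eval_C]
    simp
  have hyroot : y ∈ g.roots.toFinset := by
    rw [Multiset.mem_toFinset, mem_roots hg0]
    show g.eval y = 0
    rw [hg, hq, eval_mul, eval_mul, eval_sub, eval_sub, eval_X, eval_C, eval_C]
    simp
  have hxy : x ≠ y := by
    rintro rfl
    have hdvd : (X - C x) ^ 2 ∣ g := ⟨p, by rw [hg, hq]; ring⟩
    have h2 : 2 ≤ rootMultiplicity x g := (le_rootMultiplicity_iff hg0).2 hdvd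
    have hcount : g.roots.count x = rootMultiplicity x g := count_roots g
    have h1 : g.roots.count x ≤ 1 := Multiset.nodup_iff_count_le_one.1 hnodup x
    omega
  obtain ⟨i, hi⟩ := hsurj x hxroot
  obtain ⟨j, hj⟩ := hsurj y hyroot
  refine ⟨r, w, hwpos, hrinj, ?_, i, j, ?_, hi, hj⟩
  · intro f hf
    rw [integral_eq_LM hnd.1 hf]
    exact hex f hf
  · rintro rfl
    rw [hi] at hj
    exact hxy (Option.some.inj hj)
end

section
/- Let μ be non-degenerate in degree d ≥ 1. For every x ∈ ℝ, the d×d matrix M(x,x) = x² M_{d−1} − 2x M'_{d−1} + M''_{d−1} is positive definite. -/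
open MeasureTheory Polynomial

/-- If μ is non-degenerate in degree d ≥ 1, then for every x ∈ ℝ the matrix
M(x,x) = x² M_{d-1} - 2x M'_{d-1} + M''_{d-1} is positive definite. -/
theorem stmt5 (μ : Measure ℝ) (d : ℕ) (hd : 1 ≤ d) (hnd : NonDeg μ d) (x : ℝ) :
    ((x ^ 2) • hank μ d 0 - (2 * x) • hank μ d 1 + hank μ d 2).PosDef := by
  obtain ⟨hint, hpos⟩ := hnd
  set M := ((x ^ 2) • hank μ d 0 - (2 * x) • hank μ d 1 + hank μ d 2) with hM
  -- integrability helper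
  have hintk : ∀ n : ℕ, n + 2 ≤ 2 * d → Integrable (fun t => t ^ n * (t - x) ^ 2) μ := by
    intro n hn
    have h0 : Integrable (fun t : ℝ => t ^ n) μ := hint n (by omega)
    have h1 : Integrable (fun t : ℝ => t ^ (n + 1)) μ := hint (n + 1) (by omega)
    have h2 : Integrable (fun t : ℝ => t ^ (n + 2)) μ := hint (n + 2) (by omega)
    have : (fun t : ℝ => t ^ n * (t - x) ^ 2)
        = fun t => (t ^ (n + 2) - (2 * x) * t ^ (n + 1)) + x ^ 2 * t ^ n := by
      funext t; ring
    rw [this]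
    exact (h2.sub (h1.const_mul _)).add (h0.const_mul _)
  have hintegral : ∀ n : ℕ, n + 2 ≤ 2 * d →
      (∫ t, t ^ n * (t - x) ^ 2 ∂μ)
        = x ^ 2 * mom μ n - 2 * x * mom μ (n + 1) + mom μ (n + 2) := by
    intro n hn
    have h0 : Integrable (fun t : ℝ => t ^ n) μ := hint n (by omega)
    have h1 : Integrable (fun t : ℝ => t ^ (n + 1)) μ := hint (n + 1) (by omega)
    have h2 : Integrable (fun t : ℝ => t ^ (n + 2)) μ := hint (n + 2) (by omega)
    have he : (fun t : ℝ => t ^ n * (t - x) ^ 2)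
        = fun t => (t ^ (n + 2) - (2 * x) * t ^ (n + 1)) + x ^ 2 * t ^ n := by
      funext t; ring
    have h1' : Integrable (fun t : ℝ => 2 * x * t ^ (n + 1)) μ := h1.const_mul _
    have h0' : Integrable (fun t : ℝ => x ^ 2 * t ^ n) μ := h0.const_mul _
    have hsub : Integrable (fun t : ℝ => t ^ (n + 2) - 2 * x * t ^ (n + 1)) μ := h2.sub h1'
    rw [he, integral_add hsub h0', integral_sub h2 h1', integral_const_mul _ _,
      integral_const_mul _ _]
    simp only [mom]; ring
  have hM2 : ∀ i j : Fin d, M i j = ∫ t, t ^ ((i : ℕ) + (j : ℕ)) * (t - x) ^ 2 ∂μ := by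
    intro i j
    have hij : (i : ℕ) + (j : ℕ) + 2 ≤ 2 * d := by omega
    rw [hintegral _ hij]
    simp [hM, hank, Matrix.add_apply, Matrix.sub_apply, Matrix.smul_apply, mom]
    try ring
  rw [Matrix.posDef_iff_dotProduct_mulVec]
  constructor
  · -- Hermitian
    ext i j
    simp only [Matrix.conjTranspose_apply, RCLike.star_def, starRingEnd_apply, star_trivial]
    rw [hM2 i j, hM2 j i, Nat.add_comm (j : ℕ) (i : ℕ)]
  · intro v hv
    -- polynomial
    set P : Polynomial ℝ := ∑ i : Fin d, C (v i) * X ^ (i : ℕ) with hP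
    have hPeval : ∀ t : ℝ, P.eval t = ∑ i : Fin d, v i * t ^ (i : ℕ) := by
      intro t; simp [hP, eval_finset_sum]
    have hPcoeff : ∀ i : Fin d, P.coeff (i : ℕ) = v i := by
      intro i
      rw [hP, finset_sum_coeff]
      simp only [coeff_C_mul, coeff_X_pow]
      rw [Finset.sum_eq_single i]
      · simp
      · intro b _ hb
        simp only [Fin.val_eq_val]
        rw [if_neg (by exact fun h => hb (Fin.val_injective (by simp [h])))]
        ring
      · simp
    have hPne : P ≠ 0 := by
      obtain ⟨i, hi⟩ := Function.ne_iff.mp hv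
      simp only [Pi.zero_apply] at hi
      intro h
      exact hi (by rw [← hPcoeff i, h, coeff_zero])
    set f : Polynomial ℝ := (P * (X - C x)) ^ 2 with hf
    have hfne : f ≠ 0 := pow_ne_zero _ (mul_ne_zero hPne (X_sub_C_ne_zero x))
    have hPdeg : P.natDegree ≤ d - 1 := by
      apply natDegree_sum_le_of_forall_le
      intro i _
      exact le_trans (natDegree_C_mul_X_pow_le _ _) (by omega)
    have hfdeg : f.natDegree ≤ 2 * d := by
      have h1 : (P * (X - C x)).natDegree ≤ d := by
        refine le_trans (natDegree_mul_le) ?_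
        rw [natDegree_X_sub_C]
        omega
      calc f.natDegree ≤ 2 * (P * (X - C x)).natDegree := natDegree_pow_le
        _ ≤ 2 * d := by omega
    have hfnn : ∀ y : ℝ, 0 ≤ f.eval y := by
      intro y; rw [hf, eval_pow]; positivity
    have key := hpos f hfne hfdeg hfnn
    -- now identify the quadratic form with the integral
    have hform : dotProduct (star v) (M.mulVec v) = ∫ t, f.eval t ∂μ := by
      have : dotProduct (star v) (M.mulVec v)
          = ∑ i : Fin d, ∑ j : Fin d,
              ∫ t, (v i * v j) * (t ^ ((i : ℕ) + (j : ℕ)) * (t - x) ^ 2) ∂μ := by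
        simp only [dotProduct, Matrix.mulVec, star_trivial, Pi.star_apply]
        refine Finset.sum_congr rfl fun i _ => ?_
        rw [Finset.mul_sum]
        refine Finset.sum_congr rfl fun j _ => ?_
        rw [hM2 i j, integral_const_mul _ _]
        ring
      rw [this]
      have hswap : ∀ i : Fin d, ∑ j : Fin d,
          ∫ t, (v i * v j) * (t ^ ((i : ℕ) + (j : ℕ)) * (t - x) ^ 2) ∂μ
          = ∫ t, ∑ j : Fin d, (v i * v j) * (t ^ ((i : ℕ) + (j : ℕ)) * (t - x) ^ 2) ∂μ := by
        intro i
        rw [integral_finset_sum]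
        intro j _
        exact (hintk _ (by omega)).const_mul _
      rw [Finset.sum_congr rfl fun i _ => hswap i, ← integral_finset_sum]
      · congr 1; funext t
        have : ∑ i : Fin d, ∑ j : Fin d,
            (v i * v j) * (t ^ ((i : ℕ) + (j : ℕ)) * (t - x) ^ 2)
            = (∑ i : Fin d, v i * t ^ (i : ℕ)) * (∑ j : Fin d, v j * t ^ (j : ℕ))
              * (t - x) ^ 2 := by
          rw [Finset.sum_mul_sum, Finset.sum_mul]
          apply Finset.sum_congr rfl
          intro i _
          rw [Finset.sum_mul]
          apply Finset.sum_congr rfl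
          intro j _
          rw [pow_add]; ring
        rw [this, hf, eval_pow, eval_mul, eval_sub, eval_X, eval_C, hPeval]
        ring
      · intro i _
        exact integrable_finset_sum _ fun j _ => (hintk _ (by omega)).const_mul _
    rw [hform]
    exact key
end

section
/- Let μ be non-degenerate in degree d ≥ 1 and fix y ∈ ℝ. Then all roots of the degree-≤d polynomial F(x, y) = det(x y M_{d−1} − (x+y) M'_{d−1} + M''_{d−1}) ∈ ℝ[x] are real. -/
open MeasureTheory Polynomial
open scoped Matrix

section aux

/-- Integrability and value of ∫ (y-t)^2 t^k. -/
lemma mom_combo {μ : Measure ℝ} {d : ℕ} (hnd : NonDeg μ d) (y : ℝ) {k : ℕ}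
    (hk : k + 2 ≤ 2 * d) :
    Integrable (fun t => (y - t) ^ 2 * t ^ k) μ ∧
      ∫ t, (y - t) ^ 2 * t ^ k ∂μ
        = y ^ 2 * mom μ k - 2 * y * mom μ (k + 1) + mom μ (k + 2) := by
  have h0 : Integrable (fun t : ℝ => t ^ k) μ := hnd.1 k (by omega)
  have h1 : Integrable (fun t : ℝ => t ^ (k + 1)) μ := hnd.1 (k + 1) (by omega)
  have h2 : Integrable (fun t : ℝ => t ^ (k + 2)) μ := hnd.1 (k + 2) (by omega)
  have e : (fun t : ℝ => (y - t) ^ 2 * t ^ k)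
      = fun t => (y ^ 2 * t ^ k - 2 * y * t ^ (k + 1)) + t ^ (k + 2) := by
    funext t; ring
  have hi01 : Integrable (fun t : ℝ => y ^ 2 * t ^ k - 2 * y * t ^ (k + 1)) μ :=
    (h0.const_mul _).sub (h1.const_mul _)
  constructor
  · rw [e]; exact hi01.add h2
  · rw [e, integral_add hi01 h2, integral_sub (h0.const_mul _) (h1.const_mul _),
      integral_const_mul, integral_const_mul]
    rfl

/-- Positive definiteness of y²M - 2yM' + M''. -/
lemma posdef_aux {μ : Measure ℝ} {d : ℕ} (hd : 1 ≤ d) (hnd : NonDeg μ d) (y : ℝ)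
    (c : Fin d → ℝ) (hc : c ≠ 0) :
    0 < c ⬝ᵥ ((Matrix.of fun i j : Fin d =>
      y ^ 2 * mom μ ((i : ℕ) + (j : ℕ)) - 2 * y * mom μ ((i : ℕ) + (j : ℕ) + 1)
        + mom μ ((i : ℕ) + (j : ℕ) + 2)) *ᵥ c) := by
  set p : ℝ[X] := ∑ i : Fin d, C (c i) * X ^ (i : ℕ) with hp
  have hpc : ∀ i : Fin d, p.coeff (i : ℕ) = c i := by
    intro i
    rw [hp, finset_sum_coeff]
    rw [Finset.sum_eq_single i]
    · simp
    · intro j _ hji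
      simp only [coeff_C_mul, coeff_X_pow]
      rw [if_neg (by simpa [Fin.val_inj] using (Ne.symm hji)), mul_zero]
    · simp
  have hp0 : p ≠ 0 := by
    obtain ⟨i, hi⟩ := Function.ne_iff.mp hc
    simp only [Pi.zero_apply] at hi
    intro h
    exact hi (by rw [← hpc i, h, coeff_zero])
  have hpdeg : p.natDegree ≤ d - 1 := by
    refine natDegree_sum_le_of_forall_le _ _ fun i _ => ?_
    exact (natDegree_C_mul_X_pow_le _ _).trans (by omega)
  set f : ℝ[X] := ((C y - X) * p) ^ 2 with hf
  have hf0 : f ≠ 0 := by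
    apply pow_ne_zero
    apply mul_ne_zero _ hp0
    intro h
    have := congrArg (fun q : ℝ[X] => q.coeff 1) h
    simp at this
  have hfdeg : f.natDegree ≤ 2 * d := by
    rw [hf, natDegree_pow]
    have h1 : (C y - X : ℝ[X]).natDegree ≤ 1 :=
      (natDegree_sub_le _ _).trans (by simp)
    have := natDegree_mul_le (p := (C y - X : ℝ[X])) (q := p)
    omega
  have hfnn : ∀ x, 0 ≤ f.eval x := by
    intro x; rw [hf]; simp only [eval_pow]; exact sq_nonneg _
  have hint : ∀ i j : Fin d,
      Integrable (fun t => (c i * c j) * ((y - t) ^ 2 * t ^ ((i : ℕ) + (j : ℕ)))) μ := by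
    intro i j
    exact ((mom_combo hnd y (by omega)).1).const_mul _
  have key : c ⬝ᵥ ((Matrix.of fun i j : Fin d =>
      y ^ 2 * mom μ ((i : ℕ) + (j : ℕ)) - 2 * y * mom μ ((i : ℕ) + (j : ℕ) + 1)
        + mom μ ((i : ℕ) + (j : ℕ) + 2)) *ᵥ c) = ∫ t, f.eval t ∂μ := by
    have step1 : c ⬝ᵥ ((Matrix.of fun i j : Fin d =>
        y ^ 2 * mom μ ((i : ℕ) + (j : ℕ)) - 2 * y * mom μ ((i : ℕ) + (j : ℕ) + 1)
          + mom μ ((i : ℕ) + (j : ℕ) + 2)) *ᵥ c)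
        = ∑ i : Fin d, ∑ j : Fin d,
            ∫ t, (c i * c j) * ((y - t) ^ 2 * t ^ ((i : ℕ) + (j : ℕ))) ∂μ := by
      simp only [dotProduct, Matrix.mulVec, Matrix.of_apply, Finset.mul_sum]
      refine Finset.sum_congr rfl fun i _ => Finset.sum_congr rfl fun j _ => ?_
      rw [integral_const_mul, (mom_combo hnd y (show (i:ℕ)+(j:ℕ)+2 ≤ 2*d by omega)).2]
      ring
    rw [step1]
    have step2 : ∀ i : Fin d,
        (∑ j : Fin d, ∫ t, (c i * c j) * ((y - t) ^ 2 * t ^ ((i : ℕ) + (j : ℕ))) ∂μ)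
        = ∫ t, ∑ j : Fin d, (c i * c j) * ((y - t) ^ 2 * t ^ ((i : ℕ) + (j : ℕ))) ∂μ :=
      fun i => (integral_finset_sum _ fun j _ => hint i j).symm
    simp only [step2]
    rw [← integral_finset_sum _ fun i _ => integrable_finset_sum _ fun j _ => hint i j]
    refine integral_congr_ae (Filter.Eventually.of_forall fun t => ?_)
    show (∑ i : Fin d, ∑ j : Fin d, (c i * c j) * ((y - t) ^ 2 * t ^ ((i:ℕ)+(j:ℕ)))) = f.eval t
    have hev : f.eval t = ((y - t) * ∑ i : Fin d, c i * t ^ (i : ℕ)) ^ 2 := by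
      rw [hf]
      simp [hp, eval_finset_sum]
    rw [hev, mul_pow, sq (∑ i : Fin d, c i * t ^ (i : ℕ)), Finset.sum_mul_sum,
      Finset.mul_sum]
    refine Finset.sum_congr rfl fun i _ => ?_
    rw [Finset.mul_sum]
    refine Finset.sum_congr rfl fun j _ => ?_
    rw [pow_add]
    ring
  rw [key]
  exact hnd.2 f hf0 hfdeg hfnn

/-- Real part of the complex quadratic form of a real matrix. -/
lemma re_form {d : ℕ} (Q : Matrix (Fin d) (Fin d) ℝ) (v : Fin d → ℂ) :
    (star v ⬝ᵥ ((Q.map (fun x : ℝ => (x : ℂ))) *ᵥ v)).re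
      = (fun i => (v i).re) ⬝ᵥ (Q *ᵥ fun i => (v i).re)
        + (fun i => (v i).im) ⬝ᵥ (Q *ᵥ fun i => (v i).im) := by
  simp only [dotProduct, Matrix.mulVec, Matrix.map_apply, Pi.star_apply,
    Finset.mul_sum, Complex.re_sum, ← Finset.sum_add_distrib]
  refine Finset.sum_congr rfl fun i _ => Finset.sum_congr rfl fun j _ => ?_
  simp only [Complex.star_def, Complex.mul_re, Complex.mul_im, Complex.conj_re,
    Complex.conj_im, Complex.ofReal_re, Complex.ofReal_im]
  ring

/-- Imaginary part of the complex quadratic form of a real symmetric matrix vanishes. -/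
lemma im_form {d : ℕ} (Q : Matrix (Fin d) (Fin d) ℝ) (hQ : ∀ i j, Q i j = Q j i)
    (v : Fin d → ℂ) :
    (star v ⬝ᵥ ((Q.map (fun x : ℝ => (x : ℂ))) *ᵥ v)).im = 0 := by
  set M := Q.map (fun x : ℝ => (x : ℂ)) with hM
  have hH : Mᴴ = M := by
    ext i j
    simp only [hM, Matrix.conjTranspose_apply, Matrix.map_apply, Complex.star_def,
      Complex.conj_ofReal]
    rw [hQ j i]
  have hst : star (star v ⬝ᵥ M *ᵥ v) = star v ⬝ᵥ M *ᵥ v := by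
    calc star (star v ⬝ᵥ M *ᵥ v)
        = star (M *ᵥ v) ⬝ᵥ star (star v) := (Matrix.star_dotProduct_star _ _).symm
      _ = (star v ᵥ* Mᴴ) ⬝ᵥ v := by rw [star_star, Matrix.star_mulVec]
      _ = star v ⬝ᵥ M *ᵥ v := by rw [hH, ← Matrix.dotProduct_mulVec]
  have := congrArg Complex.im hst
  simp only [Complex.star_def, Complex.conj_im] at this
  linarith

end aux

/-- For μ non-degenerate in degree d ≥ 1 and fixed y ∈ ℝ, all (complex) roots of the
polynomial F(x,y) = det(x(y M_{d-1} - M'_{d-1}) - (y M'_{d-1} - M''_{d-1})) ∈ ℝ[x] are real. -/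
theorem stmt6 (μ : Measure ℝ) (d : ℕ) (hd : 1 ≤ d) (hnd : NonDeg μ d) (y : ℝ) :
    ∀ z : ℂ, Polynomial.aeval z
      (Matrix.det (Matrix.of fun i j : Fin d =>
        Polynomial.C (y * mom μ ((i : ℕ) + (j : ℕ)) - mom μ ((i : ℕ) + (j : ℕ) + 1)) * Polynomial.X
        - Polynomial.C (y * mom μ ((i : ℕ) + (j : ℕ) + 1) - mom μ ((i : ℕ) + (j : ℕ) + 2)))) = 0 →
      z.im = 0 := by
  intro z hz
  by_contra him
  set A : Matrix (Fin d) (Fin d) ℝ :=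
    Matrix.of (fun i j : Fin d => y * mom μ ((i : ℕ) + (j : ℕ)) - mom μ ((i : ℕ) + (j : ℕ) + 1))
    with hA
  set B : Matrix (Fin d) (Fin d) ℝ :=
    Matrix.of (fun i j : Fin d =>
      y * mom μ ((i : ℕ) + (j : ℕ) + 1) - mom μ ((i : ℕ) + (j : ℕ) + 2)) with hB
  set A' : Matrix (Fin d) (Fin d) ℂ := A.map (fun x : ℝ => (x : ℂ)) with hA'
  set B' : Matrix (Fin d) (Fin d) ℂ := B.map (fun x : ℝ => (x : ℂ)) with hB'
  -- the evaluated matrix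
  have hdet : (z • A' - B').det = 0 := by
    have h1 : (Matrix.of fun i j : Fin d =>
        Polynomial.C (y * mom μ ((i : ℕ) + (j : ℕ)) - mom μ ((i : ℕ) + (j : ℕ) + 1)) *
          Polynomial.X -
        Polynomial.C (y * mom μ ((i : ℕ) + (j : ℕ) + 1) - mom μ ((i : ℕ) + (j : ℕ) + 2))).map
          (aeval z : ℝ[X] →ₐ[ℝ] ℂ).toRingHom = z • A' - B' := by
      ext i j
      simp [hA, hB, hA', hB', Matrix.map_apply, Matrix.sub_apply, Matrix.smul_apply,
        Complex.real_smul]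
      ring
    have h2 := (aeval z : ℝ[X] →ₐ[ℝ] ℂ).toRingHom.map_det (Matrix.of fun i j : Fin d =>
        Polynomial.C (y * mom μ ((i : ℕ) + (j : ℕ)) - mom μ ((i : ℕ) + (j : ℕ) + 1)) *
          Polynomial.X -
        Polynomial.C (y * mom μ ((i : ℕ) + (j : ℕ) + 1) - mom μ ((i : ℕ) + (j : ℕ) + 2)))
    rw [show ((aeval z : ℝ[X] →ₐ[ℝ] ℂ).toRingHom.mapMatrix (Matrix.of fun i j : Fin d =>
        Polynomial.C (y * mom μ ((i : ℕ) + (j : ℕ)) - mom μ ((i : ℕ) + (j : ℕ) + 1)) *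
          Polynomial.X -
        Polynomial.C (y * mom μ ((i : ℕ) + (j : ℕ) + 1) - mom μ ((i : ℕ) + (j : ℕ) + 2))))
        = (Matrix.of fun i j : Fin d =>
        Polynomial.C (y * mom μ ((i : ℕ) + (j : ℕ)) - mom μ ((i : ℕ) + (j : ℕ) + 1)) *
          Polynomial.X -
        Polynomial.C (y * mom μ ((i : ℕ) + (j : ℕ) + 1) - mom μ ((i : ℕ) + (j : ℕ) + 2))).map
          (aeval z : ℝ[X] →ₐ[ℝ] ℂ).toRingHom from rfl, h1] at h2
    rw [← h2]
    exact hz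
  obtain ⟨v, hv0, hvN⟩ := Matrix.exists_mulVec_eq_zero_iff.mpr hdet
  set α : ℂ := star v ⬝ᵥ (A' *ᵥ v) with hα
  set β : ℂ := star v ⬝ᵥ (B' *ᵥ v) with hβ
  have hzαβ : z * α - β = 0 := by
    have h0 : star v ⬝ᵥ ((z • A' - B') *ᵥ v) = 0 := by rw [hvN, dotProduct_zero]
    rw [Matrix.sub_mulVec, Matrix.smul_mulVec, dotProduct_sub,
      dotProduct_smul, smul_eq_mul] at h0
    exact h0
  have hAsym : ∀ i j, A i j = A j i := by
    intro i j; simp [hA, Nat.add_comm (i : ℕ) (j : ℕ)]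
  have hBsym : ∀ i j, B i j = B j i := by
    intro i j; simp [hB, Nat.add_comm (i : ℕ) (j : ℕ)]
  have hαim : α.im = 0 := im_form A hAsym v
  have hβim : β.im = 0 := im_form B hBsym v
  have hαre : α.re = 0 := by
    have h := congrArg Complex.im hzαβ
    simp only [Complex.sub_im, Complex.mul_im, hαim, hβim, mul_zero, add_zero, zero_add,
      Complex.zero_im, sub_zero] at h
    exact (mul_eq_zero.mp h).resolve_left him
  have hα0 : α = 0 := Complex.ext hαre hαim
  have hβ0 : β = 0 := by
    have := hzαβ
    rw [hα0, mul_zero, zero_sub, neg_eq_zero] at this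
    exact this
  -- the positive definite combination
  set Qm : Matrix (Fin d) (Fin d) ℝ := Matrix.of fun i j : Fin d =>
    y ^ 2 * mom μ ((i : ℕ) + (j : ℕ)) - 2 * y * mom μ ((i : ℕ) + (j : ℕ) + 1)
      + mom μ ((i : ℕ) + (j : ℕ) + 2) with hQm
  have hcomb : Qm.map (fun x : ℝ => (x : ℂ)) = (y : ℂ) • A' - B' := by
    ext i j
    simp only [hQm, hA', hB', hA, hB, Matrix.map_apply, Matrix.sub_apply, Matrix.smul_apply,
      Matrix.of_apply, smul_eq_mul, Complex.ofReal_add, Complex.ofReal_sub,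
      Complex.ofReal_mul, Complex.ofReal_pow, Complex.ofReal_ofNat]
    ring
  have hform : star v ⬝ᵥ ((Qm.map (fun x : ℝ => (x : ℂ))) *ᵥ v) = 0 := by
    rw [hcomb, Matrix.sub_mulVec, Matrix.smul_mulVec, dotProduct_sub,
      dotProduct_smul, smul_eq_mul, ← hα, ← hβ, hα0, hβ0, mul_zero, sub_zero]
  have hre := re_form Qm v
  rw [hform] at hre
  simp only [Complex.zero_re] at hre
  -- positivity
  have hnn : ∀ c : Fin d → ℝ, 0 ≤ c ⬝ᵥ (Qm *ᵥ c) := by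
    intro c
    by_cases hc : c = 0
    · simp [hc]
    · exact (posdef_aux hd hnd y c hc).le
  have hab : (fun i => (v i).re) ≠ 0 ∨ (fun i => (v i).im) ≠ 0 := by
    by_contra h
    push_neg at h
    apply hv0
    funext i
    exact Complex.ext (congrFun h.1 i) (congrFun h.2 i)
  have hpos : 0 < (fun i => (v i).re) ⬝ᵥ (Qm *ᵥ fun i => (v i).re)
      + (fun i => (v i).im) ⬝ᵥ (Qm *ᵥ fun i => (v i).im) := by
    rcases hab with h | h
    · exact add_pos_of_pos_of_nonneg (posdef_aux hd hnd y _ h) (hnn _)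
    · exact add_pos_of_nonneg_of_pos (hnn _) (posdef_aux hd hnd y _ h)
  rw [← hre] at hpos
  exact lt_irrefl _ hpos
end

section
/- Let A, B be real symmetric n×n matrices such that the pencil {xA + B : x ∈ ℝ} contains a positive definite matrix. Then the polynomial det(xA + B) ∈ ℝ[x] has only real roots. -/
open MeasureTheory Polynomial

open Matrix

lemma herm_self_real {n : ℕ} (M : Matrix (Fin n) (Fin n) ℂ) (hM : M.IsHermitian)
    (v : Fin n → ℂ) : star (star v ⬝ᵥ M *ᵥ v) = star v ⬝ᵥ M *ᵥ v := by
  conv_lhs => rw [star_dotProduct, star_star]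
  rw [star_mulVec, hM.eq, ← dotProduct_mulVec]

lemma re_quad {n : ℕ} (M : Matrix (Fin n) (Fin n) ℝ) (v : Fin n → ℂ) :
    (star v ⬝ᵥ (M.map Complex.ofReal) *ᵥ v).re =
      (fun i => (v i).re) ⬝ᵥ M *ᵥ (fun i => (v i).re)
      + (fun i => (v i).im) ⬝ᵥ M *ᵥ (fun i => (v i).im) := by
  simp only [dotProduct, Matrix.mulVec, Matrix.map_apply, Pi.star_apply,
    Finset.mul_sum, Complex.re_sum, ← Finset.sum_add_distrib]
  refine Finset.sum_congr rfl fun i _ => Finset.sum_congr rfl fun j _ => ?_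
  simp [Complex.mul_re, Complex.mul_im]

lemma symm_herm {n : ℕ} (A : Matrix (Fin n) (Fin n) ℝ) (hA : A.IsSymm) :
    (A.map Complex.ofReal).IsHermitian := by
  have h1 : A.IsHermitian := by ext i j; simp [Matrix.conjTranspose_apply, hA.apply]
  exact h1.map Complex.ofReal (fun r => by simp [Complex.conj_ofReal])

/-- If A, B are real symmetric n×n matrices and the pencil {xA + B} contains a positive
definite matrix, then det(xA + B) has only real roots. -/
theorem stmt7 (n : ℕ) (A B : Matrix (Fin n) (Fin n) ℝ) (hA : A.IsSymm) (hB : B.IsSymm)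
    (x₀ : ℝ) (hpd : (x₀ • A + B).PosDef) :
    ∀ z : ℂ, Polynomial.aeval z
      (Matrix.det (Matrix.of fun i j : Fin n =>
        Polynomial.C (A i j) * Polynomial.X + Polynomial.C (B i j))) = 0 →
      z.im = 0 := by
  intro z hz
  by_contra him
  set A' := A.map Complex.ofReal with hA'
  set B' := B.map Complex.ofReal with hB'
  -- det of the complex matrix vanishes
  have hdet : (z • A' + B').det = 0 := by
    have h0 := (RingHom.map_det (Polynomial.aeval z : ℝ[X] →ₐ[ℝ] ℂ).toRingHom
      (Matrix.of fun i j : Fin n => Polynomial.C (A i j) * Polynomial.X + Polynomial.C (B i j)))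
    have heq : ((Matrix.of fun i j : Fin n => Polynomial.C (A i j) * Polynomial.X
        + Polynomial.C (B i j)).map (Polynomial.aeval z : ℝ[X] →ₐ[ℝ] ℂ).toRingHom)
        = z • A' + B' := by
      ext i j
      simp only [Matrix.map_apply, Matrix.of_apply, AlgHom.toRingHom_eq_coe, RingHom.coe_coe, _root_.map_add, _root_.map_mul, Polynomial.aeval_C,
        Polynomial.aeval_X, Matrix.add_apply, Matrix.smul_apply, hA', hB',
        Complex.coe_algebraMap, smul_eq_mul]
      ring
    rw [RingHom.mapMatrix_apply, heq] at h0
    rw [← h0]; exact hz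
  obtain ⟨v, hv0, hveq⟩ := (Matrix.exists_mulVec_eq_zero_iff).mpr hdet
  set p := star v ⬝ᵥ A' *ᵥ v with hp
  set q := star v ⬝ᵥ B' *ᵥ v with hq
  have hzpq : z * p + q = 0 := by
    have : star v ⬝ᵥ (z • A' + B') *ᵥ v = 0 := by rw [hveq, dotProduct_zero]
    rw [add_mulVec, dotProduct_add, smul_mulVec, dotProduct_smul] at this
    simpa [smul_eq_mul] using this
  have hpreal : p.im = 0 := by
    have := herm_self_real A' (symm_herm A hA) v
    rw [← hp, Complex.star_def, Complex.conj_eq_iff_im] at this; exact this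
  have hqreal : q.im = 0 := by
    have := herm_self_real B' (symm_herm B hB) v
    rw [← hq, Complex.star_def, Complex.conj_eq_iff_im] at this; exact this
  -- imaginary part of z*p+q = 0 gives p.re = 0
  have hpre : p.re = 0 := by
    have h1 := congrArg Complex.im hzpq
    simp [Complex.add_im, Complex.mul_im, hpreal, hqreal] at h1
    rcases h1 with h | h
    · exact absurd h him
    · exact h
  have hp0 : p = 0 := Complex.ext hpre hpreal
  have hq0 : q = 0 := by
    have := hzpq; rw [hp0, mul_zero, zero_add] at this; exact this
  -- contradiction with positive definiteness
  set x : Fin n → ℝ := fun i => (v i).re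
  set y : Fin n → ℝ := fun i => (v i).im
  have hAx : x ⬝ᵥ A *ᵥ x + y ⬝ᵥ A *ᵥ y = 0 := by
    have := re_quad A v; rw [← hA', ← hp, hp0] at this; simpa using this.symm
  have hBx : x ⬝ᵥ B *ᵥ x + y ⬝ᵥ B *ᵥ y = 0 := by
    have := re_quad B v; rw [← hB', ← hq, hq0] at this; simpa using this.symm
  have key : x ⬝ᵥ (x₀ • A + B) *ᵥ x + y ⬝ᵥ (x₀ • A + B) *ᵥ y = 0 := by
    simp only [add_mulVec, dotProduct_add, smul_mulVec, dotProduct_smul, smul_eq_mul]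
    linear_combination x₀ * hAx + hBx
  have hxy : x ≠ 0 ∨ y ≠ 0 := by
    by_contra h
    push_neg at h
    apply hv0
    funext i
    have hx := congrFun h.1 i
    have hy := congrFun h.2 i
    exact Complex.ext hx hy
  have hpos : 0 < x ⬝ᵥ (x₀ • A + B) *ᵥ x + y ⬝ᵥ (x₀ • A + B) *ᵥ y := by
    rcases hxy with h | h
    · have h1 := hpd.dotProduct_mulVec_pos h
      have h2 := hpd.posSemidef.dotProduct_mulVec_nonneg y
      simp only [star_trivial] at h1 h2
      linarith
    · have h1 := hpd.dotProduct_mulVec_pos h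
      have h2 := hpd.posSemidef.dotProduct_mulVec_nonneg x
      simp only [star_trivial] at h1 h2
      linarith
  rw [key] at hpos
  exact lt_irrefl 0 hpos
end

section
/- Let μ be non-degenerate in degree d ≥ 1. Then the polynomial F_∞(x) = det(x M_{d−1} − M'_{d−1}) has d real roots s_1,…,s_d (with multiplicity), and there exist positive weights w_1,…,w_d and w_∞ such that ∫f dμ = w_∞ ev_∞^{2d}(f) + Σ_{i=1}^d w_i f(s_i) for all f of degree ≤ 2d, i.e., there is a quadrature rule of degree 2d with nodes s_1,…,s_d, ∞. -/
open MeasureTheory Polynomial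

namespace S9

open Finset Matrix

noncomputable def L (μ : Measure ℝ) (d : ℕ) : Polynomial ℝ →ₗ[ℝ] ℝ where
  toFun f := ∑ k ∈ Finset.range (2*d+1), f.coeff k * mom μ k
  map_add' f g := by simp [add_mul, Finset.sum_add_distrib]
  map_smul' a f := by simp [Finset.mul_sum, mul_assoc]

noncomputable def phi (d : ℕ) : (Fin d → ℝ) →ₗ[ℝ] Polynomial ℝ where
  toFun v := ∑ j : Fin d, C (v j) * X ^ (j:ℕ)
  map_add' v w := by simp [add_mul, Finset.sum_add_distrib]
  map_smul' a v := by
    simp only [Pi.smul_apply, smul_eq_mul, RingHom.id_apply, Finset.smul_sum, smul_eq_C_mul,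
      C_mul, mul_assoc]

variable {μ : Measure ℝ} {d : ℕ}

theorem L_int (h1 : ∀ k ≤ 2*d, Integrable (fun t => t ^ k) μ) {f : Polynomial ℝ}
    (hf : f.natDegree ≤ 2*d) : ∫ t, f.eval t ∂μ = L μ d f := by
  have he : ∀ t : ℝ, f.eval t = ∑ k ∈ Finset.range (2*d+1), f.coeff k * t ^ k :=
    fun t => eval_eq_sum_range' (by omega) t
  simp_rw [he]
  rw [integral_finset_sum]
  · simp only [L, LinearMap.coe_mk, AddHom.coe_mk, mom]
    exact Finset.sum_congr rfl fun k _ => integral_const_mul _ _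
  · intro k hk
    exact (h1 k (by simpa [Nat.lt_succ_iff] using hk)).const_mul _

theorem L_pow {k : ℕ} (hk : k ≤ 2*d) : L μ d (X ^ k : Polynomial ℝ) = mom μ k := by
  simp only [L, LinearMap.coe_mk, AddHom.coe_mk, coeff_X_pow, ite_mul, one_mul, zero_mul]
  rw [Finset.sum_ite_eq' (Finset.range (2*d+1)) k (fun k' => mom μ k')]
  simp [Nat.lt_succ_iff, hk]

theorem phi_coeff (v : Fin d → ℝ) (j : Fin d) : (phi d v).coeff (j:ℕ) = v j := by
  simp only [phi, LinearMap.coe_mk, AddHom.coe_mk, finset_sum_coeff, coeff_C_mul, coeff_X_pow]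
  rw [Finset.sum_eq_single j] <;> simp +contextual [Fin.val_eq_val, eq_comm]

theorem phi_coeff_ge (v : Fin d → ℝ) {k : ℕ} (hk : d ≤ k) : (phi d v).coeff k = 0 := by
  simp only [phi, LinearMap.coe_mk, AddHom.coe_mk, finset_sum_coeff, coeff_C_mul, coeff_X_pow]
  refine Finset.sum_eq_zero fun j _ => by
    have : k ≠ (j:ℕ) := by omega
    simp [this]

theorem natDegree_lt_of_coeff {p : Polynomial ℝ} (hd : 1 ≤ d)
    (h : ∀ m, d ≤ m → p.coeff m = 0) : p.natDegree < d := by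
  by_cases hp : p = 0
  · simp [hp]; omega
  · rw [Polynomial.natDegree_lt_iff_degree_lt hp]
    exact (Polynomial.degree_lt_iff_coeff_zero _ _).2 fun m hm => h m (by exact_mod_cast hm)

theorem phi_natDegree_lt (hd : 1 ≤ d) (v : Fin d → ℝ) : (phi d v).natDegree < d :=
  natDegree_lt_of_coeff hd fun m hm => phi_coeff_ge v hm

theorem phi_eq_zero {v : Fin d → ℝ} (h : phi d v = 0) : v = 0 := by
  funext j
  have := phi_coeff v j
  rw [h] at this
  simpa using this.symm

theorem expand (g : Polynomial ℝ) {n : ℕ} (h : g.natDegree < n) :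
    g = ∑ j : Fin n, C (g.coeff j) * X ^ (j:ℕ) := by
  conv_lhs => rw [g.as_sum_range' n h]
  rw [← Finset.sum_range fun i => C (g.coeff i) * X ^ i]
  simp [C_mul_X_pow_eq_monomial]

theorem L_mul_expand {g : Polynomial ℝ} {n : ℕ} (h : g.natDegree < n) (f : Polynomial ℝ) :
    L μ d (f * g) = ∑ j : Fin n, g.coeff j * L μ d (f * X ^ (j:ℕ)) := by
  conv_lhs => rw [expand g h, Finset.mul_sum]
  rw [map_sum]
  refine Finset.sum_congr rfl fun j _ => ?_
  rw [show f * (C (g.coeff j) * X ^ (j:ℕ)) = g.coeff j • (f * X ^ (j:ℕ)) by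
    rw [smul_eq_C_mul]; ring]
  rw [LinearMap.map_smul, smul_eq_mul]

theorem L_pow_mul_pow {i j : ℕ} (h : i + j ≤ 2*d) :
    L μ d ((X:Polynomial ℝ) ^ i * X ^ j) = mom μ (i + j) := by
  rw [← pow_add, L_pow h]


theorem hank_isHermitian : (hank μ d 0).IsHermitian := by
  ext i j
  simp [hank, Matrix.conjTranspose_apply, add_comm]

theorem dot_eq_L (x : Fin d → ℝ) (hd : 1 ≤ d) :
    x ⬝ᵥ ((hank μ d 0) *ᵥ x) = L μ d (phi d x * phi d x) := by
  have hR : L μ d (phi d x * phi d x)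
      = ∑ j : Fin d, ∑ i : Fin d, x j * (x i * mom μ ((j:ℕ) + (i:ℕ))) := by
    rw [L_mul_expand (phi_natDegree_lt hd x)]
    refine Finset.sum_congr rfl fun j _ => ?_
    rw [phi_coeff, mul_comm (phi d x) ((X:Polynomial ℝ) ^ (j:ℕ)),
      L_mul_expand (phi_natDegree_lt hd x), Finset.mul_sum]
    refine Finset.sum_congr rfl fun i _ => ?_
    rw [phi_coeff, L_pow_mul_pow (by have := j.isLt; have := i.isLt; omega)]
  rw [hR]
  simp only [dotProduct, mulVec, hank, Matrix.of_apply, Finset.mul_sum]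
  refine Finset.sum_congr rfl fun i _ => Finset.sum_congr rfl fun j _ => ?_
  rw [add_zero]
  ring

theorem hank_posDef (hd : 1 ≤ d) (hnd : NonDeg μ d) : (hank μ d 0).PosDef := by
  refine Matrix.PosDef.of_dotProduct_mulVec_pos hank_isHermitian fun x hx => ?_
  rw [star_trivial, dot_eq_L x hd]
  rw [← L_int hnd.1 ((natDegree_mul_le).trans (by have := phi_natDegree_lt hd x; omega))]
  refine hnd.2 _ (mul_ne_zero ?_ ?_) ((natDegree_mul_le).trans
    (by have := phi_natDegree_lt hd x; omega)) (fun t => by rw [eval_mul]; exact mul_self_nonneg _)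
  all_goals exact fun h => hx (phi_eq_zero h)

/-- the coefficient vector of the projection of X^d -/
noncomputable def cvec (μ : Measure ℝ) (d : ℕ) : Fin d → ℝ :=
  (hank μ d 0)⁻¹ *ᵥ (fun i : Fin d => mom μ ((i:ℕ) + d))

/-- the monic orthogonal polynomial of degree d -/
noncomputable def pdp (μ : Measure ℝ) (d : ℕ) : Polynomial ℝ :=
  X ^ d - phi d (cvec μ d)

theorem pdp_monic (hd : 1 ≤ d) : (pdp μ d).Monic := by
  have h : (phi d (cvec μ d)).degree < (d:ℕ) := by
    refine lt_of_le_of_lt (Polynomial.degree_le_natDegree) ?_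
    exact_mod_cast phi_natDegree_lt hd _
  exact Polynomial.monic_X_pow_sub (by exact_mod_cast h)

theorem pdp_natDegree (hd : 1 ≤ d) : (pdp μ d).natDegree = d := by
  refine le_antisymm ((Polynomial.natDegree_sub_le _ _).trans (by
    simp only [natDegree_X_pow]
    have := phi_natDegree_lt (d := d) hd
    exact max_le le_rfl (le_of_lt (this _)))) ?_
  refine Polynomial.le_natDegree_of_ne_zero ?_
  rw [pdp, Polynomial.coeff_sub, Polynomial.coeff_X_pow, if_pos rfl,
    phi_coeff_ge _ le_rfl]
  norm_num

theorem pdp_coeff_d (hd : 1 ≤ d) : (pdp μ d).coeff d = 1 := by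
  have := pdp_monic (μ := μ) hd
  rw [Polynomial.Monic, Polynomial.leadingCoeff, pdp_natDegree hd] at this
  exact this

theorem pdp_orth_pow (hd : 1 ≤ d) (hnd : NonDeg μ d) {k : ℕ} (hk : k < d) :
    L μ d (pdp μ d * X ^ k) = 0 := by
  have hdet : IsUnit (hank μ d 0).det := (hank_posDef hd hnd).det_pos.ne'.isUnit
  have hMc : (hank μ d 0) *ᵥ (cvec μ d) = fun i : Fin d => mom μ ((i:ℕ) + d) := by
    rw [cvec, Matrix.mulVec_mulVec, Matrix.mul_nonsing_inv _ hdet, Matrix.one_mulVec]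
  have hMck := congrFun hMc ⟨k, hk⟩
  simp only [mulVec, dotProduct, hank, Matrix.of_apply, Fin.val_mk] at hMck
  rw [pdp, sub_mul, map_sub, L_pow_mul_pow (by omega),
    mul_comm (phi d (cvec μ d)) ((X:Polynomial ℝ) ^ k), L_mul_expand (phi_natDegree_lt hd _)]
  have step : ∀ j : Fin d, (phi d (cvec μ d)).coeff (j:ℕ) * L μ d ((X:Polynomial ℝ)^k * X^(j:ℕ))
      = mom μ (k + (j:ℕ) + 0) * (cvec μ d) j := by
    intro j
    rw [phi_coeff, L_pow_mul_pow (by have := j.isLt; omega), add_zero]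
    ring
  rw [Finset.sum_congr rfl (fun j _ => step j), hMck, add_comm d k, sub_self]

theorem pdp_orth (hd : 1 ≤ d) (hnd : NonDeg μ d) {g : Polynomial ℝ} (hg : g.natDegree < d) :
    L μ d (pdp μ d * g) = 0 := by
  rw [L_mul_expand hg]
  exact Finset.sum_eq_zero fun j _ => by rw [pdp_orth_pow hd hnd j.2, mul_zero]

noncomputable def Tm (μ : Measure ℝ) (d : ℕ) : Matrix (Fin d) (Fin d) ℝ :=
  (hank μ d 0)⁻¹ * hank μ d 1

theorem sum_mulVec {n : ℕ} {ι : Type*} (s : Finset ι) (A : ι → Matrix (Fin n) (Fin n) ℝ)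
    (x : Fin n → ℝ) : (∑ k ∈ s, A k) *ᵥ x = ∑ k ∈ s, (A k) *ᵥ x := by
  classical
  induction s using Finset.induction with
  | empty => simp [Matrix.mulVec]
  | insert _ _ h ih => rw [Finset.sum_insert h, Finset.sum_insert h, Matrix.add_mulVec, ih]

theorem mulVec_inj {n : ℕ} {M : Matrix (Fin n) (Fin n) ℝ} (hdet : IsUnit M.det)
    {u v : Fin n → ℝ} (h : M *ᵥ u = M *ᵥ v) : u = v := by
  have := congrArg (fun w => M⁻¹ *ᵥ w) h
  simpa [Matrix.mulVec_mulVec, Matrix.nonsing_inv_mul _ hdet, Matrix.one_mulVec] using this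

theorem L_mulvec_entry (hd : 1 ≤ d) {g : Polynomial ℝ} (hg : g.natDegree < d) (i : Fin d) :
    (hank μ d 0 *ᵥ (fun j : Fin d => g.coeff j)) i = L μ d (X ^ (i:ℕ) * g) := by
  rw [L_mul_expand hg]
  simp only [mulVec, dotProduct, hank, Matrix.of_apply]
  refine Finset.sum_congr rfl fun j _ => ?_
  rw [L_pow_mul_pow (by have := i.isLt; have := j.isLt; omega), add_zero]
  ring

theorem L_C_mul (a : ℝ) (p : Polynomial ℝ) : L μ d (C a * p) = a * L μ d p := by
  rw [← smul_eq_C_mul, LinearMap.map_smul, smul_eq_mul]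

theorem lemA (hd : 1 ≤ d) (hnd : NonDeg μ d) (v : Fin d → ℝ) :
    phi d (Tm μ d *ᵥ v) = X * phi d v - C (v ⟨d-1, by omega⟩) * pdp μ d := by
  have hdet : IsUnit (hank μ d 0).det := (hank_posDef hd hnd).det_pos.ne'.isUnit
  set a := v ⟨d-1, by omega⟩ with ha
  set R := X * phi d v - C a * pdp μ d with hR
  have hcoefftop : ∀ m, d ≤ m → R.coeff m = 0 := by
    intro m hm
    obtain ⟨m', rfl⟩ : ∃ m', m = m' + 1 := ⟨m - 1, by omega⟩
    rw [hR, Polynomial.coeff_sub, Polynomial.coeff_C_mul, Polynomial.coeff_X_mul]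
    rcases Nat.lt_or_ge m' d with hm' | hm'
    · have hm'd : m' = d - 1 := by omega
      have h1 : (phi d v).coeff m' = v ⟨m', by omega⟩ := phi_coeff v ⟨m', by omega⟩
      have h2 : (pdp μ d).coeff (m' + 1) = 1 := by
        rw [show m' + 1 = d by omega]; exact pdp_coeff_d hd
      rw [h1, h2, mul_one, ha,
        show (⟨m', by omega⟩ : Fin d) = ⟨d - 1, by omega⟩ from Fin.ext (by simp [hm'd])]
      exact sub_self _
    · rw [phi_coeff_ge _ hm', Polynomial.coeff_eq_zero_of_natDegree_lt
        (by rw [pdp_natDegree hd]; omega), mul_zero, sub_zero]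
  have hRdeg : R.natDegree < d := natDegree_lt_of_coeff hd hcoefftop
  have hvec : hank μ d 0 *ᵥ (fun j : Fin d => R.coeff j) = hank μ d 0 *ᵥ (Tm μ d *ᵥ v) := by
    rw [Matrix.mulVec_mulVec, Tm, ← Matrix.mul_assoc, Matrix.mul_nonsing_inv _ hdet,
      Matrix.one_mul]
    funext i
    rw [L_mulvec_entry hd hRdeg i]
    have hsplit : (X:Polynomial ℝ) ^ (i:ℕ) * R
        = X ^ ((i:ℕ)+1) * phi d v - C a * (pdp μ d * X ^ (i:ℕ)) := by
      rw [hR]; ring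
    rw [hsplit, map_sub, L_C_mul, pdp_orth_pow hd hnd i.isLt, mul_zero, sub_zero,
      L_mul_expand (phi_natDegree_lt hd v)]
    simp only [mulVec, dotProduct, hank, Matrix.of_apply]
    refine Finset.sum_congr rfl fun j _ => ?_
    rw [phi_coeff, L_pow_mul_pow (by have := i.isLt; have := j.isLt; omega),
      show (i:ℕ)+1+(j:ℕ) = (i:ℕ)+(j:ℕ)+1 by omega]
    ring
  have hvec2 : (fun j : Fin d => R.coeff j) = Tm μ d *ᵥ v := mulVec_inj hdet hvec
  refine Polynomial.ext fun m => ?_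
  rcases Nat.lt_or_ge m d with hm | hm
  · have := congrFun hvec2 ⟨m, hm⟩
    simp only at this
    rw [show m = ((⟨m, hm⟩ : Fin d) : ℕ) from rfl, phi_coeff, ← this]
  · rw [phi_coeff_ge _ hm, hcoefftop m hm]

noncomputable def e0 (d : ℕ) : Fin d → ℝ := fun j => if (j:ℕ) = 0 then 1 else 0

theorem phi_e0 (hd : 1 ≤ d) : phi d (e0 d) = 1 := by
  simp only [phi, LinearMap.coe_mk, AddHom.coe_mk]
  have h : ∀ j : Fin d, C (e0 d j) * X ^ (j:ℕ)
      = if j = (⟨0, hd⟩ : Fin d) then 1 else 0 := by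
    intro j
    by_cases hj : j = ⟨0, hd⟩
    · subst hj; simp [e0]
    · have : (j:ℕ) ≠ 0 := fun h0 => hj (Fin.ext h0)
      simp [e0, this, hj]
  rw [Finset.sum_congr rfl fun j _ => h j]
  simp

theorem lemB (hd : 1 ≤ d) (hnd : NonDeg μ d) (n : ℕ) :
    ∃ g : Polynomial ℝ, (X:Polynomial ℝ) ^ n
      = phi d ((Tm μ d ^ n) *ᵥ e0 d) + g * pdp μ d := by
  induction n with
  | zero => exact ⟨0, by simp [phi_e0 hd]⟩
  | succ n ih =>
    obtain ⟨g, hg⟩ := ih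
    set v := (Tm μ d ^ n) *ᵥ e0 d with hv
    refine ⟨C (v ⟨d-1, by omega⟩) + X * g, ?_⟩
    have hA := lemA hd hnd v
    have hX : X * phi d v = phi d (Tm μ d *ᵥ v) + C (v ⟨d-1, by omega⟩) * pdp μ d := by
      rw [hA]; ring
    have hTv : Tm μ d *ᵥ v = (Tm μ d ^ (n+1)) *ᵥ e0 d := by
      rw [hv, Matrix.mulVec_mulVec, ← pow_succ']
    calc (X:Polynomial ℝ) ^ (n+1) = X * X ^ n := (pow_succ' X n)
    _ = X * phi d v + X * g * pdp μ d := by rw [hg]; ring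
    _ = phi d ((Tm μ d ^ (n+1)) *ᵥ e0 d) + (C (v ⟨d-1, by omega⟩) + X * g) * pdp μ d := by
        rw [hX, hTv]; ring

theorem charpoly_eq (hd : 1 ≤ d) (hnd : NonDeg μ d) : (Tm μ d).charpoly = pdp μ d := by
  set χ := (Tm μ d).charpoly with hχ
  have hχmonic : χ.Monic := (Tm μ d).charpoly_monic
  have hχd : χ.natDegree = d := by
    rw [hχ, Matrix.charpoly_natDegree_eq_dim, Fintype.card_fin]
  choose g hg using fun n => lemB hd hnd n
  have hexp : χ = ∑ k ∈ Finset.range (d+1), C (χ.coeff k) * X ^ k := by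
    conv_lhs => rw [χ.as_sum_range' (d+1) (by omega)]
    simp [C_mul_X_pow_eq_monomial]
  set G := ∑ k ∈ Finset.range (d+1), C (χ.coeff k) * g k with hG
  have hkey : χ = G * pdp μ d := by
    conv_lhs => rw [hexp]
    rw [Finset.sum_congr rfl fun k _ => by rw [hg k]]
    have : ∀ k ∈ Finset.range (d+1),
        C (χ.coeff k) * (phi d ((Tm μ d ^ k) *ᵥ e0 d) + g k * pdp μ d)
        = phi d (χ.coeff k • ((Tm μ d ^ k) *ᵥ e0 d)) + C (χ.coeff k) * g k * pdp μ d := by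
      intro k _
      rw [mul_add, ← mul_assoc]
      congr 1
      rw [LinearMap.map_smul, smul_eq_C_mul]
    rw [Finset.sum_congr rfl this, Finset.sum_add_distrib, ← map_sum, ← Finset.sum_mul]
    have hz : ∑ k ∈ Finset.range (d+1), χ.coeff k • ((Tm μ d ^ k) *ᵥ e0 d) = 0 := by
      have : ∀ k ∈ Finset.range (d+1), χ.coeff k • ((Tm μ d ^ k) *ᵥ e0 d)
          = (χ.coeff k • (Tm μ d ^ k)) *ᵥ e0 d := fun k _ =>
        (Matrix.smul_mulVec _ _ _).symm
      rw [Finset.sum_congr rfl this, ← sum_mulVec]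
      rw [show (∑ k ∈ Finset.range (d+1), χ.coeff k • (Tm μ d ^ k)) = Polynomial.aeval (Tm μ d) χ
        from (Polynomial.aeval_eq_sum_range' (by omega) (Tm μ d)).symm]
      rw [hχ, Matrix.aeval_self_charpoly]
      simp [Matrix.mulVec]
    rw [hz, map_zero, zero_add]
  have hGne : G ≠ 0 := by
    intro h
    rw [h, zero_mul] at hkey
    exact hχmonic.ne_zero hkey
  have hdeg : G.natDegree = 0 := by
    have := Polynomial.natDegree_mul hGne (pdp_monic (μ := μ) hd).ne_zero
    rw [← hkey, hχd, pdp_natDegree hd] at this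
    omega
  have hGC : G = C (G.coeff 0) := Polynomial.eq_C_of_natDegree_eq_zero hdeg
  have hlead : G.coeff 0 = 1 := by
    have := congrArg Polynomial.leadingCoeff hkey
    rw [Polynomial.leadingCoeff_mul, (pdp_monic (μ := μ) hd).leadingCoeff, mul_one,
      hχmonic.leadingCoeff] at this
    rw [hGC, Polynomial.leadingCoeff_C] at this
    exact this.symm
  rw [hkey, hGC, hlead, Polynomial.C_1, one_mul]

theorem charpoly_eval {n : ℕ} (B : Matrix (Fin n) (Fin n) ℝ) (x : ℝ) :
    B.charpoly.eval x = (x • (1 : Matrix (Fin n) (Fin n) ℝ) - B).det := by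
  have h1 : B.charpoly.eval x = (Polynomial.evalRingHom x) B.charmatrix.det := rfl
  rw [h1, RingHom.map_det]
  congr 1
  ext i j
  by_cases h : i = j
  · subst h
    simp [Matrix.charmatrix_apply_eq, Matrix.one_apply]
  · simp [Matrix.charmatrix_apply_ne _ _ _ h, Matrix.one_apply, h]

open scoped MatrixOrder in
theorem exists_s (hd : 1 ≤ d) (hnd : NonDeg μ d) :
    ∃ s : Fin d → ℝ, pdp μ d = ∏ i, (X - C (s i)) := by
  have hM := hank_posDef hd hnd
  obtain ⟨S0, hS0H, hSS0⟩ : ∃ S0 : Matrix (Fin d) (Fin d) ℝ, S0.IsHermitian ∧ S0 * S0 = hank μ d 0 :=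
    ⟨CFC.sqrt (hank μ d 0), (Matrix.nonneg_iff_posSemidef.mp (CFC.sqrt_nonneg _)).1,
      CFC.sqrt_mul_sqrt_self _ (Matrix.nonneg_iff_posSemidef.mpr hM.posSemidef)⟩
  have hSS : S0 * S0 = hank μ d 0 := hSS0
  set S := S0 with hSdef
  have hSH : S.IsHermitian := hS0H
  have hSdet : IsUnit S.det := by
    refine isUnit_iff_ne_zero.2 fun h => ?_
    have : S.det * S.det = (hank μ d 0).det := by rw [← Matrix.det_mul, hSS]
    rw [h, mul_zero] at this
    exact hM.det_pos.ne' this.symm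
  have hM'H : (hank μ d 1).IsHermitian := by
    ext i j
    simp [hank, Matrix.conjTranspose_apply, add_comm, add_left_comm, add_assoc]
  have hSinvH : (S⁻¹).IsHermitian := hSH.inv
  have hAH : (S⁻¹ * hank μ d 1 * S⁻¹).IsHermitian := by
    show (S⁻¹ * hank μ d 1 * S⁻¹)ᴴ = _
    rw [Matrix.conjTranspose_mul, Matrix.conjTranspose_mul, hSinvH.eq, hM'H.eq,
      ← Matrix.mul_assoc]
  refine ⟨hAH.eigenvalues, ?_⟩
  apply Polynomial.funext
  intro x
  rw [← charpoly_eq hd hnd, charpoly_eval]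
  have hT : Tm μ d = S⁻¹ * (S⁻¹ * hank μ d 1 * S⁻¹) * S := by
    rw [Tm, ← hSS, Matrix.mul_inv_rev]
    simp only [Matrix.mul_assoc]
    rw [Matrix.nonsing_inv_mul _ hSdet, Matrix.mul_one]
  have hconj1 : x • (1 : Matrix (Fin d) (Fin d) ℝ) - Tm μ d
      = S⁻¹ * (x • 1 - (S⁻¹ * hank μ d 1 * S⁻¹)) * S := by
    rw [hT, Matrix.mul_sub, Matrix.sub_mul]
    congr 1
    rw [Matrix.mul_smul, Matrix.mul_one, Matrix.smul_mul, Matrix.nonsing_inv_mul _ hSdet]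
  rw [hconj1, Matrix.det_mul, Matrix.det_mul]
  have hrot : S⁻¹.det * (x • 1 - (S⁻¹ * hank μ d 1 * S⁻¹)).det * S.det
      = (x • 1 - (S⁻¹ * hank μ d 1 * S⁻¹)).det := by
    rw [mul_comm (S⁻¹.det) _, mul_assoc, Matrix.det_nonsing_inv_mul_det _ hSdet, mul_one]
  rw [hrot]
  -- now use the spectral theorem
  have hspec := hAH.spectral_theorem
  rw [RCLike.ofReal_real_eq_id] at hspec
  set U := (Matrix.IsHermitian.eigenvectorUnitary hAH : Matrix (Fin d) (Fin d) ℝ) with hU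
  have hUU : U * star U = 1 :=
    Matrix.mem_unitaryGroup_iff.mp (Matrix.IsHermitian.eigenvectorUnitary hAH).2
  have hconj2 : x • (1 : Matrix (Fin d) (Fin d) ℝ) - (S⁻¹ * hank μ d 1 * S⁻¹)
      = U * (x • 1 - Matrix.diagonal hAH.eigenvalues) * star U := by
    conv_lhs => rw [hspec]
    rw [Matrix.mul_sub, Matrix.sub_mul]
    congr 1
    rw [Matrix.mul_smul, Matrix.mul_one, Matrix.smul_mul, hUU]
  rw [hconj2, Matrix.det_mul, Matrix.det_mul, mul_comm (U.det) _, mul_assoc,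
    ← Matrix.det_mul, hUU, Matrix.det_one, mul_one]
  rw [Matrix.smul_one_eq_diagonal, Matrix.diagonal_sub, Matrix.det_diagonal]
  rw [Polynomial.eval_prod]
  simp

section Quad

variable {s : Fin d → ℝ}

theorem pdp_eval_root (hs : pdp μ d = ∏ i, (X - C (s i))) (i : Fin d) :
    (pdp μ d).eval (s i) = 0 := by
  rw [hs, Polynomial.eval_prod]
  exact Finset.prod_eq_zero (Finset.mem_univ i) (by simp)

theorem s_inj (hd : 1 ≤ d) (hnd : NonDeg μ d) (hs : pdp μ d = ∏ i, (X - C (s i))) :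
    Function.Injective s := by
  intro i j hij
  by_contra hne
  have hji : j ∈ Finset.univ.erase i := Finset.mem_erase.2 ⟨fun h => hne h.symm, Finset.mem_univ j⟩
  set h := ∏ k ∈ (Finset.univ.erase i).erase j, (X - C (s k)) with hh
  have hfact : pdp μ d = (X - C (s i)) * ((X - C (s j)) * h) := by
    rw [hs, ← Finset.mul_prod_erase Finset.univ _ (Finset.mem_univ i),
      ← Finset.mul_prod_erase _ _ hji]
  have hhmonic : h.Monic := monic_prod_of_monic _ _ fun k _ => monic_X_sub_C (s k)
  have hhdeg : h.natDegree = d - 2 := by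
    rw [hh, Polynomial.natDegree_prod _ _ fun k _ => (monic_X_sub_C (s k)).ne_zero]
    simp only [natDegree_X_sub_C, Finset.sum_const, smul_eq_mul, mul_one]
    rw [Finset.card_erase_of_mem hji, Finset.card_erase_of_mem (Finset.mem_univ i)]
    simp only [Finset.card_univ, Fintype.card_fin]
    omega
  have hd2 : 2 ≤ d := by
    by_contra hlt
    have hd1 : d = 1 := by omega
    subst hd1
    exact hne (Subsingleton.elim i j)
  have horth : L μ d (pdp μ d * h) = 0 := pdp_orth hd hnd (by omega)
  set u := (X - C (s i)) * h with hu
  have huu : u * u = pdp μ d * h := by rw [hu, hfact, hij]; ring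
  have humonic : u.Monic := (monic_X_sub_C (s i)).mul hhmonic
  have hudeg : u.natDegree ≤ d := by
    refine natDegree_mul_le.trans ?_
    rw [natDegree_X_sub_C, hhdeg]; omega
  have hpos : 0 < L μ d (u * u) := by
    rw [← L_int hnd.1 (natDegree_mul_le.trans (by omega))]
    refine hnd.2 _ (mul_ne_zero humonic.ne_zero humonic.ne_zero)
      (natDegree_mul_le.trans (by omega)) fun t => by rw [eval_mul]; exact mul_self_nonneg _
  rw [huu, horth] at hpos
  exact lt_irrefl _ hpos

theorem quad (hd : 1 ≤ d) (hnd : NonDeg μ d) (hs : pdp μ d = ∏ i, (X - C (s i))) :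
    ∃ w : Fin d → ℝ, (∀ i, 0 < w i) ∧ 0 < L μ d (pdp μ d * pdp μ d) ∧
      ∀ f : Polynomial ℝ, f.natDegree ≤ 2 * d →
        ∫ t, f.eval t ∂μ
          = L μ d (pdp μ d * pdp μ d) * f.coeff (2 * d) + ∑ i, w i * f.eval (s i) := by
  classical
  have hvs : Set.InjOn s ↑(Finset.univ : Finset (Fin d)) := (s_inj hd hnd hs).injOn
  have hcard : (Finset.univ : Finset (Fin d)).card = d := by simp
  set ℓ : Fin d → Polynomial ℝ := fun i => Lagrange.basis Finset.univ s i with hℓ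
  have hldeg : ∀ i, (ℓ i).natDegree = d - 1 := fun i => by
    rw [hℓ, Lagrange.natDegree_basis hvs (Finset.mem_univ i), hcard]
  have hlne : ∀ i, ℓ i ≠ 0 := fun i => Lagrange.basis_ne_zero hvs (Finset.mem_univ i)
  have hpdeg : (pdp μ d).degree = (d : WithBot ℕ) := by
    rw [Polynomial.degree_eq_natDegree (pdp_monic (μ := μ) hd).ne_zero, pdp_natDegree hd]
  -- a degree-< d polynomial vanishing at all nodes is zero
  have hvanish : ∀ r : Polynomial ℝ, r.degree < (d : WithBot ℕ) →
      (∀ i : Fin d, r.eval (s i) = 0) → r = 0 := by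
    intro r hr h0
    have := Lagrange.eq_interpolate (f := r) hvs (by rw [hcard]; exact_mod_cast hr)
    rw [this, show (fun i => r.eval (s i)) = 0 from funext fun i => h0 i, map_zero]
  -- L of a degree-< d polynomial via interpolation
  have hLr : ∀ r : Polynomial ℝ, r.degree < (d : WithBot ℕ) →
      L μ d r = ∑ i, r.eval (s i) * L μ d (ℓ i) := by
    intro r hr
    conv_lhs => rw [Lagrange.eq_interpolate (f := r) hvs (by rw [hcard]; exact_mod_cast hr),
      Lagrange.interpolate_apply]
    rw [map_sum]
    exact Finset.sum_congr rfl fun i _ => L_C_mul _ _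
  -- weights are positive
  have hwpos : ∀ i, 0 < L μ d (ℓ i) := by
    intro i
    have hub : (ℓ i * ℓ i - ℓ i).natDegree ≤ 2 * d := by
      refine (Polynomial.natDegree_sub_le _ _).trans (max_le (natDegree_mul_le.trans ?_) ?_) <;>
        rw [hldeg i] <;> omega
    set u := ℓ i * ℓ i - ℓ i with hu
    have hrz : u %ₘ pdp μ d = 0 := by
      refine hvanish _ (lt_of_lt_of_le (Polynomial.degree_modByMonic_lt u (pdp_monic hd))
        (le_of_eq hpdeg)) fun j => ?_
      have hdiv : u %ₘ pdp μ d + pdp μ d * (u /ₘ pdp μ d) = u :=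
        Polynomial.modByMonic_add_div u (pdp μ d)
      have := congrArg (Polynomial.eval (s j)) hdiv
      rw [eval_add, eval_mul, pdp_eval_root hs, zero_mul, add_zero] at this
      rw [this, hu, eval_sub, eval_mul]
      by_cases hij : i = j
      · subst hij; rw [Lagrange.eval_basis_self hvs (Finset.mem_univ i)]; ring
      · rw [Lagrange.eval_basis_of_ne hij (Finset.mem_univ j)]; ring
    have hueq : u = pdp μ d * (u /ₘ pdp μ d) := by
      have hdiv : u %ₘ pdp μ d + pdp μ d * (u /ₘ pdp μ d) = u :=
        Polynomial.modByMonic_add_div u (pdp μ d)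
      conv_lhs => rw [← hdiv]
      rw [hrz, zero_add]
    have hqdeg : (u /ₘ pdp μ d).natDegree < d := by
      rw [Polynomial.natDegree_divByMonic u (pdp_monic hd), pdp_natDegree hd]
      have : u.natDegree ≤ 2 * d - 2 := by
        refine (Polynomial.natDegree_sub_le _ _).trans (max_le (natDegree_mul_le.trans ?_) ?_) <;>
          rw [hldeg i] <;> omega
      omega
    have hLu : L μ d u = 0 := by rw [hueq]; exact pdp_orth hd hnd hqdeg
    rw [hu, map_sub] at hLu
    have hLL : L μ d (ℓ i) = L μ d (ℓ i * ℓ i) := by linarith [hLu]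
    rw [hLL, ← L_int hnd.1 (natDegree_mul_le.trans (by rw [hldeg i]; omega))]
    refine hnd.2 _ (mul_ne_zero (hlne i) (hlne i))
      (natDegree_mul_le.trans (by rw [hldeg i]; omega))
      fun t => by rw [eval_mul]; exact mul_self_nonneg _
  -- winf positive
  have hwinf : 0 < L μ d (pdp μ d * pdp μ d) := by
    have hdeg2 : (pdp μ d * pdp μ d).natDegree ≤ 2 * d :=
      natDegree_mul_le.trans (by rw [pdp_natDegree hd]; omega)
    rw [← L_int hnd.1 hdeg2]
    exact hnd.2 _ (mul_ne_zero (pdp_monic hd).ne_zero (pdp_monic hd).ne_zero) hdeg2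
      fun t => by rw [eval_mul]; exact mul_self_nonneg _
  refine ⟨fun i => L μ d (ℓ i), hwpos, hwinf, fun f hf => ?_⟩
  set r := f %ₘ pdp μ d with hr
  set q := f /ₘ pdp μ d with hq
  have hdiv : r + pdp μ d * q = f := Polynomial.modByMonic_add_div f (pdp μ d)
  have hrdeg : r.degree < (d : WithBot ℕ) :=
    lt_of_lt_of_le (Polynomial.degree_modByMonic_lt f (pdp_monic hd)) (le_of_eq hpdeg)
  have hrnat : r.natDegree < d ∨ r = 0 := by
    by_cases h0 : r = 0
    · exact Or.inr h0
    · exact Or.inl (by rwa [← Polynomial.natDegree_lt_iff_degree_lt h0] at hrdeg)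
  have hqdeg : q.natDegree ≤ d := by
    rw [hq, Polynomial.natDegree_divByMonic f (pdp_monic hd), pdp_natDegree hd]; omega
  -- the top coefficient
  have hcoeff : f.coeff (2 * d) = q.coeff d := by
    rw [← hdiv, Polynomial.coeff_add]
    have hr2d : r.coeff (2 * d) = 0 := by
      rcases hrnat with h | h
      · exact Polynomial.coeff_eq_zero_of_natDegree_lt (by omega)
      · simp [h]
    rw [hr2d, zero_add, Polynomial.coeff_mul]
    rw [Finset.sum_eq_single_of_mem (d, d) (Finset.HasAntidiagonal.mem_antidiagonal.2 (by omega))]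
    · rw [pdp_coeff_d hd, one_mul]
    · rintro ⟨a, b⟩ hab hne
      rw [Finset.HasAntidiagonal.mem_antidiagonal] at hab
      rcases Nat.lt_trichotomy a d with h | h | h
      · have hb : d < b := by omega
        rw [Polynomial.coeff_eq_zero_of_natDegree_lt (lt_of_le_of_lt hqdeg hb), mul_zero]
      · have hb : b = d := by omega
        exact absurd (by rw [h, hb]) hne
      · rw [Polynomial.coeff_eq_zero_of_natDegree_lt (by rw [pdp_natDegree hd]; omega), zero_mul]
  -- L (pdp * q)
  have hLpq : L μ d (pdp μ d * q) = q.coeff d * L μ d (pdp μ d * pdp μ d) := by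
    rw [L_mul_expand (n := d + 1) (by omega) (pdp μ d)]
    have hsingle : ∀ j : Fin (d+1), j ≠ ⟨d, by omega⟩ →
        q.coeff (j:ℕ) * L μ d (pdp μ d * X ^ (j:ℕ)) = 0 := by
      intro j hj
      have hjd : (j : ℕ) < d := by
        have h1 := j.isLt
        have h2 : (j : ℕ) ≠ d := fun h => hj (Fin.ext h)
        omega
      rw [pdp_orth_pow hd hnd hjd, mul_zero]
    rw [Finset.sum_eq_single (⟨d, by omega⟩ : Fin (d+1)) (fun j _ hj => hsingle j hj)
      (fun h => absurd (Finset.mem_univ _) h)]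
    show q.coeff d * L μ d (pdp μ d * X ^ d) = _
    have hXd : (X : Polynomial ℝ) ^ d = pdp μ d + phi d (cvec μ d) := by
      rw [pdp]; ring
    rw [hXd, mul_add, map_add, pdp_orth hd hnd (phi_natDegree_lt hd _), add_zero]
  -- finish
  have hfev : ∀ i, f.eval (s i) = r.eval (s i) := by
    intro i
    conv_lhs => rw [← hdiv]
    rw [eval_add, eval_mul, pdp_eval_root hs, zero_mul, add_zero]
  have hsplit : L μ d f = L μ d r + L μ d (pdp μ d * q) := by
    conv_lhs => rw [← hdiv]
    rw [map_add]
  rw [L_int hnd.1 hf, hsplit, hLpq, ← hcoeff, hLr r hrdeg]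
  rw [add_comm]
  congr 1
  · ring
  · exact Finset.sum_congr rfl fun i _ => by rw [hfev i]; ring

end Quad

theorem det_identity (hd : 1 ≤ d) (hnd : NonDeg μ d) {s : Fin d → ℝ}
    (hs : pdp μ d = ∏ i, (X - C (s i))) :
    Matrix.det (Matrix.of fun i j : Fin d =>
        Polynomial.C (mom μ ((i : ℕ) + (j : ℕ))) * Polynomial.X
        - Polynomial.C (mom μ ((i : ℕ) + (j : ℕ) + 1)))
      = Polynomial.C (hank μ d 0).det * ∏ i, (Polynomial.X - Polynomial.C (s i)) := by
  have hdet : IsUnit (hank μ d 0).det := (hank_posDef hd hnd).det_pos.ne'.isUnit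
  apply Polynomial.funext
  intro x
  have h1 : Polynomial.eval x (Matrix.det (Matrix.of fun i j : Fin d =>
      C (mom μ ((i:ℕ)+(j:ℕ))) * X - C (mom μ ((i:ℕ)+(j:ℕ)+1))))
      = Matrix.det (x • hank μ d 0 - hank μ d 1) := by
    rw [show Polynomial.eval x (Matrix.det (Matrix.of fun i j : Fin d =>
        C (mom μ ((i:ℕ)+(j:ℕ))) * X - C (mom μ ((i:ℕ)+(j:ℕ)+1))))
      = (Polynomial.evalRingHom x) (Matrix.det (Matrix.of fun i j : Fin d =>
        C (mom μ ((i:ℕ)+(j:ℕ))) * X - C (mom μ ((i:ℕ)+(j:ℕ)+1)))) from rfl, RingHom.map_det]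
    congr 1
    ext i j
    simp only [RingHom.mapMatrix_apply, Matrix.map_apply, Matrix.of_apply, Matrix.sub_apply,
      Matrix.smul_apply, hank, smul_eq_mul, Polynomial.coe_evalRingHom, Polynomial.eval_sub,
      Polynomial.eval_mul, Polynomial.eval_C, Polynomial.eval_X, add_zero]
    ring
  have h2 : x • hank μ d 0 - hank μ d 1 = hank μ d 0 * (x • 1 - Tm μ d) := by
    rw [Matrix.mul_sub, Matrix.mul_smul, Matrix.mul_one, Tm, ← Matrix.mul_assoc,
      Matrix.mul_nonsing_inv _ hdet, Matrix.one_mul]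
  rw [h1, h2, Matrix.det_mul, ← charpoly_eval, charpoly_eq hd hnd, hs,
    Polynomial.eval_mul, Polynomial.eval_C]

end S9

/-- For μ non-degenerate in degree d ≥ 1, the polynomial F_∞(x) = det(x M_{d-1} - M'_{d-1})
has d real roots s₁,…,s_d (with multiplicity), and there is a quadrature rule of degree 2d
with nodes s₁,…,s_d and ∞, i.e. positive weights w_i and w_∞ with
∫ f dμ = w_∞ · (coeff of t^{2d} in f) + Σ w_i f(s_i). -/
theorem stmt9 (μ : Measure ℝ) (d : ℕ) (hd : 1 ≤ d) (hnd : NonDeg μ d) :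
    ∃ (s : Fin d → ℝ) (w : Fin d → ℝ) (winf : ℝ),
      (Matrix.det (Matrix.of fun i j : Fin d =>
          Polynomial.C (mom μ ((i : ℕ) + (j : ℕ))) * Polynomial.X
          - Polynomial.C (mom μ ((i : ℕ) + (j : ℕ) + 1)))
        = Polynomial.C (hank μ d 0).det * ∏ i, (Polynomial.X - Polynomial.C (s i))) ∧
      (∀ i, 0 < w i) ∧ 0 < winf ∧
      ∀ f : Polynomial ℝ, f.natDegree ≤ 2 * d →
        ∫ t, f.eval t ∂μ = winf * f.coeff (2 * d) + ∑ i, w i * f.eval (s i) := by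
  obtain ⟨s, hs⟩ := S9.exists_s hd hnd
  obtain ⟨w, hw, hwinf, hquad⟩ := S9.quad hd hnd hs
  exact ⟨s, w, S9.L μ d (S9.pdp μ d * S9.pdp μ d), S9.det_identity hd hnd hs, hw, hwinf, hquad⟩
end

section
/- Let μ be non-degenerate in degree d ≥ 1 and suppose there is a quadrature rule ∫f dμ = w_∞ ev_∞^{2d}(f) + Σ_{i=1}^d w_i f(s_i) of degree 2d with node at infinity. Then the weight at infinity is w_∞ = det(M_d)/det(M_{d−1}). -/
open MeasureTheory Polynomial
open scoped Matrix

lemma det_updateRow_last' {n : ℕ} (A : Matrix (Fin (n+1)) (Fin (n+1)) ℝ) :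
    (A.updateRow (Fin.last n) (Pi.single (Fin.last n) 1)).det
      = (A.submatrix Fin.castSucc Fin.castSucc).det := by
  rw [Matrix.det_succ_row _ (Fin.last n)]
  rw [Finset.sum_eq_single (Fin.last n)]
  · have h1 : ((A.updateRow (Fin.last n) (Pi.single (Fin.last n) 1)).submatrix
        (Fin.last n).succAbove (Fin.last n).succAbove) = A.submatrix Fin.castSucc Fin.castSucc := by
      ext i j
      rw [Fin.succAbove_last]
      exact congrFun (Matrix.updateRow_ne (Fin.castSucc_lt_last i).ne) _
    rw [h1, Matrix.updateRow_self, Pi.single_eq_same]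
    have : (-1 : ℝ) ^ ((Fin.last n : ℕ) + (Fin.last n : ℕ)) = 1 :=
      Even.neg_one_pow ⟨n, rfl⟩
    rw [this, one_mul, one_mul]
  · intro j _ hj
    rw [Matrix.updateRow_self, Pi.single_eq_of_ne hj]
    ring
  · intro h; exact absurd (Finset.mem_univ _) h

/-- If μ is non-degenerate in degree d ≥ 1 and there is a quadrature rule of degree 2d
with a node at infinity, ∫ f dμ = w_∞ ev_∞^{2d}(f) + Σ w_i f(s_i), then
w_∞ = det(M_d)/det(M_{d-1}). -/
theorem stmt10 (μ : Measure ℝ) (d : ℕ) (hd : 1 ≤ d) (hnd : NonDeg μ d)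
    (s : Fin d → ℝ) (w : Fin d → ℝ) (winf : ℝ)
    (hw : ∀ i, 0 < w i) (hwinf : 0 < winf)
    (hq : ∀ f : Polynomial ℝ, f.natDegree ≤ 2 * d →
      ∫ t, f.eval t ∂μ = winf * f.coeff (2 * d) + ∑ i, w i * f.eval (s i)) :
    winf = (hank μ (d + 1) 0).det / (hank μ d 0).det := by
  set M : Matrix (Fin (d+1)) (Fin (d+1)) ℝ := hank μ (d+1) 0 with hM
  set N : Matrix (Fin d) (Fin d) ℝ := hank μ d 0 with hN
  -- moments via the quadrature rule
  have hmom : ∀ k, k ≤ 2 * d →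
      mom μ k = winf * (if 2 * d = k then 1 else 0) + ∑ l, w l * (s l) ^ k := by
    intro k hk
    have h := hq (X ^ k) (by simpa using hk)
    simpa [mom, Polynomial.coeff_X_pow] using h
  -- the monic polynomial with roots s
  set p : Polynomial ℝ := ∏ i : Fin d, (X - C (s i)) with hp
  have hpm : p.Monic := monic_prod_of_monic _ _ fun i _ => monic_X_sub_C _
  have hpd : p.natDegree = d := by
    rw [hp, Polynomial.natDegree_prod _ _ (fun i _ => X_sub_C_ne_zero (s i))]
    simp
  set c : Fin (d+1) → ℝ := fun j => p.coeff j with hc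
  have hclast : c (Fin.last d) = 1 := by
    have := hpm.coeff_natDegree
    simpa [hc, hpd] using this
  have hps : ∀ l, p.eval (s l) = 0 := by
    intro l
    rw [hp, Polynomial.eval_prod]
    exact Finset.prod_eq_zero (Finset.mem_univ l) (by simp)
  have hevalsum : ∀ x : ℝ, ∑ j : Fin (d+1), c j * x ^ (j : ℕ) = p.eval x := by
    intro x
    rw [Polynomial.eval_eq_sum_range' (by omega : p.natDegree < d + 1)]
    exact Fin.sum_univ_eq_sum_range (fun k => p.coeff k * x ^ k) (d+1)
  -- M *ᵥ c = winf • e_last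
  have hMc : M *ᵥ c = winf • (Pi.single (Fin.last d) 1 : Fin (d+1) → ℝ) := by
    funext i
    have hle : ∀ j : Fin (d+1), (i : ℕ) + (j : ℕ) + 0 ≤ 2 * d := by
      intro j; have := i.is_le; have := j.is_le; omega
    have step1 : (M *ᵥ c) i
        = ∑ j : Fin (d+1), (winf * (if 2 * d = (i : ℕ) + (j : ℕ) + 0 then 1 else 0)
            + ∑ l, w l * (s l) ^ ((i : ℕ) + (j : ℕ) + 0)) * c j := by
      simp only [Matrix.mulVec, dotProduct]
      refine Finset.sum_congr rfl fun j _ => ?_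
      rw [show M i j = mom μ ((i:ℕ)+(j:ℕ)+0) from rfl, hmom _ (hle j)]
    rw [step1]
    have expand : ∀ j : Fin (d+1),
        (winf * (if 2 * d = (i : ℕ) + (j : ℕ) + 0 then 1 else 0)
            + ∑ l, w l * (s l) ^ ((i : ℕ) + (j : ℕ) + 0)) * c j
        = winf * ((if 2 * d = (i : ℕ) + (j : ℕ) + 0 then 1 else 0) * c j)
            + ∑ l, w l * (s l) ^ (i : ℕ) * (c j * (s l) ^ (j : ℕ)) := by
      intro j
      rw [add_mul, Finset.sum_mul]
      congr 1
      · ring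
      · refine Finset.sum_congr rfl fun l _ => ?_
        rw [add_zero, pow_add]; ring
    simp only [expand]
    rw [Finset.sum_add_distrib, ← Finset.mul_sum, Finset.sum_comm]
    have hzero : ∑ l, ∑ j : Fin (d+1), w l * (s l) ^ (i : ℕ) * (c j * (s l) ^ (j : ℕ)) = 0 := by
      refine Finset.sum_eq_zero fun l _ => ?_
      rw [← Finset.mul_sum, hevalsum, hps, mul_zero]
    rw [hzero, add_zero]
    have hifsum : ∑ j : Fin (d+1), (if 2 * d = (i : ℕ) + (j : ℕ) + 0 then 1 else 0) * c j
        = if i = Fin.last d then 1 else 0 := by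
      have hcond : ∀ j : Fin (d+1),
          (2 * d = (i : ℕ) + (j : ℕ) + 0) ↔ (i = Fin.last d ∧ j = Fin.last d) := by
        intro j
        constructor
        · intro h
          have hi := i.is_le; have hj := j.is_le
          refine ⟨Fin.ext ?_, Fin.ext ?_⟩ <;> simp only [Fin.val_last] <;> omega
        · rintro ⟨rfl, rfl⟩
          simp only [Fin.val_last]
          omega
      simp_rw [hcond]
      rcases eq_or_ne i (Fin.last d) with hi | hi
      · subst hi
        simp [Finset.sum_ite_eq', hclast]
      · simp [hi]
    rw [hifsum]
    simp [Pi.single_apply]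
  -- N is positive definite
  have hNposdef : N.PosDef := by
    constructor
    · show Nᴴ = N
      ext i j
      simp [hN, hank, Matrix.conjTranspose_apply, Nat.add_comm (i : ℕ) (j : ℕ)]
    · intro v hv
      set q : Polynomial ℝ := ∑ i : Fin d, C (v i) * X ^ (i : ℕ) with hqdef
      have hqcoeff : ∀ k : Fin d, q.coeff (k : ℕ) = v k := by
        intro k
        rw [hqdef, Polynomial.finset_sum_coeff]
        rw [Finset.sum_eq_single k]
        · simp
        · intro j _ hj
          rw [Polynomial.coeff_C_mul, Polynomial.coeff_X_pow,
            if_neg (fun h => hj (Fin.ext (by omega))), mul_zero]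
        · intro h; exact absurd (Finset.mem_univ _) h
      have hq0 : q ≠ 0 := by
        intro h
        apply hv
        ext i
        have := hqcoeff i
        rw [h] at this
        simpa using this.symm
      have hqd : q.natDegree ≤ d := by
        refine Polynomial.natDegree_sum_le_of_forall_le _ _ fun i _ => ?_
        exact le_trans (Polynomial.natDegree_C_mul_X_pow_le _ _) (le_of_lt i.is_lt)
      have hqeval : ∀ x : ℝ, q.eval x = ∑ i : Fin d, v i * x ^ (i : ℕ) := by
        intro x; rw [hqdef]; simp [Polynomial.eval_finset_sum]
      have hpos := hnd.2 (q ^ 2) (pow_ne_zero 2 hq0)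
        (by rw [Polynomial.natDegree_pow]; omega)
        (fun x => by rw [Polynomial.eval_pow]; positivity)
      have hint : ∀ (ij : Fin d × Fin d),
          Integrable (fun t : ℝ => v ij.1 * v ij.2 * t ^ ((ij.1 : ℕ) + (ij.2 : ℕ))) μ := by
        intro ij
        have h1 : (ij.1 : ℕ) + (ij.2 : ℕ) ≤ 2 * d := by
          have ha := ij.1.is_lt; have hb := ij.2.is_lt; omega
        exact (hnd.1 _ h1).const_mul _
      have heq : (∫ t, (q ^ 2).eval t ∂μ) = v ⬝ᵥ (N *ᵥ v) := by
        have e1 : ∀ t : ℝ, (q ^ 2).eval t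
            = ∑ ij : Fin d × Fin d, v ij.1 * v ij.2 * t ^ ((ij.1 : ℕ) + (ij.2 : ℕ)) := by
          intro t
          rw [Polynomial.eval_pow, hqeval, sq, Finset.sum_mul_sum,
            ← Finset.sum_product']
          refine Finset.sum_congr rfl fun ij _ => ?_
          rw [pow_add]; ring
        calc (∫ t, (q ^ 2).eval t ∂μ)
            = ∫ t, ∑ ij : Fin d × Fin d, v ij.1 * v ij.2 * t ^ ((ij.1:ℕ)+(ij.2:ℕ)) ∂μ := by
              simp_rw [e1]
          _ = ∑ ij : Fin d × Fin d, ∫ t, v ij.1 * v ij.2 * t ^ ((ij.1:ℕ)+(ij.2:ℕ)) ∂μ :=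
              integral_finset_sum _ (fun ij _ => hint ij)
          _ = ∑ ij : Fin d × Fin d, v ij.1 * v ij.2 * mom μ ((ij.1:ℕ)+(ij.2:ℕ)) := by
              refine Finset.sum_congr rfl fun ij _ => ?_
              rw [integral_const_mul]; rfl
          _ = v ⬝ᵥ (N *ᵥ v) := by
              simp only [dotProduct, Matrix.mulVec, Finset.mul_sum]
              rw [← Finset.univ_product_univ, Finset.sum_product]
              refine Finset.sum_congr rfl fun i _ => Finset.sum_congr rfl fun j _ => ?_
              rw [hN, show (hank μ d 0) i j = mom μ ((i:ℕ)+(j:ℕ)+0) from rfl]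
              ring
      have : (0:ℝ) < v ⬝ᵥ (N *ᵥ v) := heq ▸ hpos
      have key : ∀ i : Fin d, (v.sum fun j xj => star (v i) * N i j * xj) = v i * (N *ᵥ ⇑v) i := by
        intro i
        rw [Finsupp.sum_fintype _ _ (by simp)]
        simp only [Matrix.mulVec, dotProduct, Finset.mul_sum, star_trivial]
        refine Finset.sum_congr rfl fun j _ => ?_
        ring
      rw [Finsupp.sum_fintype _ _ (by simp)]
      simp only [key]
      simpa only [dotProduct] using this
  have hNdet : 0 < N.det := hNposdef.det_pos
  -- Cramer / adjugate step
  have h2 : M.det • c = winf • (M.adjugate *ᵥ Pi.single (Fin.last d) 1) := by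
    calc M.det • c = (M.adjugate * M) *ᵥ c := by
          rw [Matrix.adjugate_mul, Matrix.smul_mulVec, Matrix.one_mulVec]
      _ = M.adjugate *ᵥ (M *ᵥ c) := by rw [← Matrix.mulVec_mulVec]
      _ = winf • (M.adjugate *ᵥ Pi.single (Fin.last d) 1) := by
          rw [hMc, Matrix.mulVec_smul]
  have h3 : M.det = winf * M.adjugate (Fin.last d) (Fin.last d) := by
    have h := congrFun h2 (Fin.last d)
    simp only [Pi.smul_apply, smul_eq_mul, hclast, mul_one] at h
    rw [h]; simp [Matrix.mulVec_single]
  have h4 : M.adjugate (Fin.last d) (Fin.last d) = N.det := by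
    rw [Matrix.adjugate_apply, det_updateRow_last']
    have hsub : M.submatrix Fin.castSucc Fin.castSucc = N := by
      ext i j
      show mom μ (((Fin.castSucc i) : ℕ) + ((Fin.castSucc j) : ℕ) + 0) = mom μ ((i:ℕ)+(j:ℕ)+0)
      simp
    rw [hsub]
  rw [h3, h4, mul_div_assoc, div_self hNdet.ne', mul_one]
end

section
/- Let μ be non-degenerate in degree d ≥ 1, let s_1,…,s_d be the roots of det(xM_{d−1} − M'_{d−1}) and w_∞ = det(M_d)/det(M_{d−1}). Let y ∈ ℝ with det(yM_{d−1} − M'_{d−1}) ≠ 0, and let y, r_1,…,r_d ∈ ℝ be the nodes of the quadrature rule of degree 2d through y. Set q_y = ∏_{i=1}^d (t − s_i) − ∏_{j=1}^d (t − r_j), a polynomial of degree ≤ d−1. Then for all p ∈ ℝ[t]_{≤d−1}, ∫ p·q_y·(t − y) dμ = w_∞ · (coefficient of t^{d−1} in p). -/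
open MeasureTheory Polynomial

section Aux
variable {μ : Measure ℝ} {d : ℕ}

lemma aux_integrable (h1 : ∀ k ≤ 2 * d, Integrable (fun t => t ^ k) μ)
    {f : Polynomial ℝ} (hf : f.natDegree ≤ 2 * d) :
    Integrable (fun t => f.eval t) μ := by
  have he : (fun t : ℝ => f.eval t)
      = fun t => ∑ k ∈ Finset.range (2 * d + 1), f.coeff k * t ^ k :=
    funext fun t => eval_eq_sum_range' (by omega) t
  rw [he]
  exact integrable_finset_sum _ fun k hk =>
    (h1 k (by simp at hk; omega)).const_mul _

lemma aux_integral (h1 : ∀ k ≤ 2 * d, Integrable (fun t => t ^ k) μ)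
    {f : Polynomial ℝ} (hf : f.natDegree ≤ 2 * d) :
    ∫ t, f.eval t ∂μ = ∑ k ∈ Finset.range (2 * d + 1), f.coeff k * mom μ k := by
  have he : (fun t : ℝ => f.eval t)
      = fun t => ∑ k ∈ Finset.range (2 * d + 1), f.coeff k * t ^ k :=
    funext fun t => eval_eq_sum_range' (by omega) t
  rw [he, integral_finset_sum _ fun k hk => (h1 k (by simp at hk; omega)).const_mul _]
  exact Finset.sum_congr rfl fun k hk => integral_const_mul _ _


lemma aux_posdef (hd : 1 ≤ d) (hnd : NonDeg μ d) : (hank μ d 0).PosDef := by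
  obtain ⟨h1, h2⟩ := hnd
  refine Matrix.PosDef.of_dotProduct_mulVec_pos ?_ ?_
  · ext i j
    simp [hank, Matrix.conjTranspose_apply, add_comm (j : ℕ) (i : ℕ)]
  · intro x hx
    set P : Polynomial ℝ := ∑ i : Fin d, C (x i) * X ^ (i : ℕ) with hP
    have hcoeff : ∀ i : Fin d, P.coeff i = x i := by
      intro i
      rw [hP, finset_sum_coeff]
      rw [Finset.sum_eq_single i]
      · simp
      · intro j _ hji
        simp [coeff_C_mul, coeff_X_pow]
        intro h
        exact absurd (Fin.ext h.symm) hji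
      · simp
    have hPne : P ≠ 0 := by
      obtain ⟨i, hi⟩ := Function.ne_iff.mp hx
      intro h
      have := hcoeff i
      rw [h, coeff_zero] at this
      exact hi (by rw [← this]; rfl)
    have hPdeg : P.natDegree ≤ d - 1 := by
      apply natDegree_sum_le_of_forall_le
      intro i _
      exact (natDegree_C_mul_le _ _).trans (by simp [natDegree_X_pow]; omega)
    have hfd : (P ^ 2).natDegree ≤ 2 * d :=
      (natDegree_pow_le).trans (by omega)
    have hpos := h2 (P ^ 2) (pow_ne_zero _ hPne) hfd (fun t => by
      simp only [eval_pow]; positivity)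
    have hev : ∀ t : ℝ, (P ^ 2).eval t
        = ∑ i : Fin d, ∑ j : Fin d, x i * x j * t ^ ((i : ℕ) + (j : ℕ)) := by
      intro t
      rw [eval_pow, sq, hP]
      simp only [eval_finset_sum, eval_mul, eval_C, eval_pow, eval_X]
      rw [Finset.sum_mul_sum]
      exact Finset.sum_congr rfl fun i _ => Finset.sum_congr rfl fun j _ => by ring
    have hint : ∫ t, (P ^ 2).eval t ∂μ
        = ∑ i : Fin d, ∑ j : Fin d, x i * x j * mom μ ((i : ℕ) + (j : ℕ)) := by
      simp only [funext hev]
      rw [integral_finset_sum _ fun i _ => integrable_finset_sum _ fun j _ =>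
        (h1 _ (by omega)).const_mul _]
      refine Finset.sum_congr rfl fun i _ => ?_
      rw [integral_finset_sum _ fun j _ => (h1 _ (by omega)).const_mul _]
      exact Finset.sum_congr rfl fun j _ => integral_const_mul _ _
    have : dotProduct (star x) ((hank μ d 0).mulVec x)
        = ∑ i : Fin d, ∑ j : Fin d, x i * x j * mom μ ((i : ℕ) + (j : ℕ)) := by
      simp only [star_trivial, dotProduct, Matrix.mulVec, hank, Matrix.of_apply,
        Finset.mul_sum]
      exact Finset.sum_congr rfl fun i _ => Finset.sum_congr rfl fun j _ => by
        simp [dotProduct]; ring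
    rw [this, ← hint]
    exact hpos

lemma aux_det_ne (hd : 1 ≤ d) (hnd : NonDeg μ d) : (hank μ d 0).det ≠ 0 :=
  (aux_posdef hd hnd).det_pos.ne'


lemma aux_charpoly (hd : 1 ≤ d) (hdet : (hank μ d 0).det ≠ 0) (s : Fin d → ℝ)
    (hs : Matrix.det (Matrix.of fun i j : Fin d =>
        Polynomial.C (mom μ ((i : ℕ) + (j : ℕ))) * Polynomial.X
        - Polynomial.C (mom μ ((i : ℕ) + (j : ℕ) + 1)))
      = Polynomial.C (hank μ d 0).det * ∏ i, (Polynomial.X - Polynomial.C (s i))) :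
    ((hank μ d 0)⁻¹ * hank μ d 1).charpoly = ∏ i, (Polynomial.X - Polynomial.C (s i)) := by
  set M := hank μ d 0 with hM
  set M' := hank μ d 1 with hM'
  have hMCo : M * (M⁻¹ * M') = M' := by
    rw [← mul_assoc, Matrix.mul_nonsing_inv _ (isUnit_iff_ne_zero.mpr hdet), one_mul]
  have hA : (Matrix.of fun i j : Fin d =>
        Polynomial.C (mom μ ((i : ℕ) + (j : ℕ))) * Polynomial.X
        - Polynomial.C (mom μ ((i : ℕ) + (j : ℕ) + 1)))
      = (M.map Polynomial.C) * Matrix.charmatrix (M⁻¹ * M') := by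
    rw [Matrix.charmatrix]
    rw [Matrix.mul_sub]
    have h1 : (M.map Polynomial.C) * ((C : ℝ →+* ℝ[X]).mapMatrix (M⁻¹ * M'))
        = M'.map Polynomial.C := by
      have : ((C : ℝ →+* ℝ[X]).mapMatrix (M⁻¹ * M')) = (M⁻¹ * M').map Polynomial.C := rfl
      rw [this, ← Matrix.map_mul (f := (C : ℝ →+* ℝ[X])), hMCo]
    rw [h1]
    refine Matrix.ext fun i j => ?_
    have h2 : ((M.map Polynomial.C) * Matrix.scalar (Fin d) (X : ℝ[X])) i j
        = C (M i j) * X := by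
      show ((M.map Polynomial.C * Matrix.diagonal (fun _ => (X : ℝ[X]))) : Matrix (Fin d) (Fin d) ℝ[X]) i j = C (M i j) * X
      rw [Matrix.mul_diagonal]
      rfl
    simp only [Matrix.sub_apply, Matrix.of_apply, h2, Matrix.map_apply]
    rfl
  have hdet2 := congrArg Matrix.det hA
  rw [hs, Matrix.det_mul] at hdet2
  have h3 : (M.map Polynomial.C).det = C M.det := (RingHom.map_det (C : ℝ →+* ℝ[X]) M).symm
  rw [h3] at hdet2
  have hCne : (C M.det : ℝ[X]) ≠ 0 := by
    simpa using hdet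
  exact (mul_left_cancel₀ hCne hdet2.symm)


lemma aux_Qcoeff (hd : 1 ≤ d) (hdet : (hank μ d 0).det ≠ 0) (i : Fin d) :
    ((hank μ d 0)⁻¹ * hank μ d 1).charpoly.coeff i
      = -((hank μ d 0)⁻¹.mulVec (fun j : Fin d => mom μ ((j : ℕ) + d))) i := by
  set M := hank μ d 0 with hM
  set M' := hank μ d 1 with hM'
  set Co := M⁻¹ * M' with hCo
  set Q := Co.charpoly with hQ
  set g : Fin d → ℝ := fun j => mom μ ((j : ℕ) + d) with hg
  have hunit : IsUnit M.det := isUnit_iff_ne_zero.mpr hdet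
  have hinvM : ∀ v : Fin d → ℝ, M⁻¹.mulVec (M.mulVec v) = v := by
    intro v
    rw [Matrix.mulVec_mulVec, Matrix.nonsing_inv_mul _ hunit, Matrix.one_mulVec]
  have hcolgen : ∀ j : Fin d, Co.mulVec (Pi.single j 1)
      = M⁻¹.mulVec (fun i : Fin d => mom μ ((i : ℕ) + (j : ℕ) + 1)) := by
    intro j
    rw [hCo, ← Matrix.mulVec_mulVec, Matrix.mulVec_single_one]
    rfl
  have hcol : ∀ (j : Fin d) (hj : (j : ℕ) + 1 < d),
      Co.mulVec (Pi.single j 1) = Pi.single (⟨(j : ℕ) + 1, hj⟩ : Fin d) 1 := by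
    intro j hj
    rw [hcolgen j]
    have : (fun i : Fin d => mom μ ((i : ℕ) + (j : ℕ) + 1))
        = M.mulVec (Pi.single (⟨(j : ℕ) + 1, hj⟩ : Fin d) 1) := by
      funext i
      rw [Matrix.mulVec_single_one]
      show mom μ ((i : ℕ) + (j : ℕ) + 1) = M i ⟨(j : ℕ) + 1, hj⟩
      show mom μ ((i : ℕ) + (j : ℕ) + 1) = mom μ ((i : ℕ) + ((j : ℕ) + 1) + 0)
      congr 1
    rw [this, hinvM]
  have hlast : Co.mulVec (Pi.single (⟨d - 1, by omega⟩ : Fin d) 1) = M⁻¹.mulVec g := by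
    have harg : (fun i : Fin d =>
        mom μ ((i : ℕ) + (((⟨d - 1, by omega⟩ : Fin d) : ℕ)) + 1)) = g := by
      funext i
      show mom μ ((i : ℕ) + (d - 1) + 1) = mom μ ((i : ℕ) + d)
      congr 1
      omega
    rw [hcolgen, harg]
  set e0 : Fin d → ℝ := Pi.single (⟨0, by omega⟩ : Fin d) 1 with he0
  have hpow : ∀ k, ∀ hk : k < d, (Co ^ k).mulVec e0 = Pi.single (⟨k, hk⟩ : Fin d) 1 := by
    intro k
    induction k with
    | zero => intro hk; rw [pow_zero, Matrix.one_mulVec]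
    | succ k ih =>
      intro hk
      rw [pow_succ', ← Matrix.mulVec_mulVec, ih (by omega), hcol ⟨k, by omega⟩ hk]
  have hpowd : (Co ^ d).mulVec e0 = M⁻¹.mulVec g := by
    have hd1 : d - 1 + 1 = d := by omega
    have : Co ^ d = Co * Co ^ (d - 1) := by
      conv_rhs => rw [← pow_succ']
      rw [hd1]
    rw [this, ← Matrix.mulVec_mulVec, hpow (d - 1) (by omega), hlast]
  have hQdeg : Q.natDegree = d := by
    rw [hQ, Matrix.charpoly_natDegree_eq_dim, Fintype.card_fin]
  have hQd : Q.coeff d = 1 := by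
    have := (Matrix.charpoly_monic Co).coeff_natDegree
    rwa [hQdeg] at this
  have hCH : ∑ k ∈ Finset.range (d + 1), Q.coeff k • (Co ^ k) = 0 := by
    have h := Matrix.aeval_self_charpoly Co
    rwa [Polynomial.aeval_eq_sum_range, hQdeg] at h
  have hsum : ∑ k ∈ Finset.range (d + 1), Q.coeff k • ((Co ^ k).mulVec e0) = 0 := by
    have h2 : ∀ (sf : Finset ℕ), (∑ k ∈ sf, Q.coeff k • (Co ^ k)).mulVec e0
        = ∑ k ∈ sf, Q.coeff k • ((Co ^ k).mulVec e0) := by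
      intro sf
      induction sf using Finset.cons_induction with
      | empty => simp [Matrix.zero_mulVec]
      | cons a sf ha ih =>
        simp only [Finset.sum_cons, Matrix.add_mulVec, ih, Matrix.smul_mulVec]
    rw [← h2, hCH, Matrix.zero_mulVec]
  rw [Finset.sum_range_succ, hpowd, hQd, one_smul] at hsum
  have hi := congrFun hsum i
  simp only [Pi.add_apply, Finset.sum_apply, Pi.smul_apply, smul_eq_mul, Pi.zero_apply] at hi
  have hrw : ∀ k ∈ Finset.range d,
      Q.coeff k * ((Co ^ k).mulVec e0 i) = if (i : ℕ) = k then Q.coeff k else 0 := by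
    intro k hk
    rw [hpow k (Finset.mem_range.mp hk), Pi.single_apply]
    by_cases h : (i : ℕ) = k
    · rw [if_pos h, if_pos (Fin.ext h), mul_one]
    · rw [if_neg h, if_neg (fun hh => h (by rw [hh])), mul_zero]
  rw [Finset.sum_congr rfl hrw, Finset.sum_ite_eq (Finset.range d) (i : ℕ) (fun k => Q.coeff k),
    if_pos (Finset.mem_range.mpr i.isLt)] at hi
  linarith [hi]


lemma aux_schur (hdet : (hank μ d 0).det ≠ 0) :
    (hank μ (d + 1) 0).det = (hank μ d 0).det
      * (mom μ (2 * d) - dotProduct (fun j : Fin d => mom μ ((j : ℕ) + d))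
          ((hank μ d 0)⁻¹.mulVec (fun j : Fin d => mom μ ((j : ℕ) + d)))) := by
  set M := hank μ d 0 with hM
  set g : Fin d → ℝ := fun j => mom μ ((j : ℕ) + d) with hg
  haveI : Invertible M := M.invertibleOfIsUnitDet (isUnit_iff_ne_zero.mpr hdet)
  set Bc : Matrix (Fin d) (Fin 1) ℝ := Matrix.of fun i _ => g i with hBc
  set Cr : Matrix (Fin 1) (Fin d) ℝ := Matrix.of fun _ j => g j with hCr
  set D : Matrix (Fin 1) (Fin 1) ℝ := Matrix.of fun _ _ => mom μ (2 * d) with hD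
  have key : hank μ (d + 1) 0
      = (Matrix.fromBlocks M Bc Cr D).submatrix finSumFinEquiv.symm finSumFinEquiv.symm := by
    refine Matrix.ext fun p q => ?_
    obtain ⟨a, rfl⟩ := finSumFinEquiv.surjective p
    obtain ⟨b, rfl⟩ := finSumFinEquiv.surjective q
    rw [Matrix.submatrix_apply, Equiv.symm_apply_apply, Equiv.symm_apply_apply]
    rcases a with i | i <;> rcases b with j | j <;>
      simp only [Matrix.fromBlocks_apply₁₁, Matrix.fromBlocks_apply₁₂,
        Matrix.fromBlocks_apply₂₁, Matrix.fromBlocks_apply₂₂, hank, hM, hBc, hCr, hD, hg,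
        Matrix.of_apply, finSumFinEquiv_apply_left, finSumFinEquiv_apply_right,
        Fin.coe_castAdd, Fin.coe_natAdd] <;>
      congr 1 <;> simp [Fin.val_eq_zero] <;> omega
  rw [key, Matrix.det_submatrix_equiv_self, Matrix.det_fromBlocks₁₁,
    Matrix.invOf_eq_nonsing_inv]
  congr 1
  rw [Matrix.det_fin_one]
  simp only [Matrix.sub_apply, hD, Matrix.of_apply]
  congr 1
  simp only [Matrix.mul_apply, dotProduct, Matrix.mulVec, hCr, hBc, Matrix.of_apply,
    dotProduct]
  simp only [Finset.sum_mul, Finset.mul_sum]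
  rw [Finset.sum_comm]
  exact Finset.sum_congr rfl fun k _ => Finset.sum_congr rfl fun j _ => by ring


end Aux

/-- Let μ be non-degenerate in degree d ≥ 1, s₁,…,s_d the roots of det(x M_{d-1} - M'_{d-1}),
w_∞ = det M_d / det M_{d-1}, and y ∈ ℝ with det(y M_{d-1} - M'_{d-1}) ≠ 0. Let
y, r₁,…,r_d ∈ ℝ be the nodes of a quadrature rule of degree 2d through y and set
q_y = ∏(t - s_i) - ∏(t - r_j). Then for all p of degree ≤ d-1,
∫ p q_y (t - y) dμ = w_∞ · (coeff of t^{d-1} in p). -/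

theorem stmt12 (μ : Measure ℝ) (d : ℕ) (hd : 1 ≤ d) (hnd : NonDeg μ d)
    (s : Fin d → ℝ)
    (hs : Matrix.det (Matrix.of fun i j : Fin d =>
        Polynomial.C (mom μ ((i : ℕ) + (j : ℕ))) * Polynomial.X
        - Polynomial.C (mom μ ((i : ℕ) + (j : ℕ) + 1)))
      = Polynomial.C (hank μ d 0).det * ∏ i, (Polynomial.X - Polynomial.C (s i)))
    (y : ℝ) (hy : (y • hank μ d 0 - hank μ d 1).det ≠ 0)
    (r : Fin d → ℝ) (wy : ℝ) (w : Fin d → ℝ)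
    (hwy : 0 < wy) (hw : ∀ j, 0 < w j)
    (hq : ∀ f : Polynomial ℝ, f.natDegree ≤ 2 * d →
      ∫ t, f.eval t ∂μ = wy * f.eval y + ∑ j, w j * f.eval (r j)) :
    ∀ p : Polynomial ℝ, p.natDegree ≤ d - 1 →
      ∫ t, p.eval t *
          ((∏ i, (Polynomial.X - Polynomial.C (s i))).eval t
            - (∏ j, (Polynomial.X - Polynomial.C (r j))).eval t) * (t - y) ∂μ
        = ((hank μ (d + 1) 0).det / (hank μ d 0).det) * p.coeff (d - 1) := by
  have h1 := hnd.1
  have hdet : (hank μ d 0).det ≠ 0 := aux_det_ne hd hnd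
  have hunit : IsUnit (hank μ d 0).det := isUnit_iff_ne_zero.mpr hdet
  have hchar := aux_charpoly hd hdet s hs
  set Q : Polynomial ℝ := ∏ i, (Polynomial.X - Polynomial.C (s i)) with hQdef
  set Qr : Polynomial ℝ := ∏ j, (Polynomial.X - Polynomial.C (r j)) with hQrdef
  have hcoeffQ : ∀ i : Fin d, Q.coeff i
      = -((hank μ d 0)⁻¹.mulVec (fun j : Fin d => mom μ ((j : ℕ) + d))) i := by
    intro i
    rw [← hchar]
    exact aux_Qcoeff hd hdet i
  have hQdeg : Q.natDegree = d := by
    rw [← hchar, Matrix.charpoly_natDegree_eq_dim, Fintype.card_fin]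
  have hQrdeg : Qr.natDegree = d := by
    rw [hQrdef, natDegree_prod_of_monic _ _ (fun i _ => monic_X_sub_C (r i))]
    simp [natDegree_X_sub_C]
  have hQtop : Q.coeff d = 1 := by
    have hm : Q.Monic := monic_prod_of_monic _ _ (fun i _ => monic_X_sub_C (s i))
    have := hm.coeff_natDegree
    rwa [hQdeg] at this
  -- pointwise expansion of t^i * Q.eval t
  have hpt : ∀ (i : ℕ) (t : ℝ), t ^ i * Q.eval t
      = ∑ k ∈ Finset.range (d + 1), Q.coeff k * t ^ (i + k) := by
    intro i t
    rw [Q.eval_eq_sum_range' (Nat.lt_succ_of_le hQdeg.le) t, Finset.mul_sum]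
    exact Finset.sum_congr rfl fun k _ => by ring
  have hIQ : ∀ i ≤ d, Integrable (fun t => t ^ i * Q.eval t) μ := by
    intro i hi
    rw [funext (hpt i)]
    exact integrable_finset_sum _ fun k hk =>
      (h1 (i + k) (by have := Finset.mem_range.mp hk; omega)).const_mul _
  have K1 : ∀ i ≤ d, ∫ t, t ^ i * Q.eval t ∂μ
      = ∑ k ∈ Finset.range (d + 1), Q.coeff k * mom μ (i + k) := by
    intro i hi
    rw [funext (hpt i), integral_finset_sum _ fun k hk =>
      (h1 (i + k) (by have := Finset.mem_range.mp hk; omega)).const_mul _]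
    exact Finset.sum_congr rfl fun k _ => integral_const_mul _ _
  have hMinv : (hank μ d 0).mulVec ((hank μ d 0)⁻¹.mulVec
      (fun j : Fin d => mom μ ((j : ℕ) + d))) = fun j : Fin d => mom μ ((j : ℕ) + d) := by
    rw [Matrix.mulVec_mulVec, Matrix.mul_nonsing_inv _ hunit, Matrix.one_mulVec]
  -- orthogonality
  have horth : ∀ i : ℕ, i < d → ∫ t, t ^ i * Q.eval t ∂μ = 0 := by
    intro i hi
    rw [K1 i (le_of_lt hi), Finset.sum_range_succ, hQtop, one_mul,
      ← Fin.sum_univ_eq_sum_range (fun k => Q.coeff k * mom μ (i + k)) d]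
    have hstep : ∀ k : Fin d, Q.coeff (k : ℕ) * mom μ (i + (k : ℕ))
        = -(((hank μ d 0)⁻¹.mulVec (fun j : Fin d => mom μ ((j : ℕ) + d))) k
            * mom μ (i + (k : ℕ))) := fun k => by rw [hcoeffQ k]; ring
    rw [Finset.sum_congr rfl fun k _ => hstep k, Finset.sum_neg_distrib]
    have hMg : ∑ k : Fin d, ((hank μ d 0)⁻¹.mulVec (fun j : Fin d => mom μ ((j : ℕ) + d))) k
        * mom μ (i + (k : ℕ)) = mom μ (i + d) := by
      calc ∑ k : Fin d, ((hank μ d 0)⁻¹.mulVec (fun j : Fin d => mom μ ((j : ℕ) + d))) k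
            * mom μ (i + (k : ℕ))
          = ∑ k : Fin d, (hank μ d 0) ⟨i, hi⟩ k
            * ((hank μ d 0)⁻¹.mulVec (fun j : Fin d => mom μ ((j : ℕ) + d))) k := by
            refine Finset.sum_congr rfl fun k _ => ?_
            have he : (hank μ d 0) ⟨i, hi⟩ k = mom μ (i + (k : ℕ)) := by
              show mom μ (i + (k : ℕ) + 0) = mom μ (i + (k : ℕ)); rw [Nat.add_zero]
            rw [he]; ring
        _ = ((hank μ d 0).mulVec ((hank μ d 0)⁻¹.mulVec
              (fun j : Fin d => mom μ ((j : ℕ) + d)))) ⟨i, hi⟩ := rfl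
        _ = mom μ (i + d) := by rw [hMinv]
    rw [hMg]
    ring
  -- normalization
  have hnorm : ∫ t, t ^ d * Q.eval t ∂μ = (hank μ (d + 1) 0).det / (hank μ d 0).det := by
    rw [K1 d le_rfl, Finset.sum_range_succ, hQtop, one_mul,
      ← Fin.sum_univ_eq_sum_range (fun k => Q.coeff k * mom μ (d + k)) d]
    have hstep : ∀ k : Fin d, Q.coeff (k : ℕ) * mom μ (d + (k : ℕ))
        = -((fun j : Fin d => mom μ ((j : ℕ) + d)) k
            * ((hank μ d 0)⁻¹.mulVec (fun j : Fin d => mom μ ((j : ℕ) + d))) k) := by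
      intro k
      rw [hcoeffQ k]
      have : mom μ (d + (k : ℕ)) = mom μ ((k : ℕ) + d) := by rw [Nat.add_comm]
      rw [this]; ring
    rw [Finset.sum_congr rfl fun k _ => hstep k, Finset.sum_neg_distrib]
    have hdot : ∑ k : Fin d, (fun j : Fin d => mom μ ((j : ℕ) + d)) k
        * ((hank μ d 0)⁻¹.mulVec (fun j : Fin d => mom μ ((j : ℕ) + d))) k
        = dotProduct (fun j : Fin d => mom μ ((j : ℕ) + d))
          ((hank μ d 0)⁻¹.mulVec (fun j : Fin d => mom μ ((j : ℕ) + d))) := rfl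
    rw [hdot]
    have h2d : mom μ (d + d) = mom μ (2 * d) := by rw [two_mul]
    rw [h2d, aux_schur hdet]
    field_simp
    ring
  -- main computation
  intro p hp
  have hp' : p.natDegree < d := by omega
  have hf2deg : (p * Qr * (X - C y)).natDegree ≤ 2 * d := by
    have h2a : (p * Qr).natDegree ≤ (d - 1) + d :=
      natDegree_mul_le.trans (add_le_add hp hQrdeg.le)
    have h2b : (p * Qr * (X - C y)).natDegree ≤ ((d - 1) + d) + 1 :=
      natDegree_mul_le.trans (add_le_add h2a (natDegree_X_sub_C y).le)
    omega
  have hI2 : ∫ t, (p * Qr * (X - C y)).eval t ∂μ = 0 := by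
    rw [hq _ hf2deg]
    have e1 : (p * Qr * (X - C y)).eval y = 0 := by simp
    have e2 : ∀ j, (p * Qr * (X - C y)).eval (r j) = 0 := by
      intro j
      have hz : Qr.eval (r j) = 0 := by
        rw [hQrdef, eval_prod]
        exact Finset.prod_eq_zero (Finset.mem_univ j) (by simp)
      simp [hz]
    simp [e1, e2]
  have hpt2 : ∀ t : ℝ, p.eval t * (Q.eval t - Qr.eval t) * (t - y)
      = (∑ i ∈ Finset.range d,
          p.coeff i * (t ^ (i + 1) * Q.eval t - y * (t ^ i * Q.eval t)))
        - (p * Qr * (X - C y)).eval t := by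
    intro t
    have hpe : p.eval t = ∑ i ∈ Finset.range d, p.coeff i * t ^ i :=
      eval_eq_sum_range' hp' t
    have hsum : (∑ i ∈ Finset.range d,
          p.coeff i * (t ^ (i + 1) * Q.eval t - y * (t ^ i * Q.eval t)))
        = (∑ i ∈ Finset.range d, p.coeff i * t ^ i) * (Q.eval t * (t - y)) := by
      rw [Finset.sum_mul]
      exact Finset.sum_congr rfl fun i _ => by ring
    rw [hsum, ← hpe]
    simp only [eval_mul, eval_sub, eval_X, eval_C]
    ring
  have hIsum : Integrable (fun t => ∑ i ∈ Finset.range d,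
      p.coeff i * (t ^ (i + 1) * Q.eval t - y * (t ^ i * Q.eval t))) μ := by
    refine integrable_finset_sum _ fun i hi => ?_
    have hi' : i < d := Finset.mem_range.mp hi
    exact (((hIQ (i + 1) (by omega)).sub ((hIQ i (by omega)).const_mul y)).const_mul _)
  calc ∫ t, p.eval t * (Q.eval t - Qr.eval t) * (t - y) ∂μ
      = ∫ t, ((∑ i ∈ Finset.range d,
          p.coeff i * (t ^ (i + 1) * Q.eval t - y * (t ^ i * Q.eval t)))
          - (p * Qr * (X - C y)).eval t) ∂μ := by
        exact congrArg _ (funext fun t => hpt2 t)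
    _ = (∫ t, (∑ i ∈ Finset.range d,
          p.coeff i * (t ^ (i + 1) * Q.eval t - y * (t ^ i * Q.eval t))) ∂μ)
        - ∫ t, (p * Qr * (X - C y)).eval t ∂μ := by
        exact integral_sub hIsum (aux_integrable h1 hf2deg)
    _ = ∑ i ∈ Finset.range d, p.coeff i
          * ((∫ t, t ^ (i + 1) * Q.eval t ∂μ) - y * ∫ t, t ^ i * Q.eval t ∂μ) := by
        rw [hI2, sub_zero]
        have hIint : ∀ i ∈ Finset.range d, Integrable
            (fun t => p.coeff i * (t ^ (i + 1) * Q.eval t - y * (t ^ i * Q.eval t))) μ := by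
          intro i hi
          have hi' : i < d := Finset.mem_range.mp hi
          exact (((hIQ (i + 1) (by omega)).sub ((hIQ i (by omega)).const_mul y)).const_mul _)
        rw [integral_finset_sum _ hIint]
        refine Finset.sum_congr rfl fun i hi => ?_
        have hi' : i < d := Finset.mem_range.mp hi
        rw [integral_const_mul, integral_sub (hIQ (i + 1) (by omega))
          ((hIQ i (by omega)).const_mul y), integral_const_mul]
    _ = ((hank μ (d + 1) 0).det / (hank μ d 0).det) * p.coeff (d - 1) := by
        rw [Finset.sum_eq_single_of_mem (d - 1) (Finset.mem_range.mpr (by omega))]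
        · have h11 : d - 1 + 1 = d := by omega
          rw [h11, hnorm, horth (d - 1) (by omega)]
          ring
        · intro i hi hne
          have hi' : i < d - 1 := by have := Finset.mem_range.mp hi; omega
          rw [horth (i + 1) (by omega), horth i (by omega)]
          ring
end

section
/- Let μ be non-degenerate in degree d ≥ 1. With F(x,y) = det(xy M_{d−1} − (x+y)M'_{d−1} + M''_{d−1}), e_d the last standard basis vector in ℝ^d, and c = (−1)^d det(M_d)/det(M_{d−1})², the identity (x − y)·F(x,y) = c·det of the (2d+1)×(2d+1) block matrix [[ (det M_{d−1}/det M_d)(x−y), e_d^T, e_d^T ], [ e_d, x M_{d−1} − M'_{d−1}, 0 ], [ e_d, 0, −y M_{d−1} + M'_{d−1} ]] holds as polynomials in ℝ[x,y]. -/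
open MeasureTheory Polynomial

namespace Stmt16Aux

open Matrix

noncomputable def bumpF (F : Type*) [Zero F] [One F] (d : ℕ) : Matrix (Fin d) (Fin d) F :=
  Matrix.of fun i j => if ((i : ℕ) + 1 = d) ∧ ((j : ℕ) + 1 = d) then (1 : F) else 0

noncomputable def elF (F : Type*) [Zero F] [One F] (d : ℕ) : Fin d → F :=
  fun i => if (i : ℕ) + 1 = d then (1 : F) else 0

lemma hank_quad_pos {μ : Measure ℝ} {d : ℕ} (hnd : NonDeg μ d) {n : ℕ} (hn : n ≤ d + 1)
    (v : Fin n → ℝ) (hv : v ≠ 0) :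
    0 < v ⬝ᵥ (hank μ n 0 *ᵥ v) := by
  classical
  set p : Polynomial ℝ := ∑ i : Fin n, Polynomial.C (v i) * Polynomial.X ^ (i : ℕ) with hp
  have hcoeff : ∀ i : Fin n, p.coeff (i : ℕ) = v i := by
    intro i
    rw [hp, Polynomial.finset_sum_coeff]
    have : ∀ j : Fin n, (Polynomial.C (v j) * Polynomial.X ^ (j : ℕ)).coeff (i : ℕ)
        = if j = i then v j else 0 := by
      intro j
      rw [Polynomial.coeff_C_mul, Polynomial.coeff_X_pow]
      by_cases h : j = i <;> simp [h, Fin.ext_iff]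
      · omega
    rw [Finset.sum_congr rfl fun j _ => this j, Finset.sum_ite_eq' Finset.univ i (fun j => v j)]
    simp
  have hpne : p ≠ 0 := by
    obtain ⟨i, hi⟩ := Function.ne_iff.mp hv
    intro h
    refine hi ?_
    rw [← hcoeff i, h, Polynomial.coeff_zero]; rfl
  have hdeg : p.natDegree ≤ n - 1 := by
    refine Polynomial.natDegree_sum_le_of_forall_le _ _ fun i _ => ?_
    refine le_trans (Polynomial.natDegree_C_mul_le _ _) ?_
    rw [Polynomial.natDegree_X_pow]
    omega
  have hn1 : 1 ≤ n := by
    rcases Nat.eq_zero_or_pos n with h | h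
    · subst h; exact absurd (Subsingleton.elim v 0) hv
    · exact h
  have hdeg2 : (p * p).natDegree ≤ 2 * d :=
    le_trans (Polynomial.natDegree_mul_le) (by omega)
  have hpos : 0 < ∫ t, (p * p).eval t ∂μ := by
    refine hnd.2 _ (mul_ne_zero hpne hpne) hdeg2 fun x => ?_
    rw [Polynomial.eval_mul]; exact mul_self_nonneg _
  have hint : ∀ i j : Fin n, Integrable (fun t => v i * v j * t ^ ((i : ℕ) + (j : ℕ))) μ := by
    intro i j
    exact (hnd.1 ((i : ℕ) + (j : ℕ)) (by omega)).const_mul _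
  have heval : ∀ t : ℝ, (p * p).eval t
      = ∑ i : Fin n, ∑ j : Fin n, v i * v j * t ^ ((i : ℕ) + (j : ℕ)) := by
    intro t
    rw [Polynomial.eval_mul]
    have : p.eval t = ∑ i : Fin n, v i * t ^ (i : ℕ) := by
      rw [hp, Polynomial.eval_finset_sum]; simp
    rw [this, Finset.sum_mul_sum]
    refine Finset.sum_congr rfl fun i _ => Finset.sum_congr rfl fun j _ => ?_
    rw [pow_add]; ring
  have hkey : ∫ t, (p * p).eval t ∂μ = v ⬝ᵥ (hank μ n 0 *ᵥ v) := by
    have h1 : ∫ t, (p * p).eval t ∂μ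
        = ∑ i : Fin n, ∑ j : Fin n, v i * v j * mom μ ((i : ℕ) + (j : ℕ)) := by
      simp_rw [heval]
      rw [integral_finset_sum _ fun i _ => integrable_finset_sum _ fun j _ => hint i j]
      refine Finset.sum_congr rfl fun i _ => ?_
      rw [integral_finset_sum _ fun j _ => hint i j]
      refine Finset.sum_congr rfl fun j _ => ?_
      rw [mom, ← integral_const_mul]
    rw [h1]
    simp only [dotProduct, mulVec, hank, Matrix.of_apply, mom, Nat.add_zero]
    refine Finset.sum_congr rfl fun i _ => ?_
    rw [Finset.mul_sum]
    refine Finset.sum_congr rfl fun j _ => ?_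
    ring
  rw [← hkey]; exact hpos

lemma hank_det_ne_zero {μ : Measure ℝ} {d : ℕ} (hnd : NonDeg μ d) {n : ℕ} (hn : n ≤ d + 1) :
    (hank μ n 0).det ≠ 0 := by
  have hpd : (hank μ n 0).PosDef := by
    refine Matrix.PosDef.of_dotProduct_mulVec_pos ?_ ?_
    · ext i j
      simp [hank, IsHermitian, Matrix.conjTranspose, mom, Nat.add_comm (i : ℕ) (j : ℕ)]
    · intro v hv
      simpa using hank_quad_pos hnd hn v hv
  exact ne_of_gt hpd.det_pos


lemma mom_congr {a b : ℕ} (h : a = b) : mom μ a = mom μ b := by rw [h]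

/-- w-vector of moments m_{i+d}. -/
noncomputable def wv (μ : Measure ℝ) (d : ℕ) : Fin d → ℝ := fun i => mom μ ((i : ℕ) + d)

lemma det_hank_succ (hdet : (hank μ d 0).det ≠ 0) :
    (hank μ (d + 1) 0).det
      = (hank μ d 0).det * (mom μ (d + d) - wv μ d ⬝ᵥ ((hank μ d 0)⁻¹ *ᵥ wv μ d)) := by
  classical
  haveI : Invertible (hank μ d 0) := (hank μ d 0).invertibleOfIsUnitDet hdet.isUnit
  have hre : ((hank μ (d + 1) 0).submatrix finSumFinEquiv finSumFinEquiv).det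
      = (hank μ (d + 1) 0).det := det_submatrix_equiv_self _ _
  have hblock : (hank μ (d + 1) 0).submatrix finSumFinEquiv finSumFinEquiv
      = fromBlocks (hank μ d 0) (Matrix.of fun i (_ : Fin 1) => wv μ d i)
          (Matrix.of fun (_ : Fin 1) j => wv μ d j) (Matrix.of fun _ _ => mom μ (d + d)) := by
    ext i j
    rcases i with i | i <;> rcases j with j | j <;>
      simp [Matrix.submatrix_apply, hank, fromBlocks, wv, finSumFinEquiv,
        Fin.castAdd, Fin.natAdd, Fin.fin_one_eq_zero,
        Matrix.of_apply] <;>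
      (try (congr 1; omega))
  rw [← hre, hblock, det_fromBlocks₁₁]
  congr 1
  rw [det_fin_one]
  simp only [Matrix.sub_apply, Matrix.mul_apply, Matrix.of_apply, dotProduct, mulVec,
    invOf_eq_nonsing_inv]
  congr 1
  simp only [Finset.sum_mul, Finset.mul_sum]
  rw [Finset.sum_comm]
  exact Finset.sum_congr rfl fun a _ => Finset.sum_congr rfl fun b _ => by ring

lemma schur_identity (hd : 1 ≤ d) (hdet : (hank μ d 0).det ≠ 0) :
    hank μ d 1 * (hank μ d 0)⁻¹ * hank μ d 1
      = hank μ d 2 - ((hank μ (d + 1) 0).det / (hank μ d 0).det) • bumpF ℝ d := by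
  classical
  set M := hank μ d 0 with hM
  set M1 := hank μ d 1 with hM1
  haveI : Invertible M := M.invertibleOfIsUnitDet hdet.isUnit
  set u : Fin d → ℝ := M⁻¹ *ᵥ wv μ d with hu
  have hMu : M *ᵥ u = wv μ d := by
    rw [hu, mulVec_mulVec, mul_nonsing_inv _ hdet.isUnit, one_mulVec]
  set P : Matrix (Fin d) (Fin d) ℝ :=
    Matrix.of (fun i j => if h : (j : ℕ) + 1 < d then (if (i : ℕ) = (j : ℕ) + 1 then 1 else 0)
      else u i) with hP
  have hMP : M * P = M1 := by
    ext i j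
    rw [Matrix.mul_apply]
    by_cases h : (j : ℕ) + 1 < d
    · have : ∀ k : Fin d, M i k * P k j = if k = (⟨(j : ℕ) + 1, h⟩ : Fin d) then M i k else 0 := by
        intro k
        simp only [hP, Matrix.of_apply, dif_pos h, Fin.ext_iff]
        by_cases hk : (k : ℕ) = (j : ℕ) + 1 <;> simp [hk]
      rw [Finset.sum_congr rfl fun k _ => this k, Finset.sum_ite_eq' Finset.univ _ (fun k => M i k)]
      simp only [Finset.mem_univ, if_true, hM, hM1, hank, Matrix.of_apply]
      exact mom_congr (by omega)
    · have hj : (j : ℕ) = d - 1 := by omega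
      have : ∀ k : Fin d, M i k * P k j = M i k * u k := by
        intro k; simp [hP, h]
      rw [Finset.sum_congr rfl fun k _ => this k]
      have : ∑ k, M i k * u k = (M *ᵥ u) i := rfl
      rw [this, hMu]
      simp only [wv, hM1, hank, Matrix.of_apply]
      exact mom_congr (by omega)
  have hMinvM1 : M⁻¹ * M1 = P := by
    rw [← hMP, ← Matrix.mul_assoc, nonsing_inv_mul _ hdet.isUnit, Matrix.one_mul]
  have hγ : wv μ d ⬝ᵥ u = mom μ (d + d) - (hank μ (d + 1) 0).det / M.det := by
    rw [det_hank_succ hdet, mul_div_cancel_left₀ _ hdet, hu]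
    ring
  rw [Matrix.mul_assoc, hMinvM1]
  ext i j
  rw [Matrix.mul_apply]
  by_cases h : (j : ℕ) + 1 < d
  · have : ∀ k : Fin d, M1 i k * P k j = if k = (⟨(j : ℕ) + 1, h⟩ : Fin d) then M1 i k else 0 := by
      intro k
      simp only [hP, Matrix.of_apply, dif_pos h, Fin.ext_iff]
      by_cases hk : (k : ℕ) = (j : ℕ) + 1 <;> simp [hk]
    rw [Finset.sum_congr rfl fun k _ => this k, Finset.sum_ite_eq' Finset.univ _ (fun k => M1 i k)]
    have hjd : ¬ ((j : ℕ) + 1 = d) := by omega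
    simp only [Finset.mem_univ, if_true, Matrix.sub_apply, Matrix.smul_apply, bumpF,
      Matrix.of_apply, hjd, and_false, if_false, smul_zero, sub_zero, hM1, hank]
    exact mom_congr (by omega)
  · have hjd : (j : ℕ) + 1 = d := by omega
    have h1 : ∀ k : Fin d, M1 i k * P k j = M1 i k * u k := by
      intro k; simp [hP, h]
    rw [Finset.sum_congr rfl fun k _ => h1 k]
    by_cases hi : (i : ℕ) + 1 < d
    · have h2 : ∀ k : Fin d, M1 i k * u k = M (⟨(i : ℕ) + 1, hi⟩ : Fin d) k * u k := by
        intro k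
        simp only [hM1, hM, hank, Matrix.of_apply]
        rw [mom_congr (show (i:ℕ) + (k:ℕ) + 1 = (i:ℕ) + 1 + (k:ℕ) + 0 by omega)]
      rw [Finset.sum_congr rfl fun k _ => h2 k]
      have : ∑ k, M (⟨(i : ℕ) + 1, hi⟩ : Fin d) k * u k = (M *ᵥ u) (⟨(i : ℕ) + 1, hi⟩) := rfl
      rw [this, hMu]
      have hid : ¬ ((i : ℕ) + 1 = d) := by omega
      simp only [wv, Matrix.sub_apply, Matrix.smul_apply, bumpF, Matrix.of_apply, hid, false_and,
        if_false, smul_zero, sub_zero, hank]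
      exact mom_congr (by omega)
    · have hid : (i : ℕ) + 1 = d := by omega
      have h2 : ∀ k : Fin d, M1 i k * u k = wv μ d k * u k := by
        intro k
        simp only [hM1, hank, Matrix.of_apply, wv]
        rw [mom_congr (show (i:ℕ) + (k:ℕ) + 1 = (k:ℕ) + d by omega)]
      rw [Finset.sum_congr rfl fun k _ => h2 k]
      have : ∑ k, wv μ d k * u k = wv μ d ⬝ᵥ u := rfl
      rw [this, hγ]
      simp only [Matrix.sub_apply, Matrix.smul_apply, bumpF, Matrix.of_apply, hid, hjd, and_self,
        if_true, smul_eq_mul, mul_one, hank]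
      rw [mom_congr (show d + d = (i:ℕ) + (j:ℕ) + 2 by omega)]


lemma exists_det_smul_sub_ne_zero {d : ℕ} (M M1 : Matrix (Fin d) (Fin d) ℝ)
    (hdet : M.det ≠ 0) :
    ∃ t : ℝ, (t • M - M1).det ≠ 0 := by
  classical
  haveI : Invertible M := M.invertibleOfIsUnitDet hdet.isUnit
  set N : Matrix (Fin d) (Fin d) ℝ := M⁻¹ * M1 with hN
  have hfac : ∀ t : ℝ, t • M - M1 = M * (t • (1 : Matrix (Fin d) (Fin d) ℝ) - N) := by
    intro t
    rw [Matrix.mul_sub, Matrix.mul_smul, Matrix.mul_one, ← Matrix.mul_assoc,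
      mul_nonsing_inv _ hdet.isUnit, Matrix.one_mul]
  have hchar : ∀ t : ℝ, (t • (1 : Matrix (Fin d) (Fin d) ℝ) - N).det = N.charpoly.eval t := by
    intro t
    rw [Matrix.charpoly, ← Polynomial.coe_evalRingHom, RingHom.map_det]
    congr 1
    ext i j
    simp only [RingHom.mapMatrix_apply, Matrix.map_apply, charmatrix_apply,
      Polynomial.coe_evalRingHom, Matrix.sub_apply, Matrix.smul_apply, Matrix.one_apply,
      Polynomial.eval_sub, Polynomial.eval_mul, Matrix.diagonal_apply, Polynomial.eval_X,
      Polynomial.eval_C, Matrix.map_apply, smul_eq_mul]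
    by_cases h : i = j <;> simp [h, Matrix.scalar_apply, Matrix.diagonal_apply]
  have hq : N.charpoly ≠ 0 := N.charpoly_monic.ne_zero
  have : ∃ t : ℝ, N.charpoly.eval t ≠ 0 := by
    by_contra h
    push_neg at h
    exact hq (Polynomial.funext fun r => by simp [h r])
  obtain ⟨t, ht⟩ := this
  refine ⟨t, ?_⟩
  rw [hfac, Matrix.det_mul, hchar]
  exact mul_ne_zero hdet ht


lemma field_identity {F : Type*} [Field F] {d : ℕ} (hd : 1 ≤ d)
    (Mm M1m M2m : Matrix (Fin d) (Fin d) F) (x y md : F)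
    (hm : Mm.det ≠ 0) (hmd : md ≠ 0)
    (hschur : M1m * Mm⁻¹ * M1m = M2m - (md / Mm.det) • bumpF F d)
    (hA : (x • Mm - M1m).det ≠ 0) (hB : (y • Mm - M1m).det ≠ 0) :
    (x - y) * (Matrix.of fun i j => x * y * Mm i j - (x + y) * M1m i j + M2m i j).det
      = ((-1 : F) ^ d * md / Mm.det ^ 2) *
        (fromBlocks (Matrix.of fun (_ _ : Unit) => Mm.det / md * (x - y))
          (Matrix.of fun (_ : Unit) k => Sum.elim (elF F d) (elF F d) k)
          (Matrix.of fun k (_ : Unit) => Sum.elim (elF F d) (elF F d) k)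
          (fromBlocks (x • Mm - M1m) 0 0 (-(y • Mm - M1m)))).det := by
  classical
  set l : Fin d := ⟨d - 1, by omega⟩ with hl
  have hlv : ∀ i : Fin d, ((i : ℕ) + 1 = d) ↔ i = l := by
    intro i; constructor <;> intro h
    · exact Fin.ext (by simp [hl]; omega)
    · subst h; simp [hl]; omega
  have hel : ∀ i : Fin d, elF F d i = if i = l then (1 : F) else 0 := by
    intro i; simp only [elF, hlv]
  set A : Matrix (Fin d) (Fin d) F := x • Mm - M1m with hAdef
  set B : Matrix (Fin d) (Fin d) F := y • Mm - M1m with hBdef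
  haveI : Invertible Mm := Mm.invertibleOfIsUnitDet hm.isUnit
  haveI : Invertible A := A.invertibleOfIsUnitDet hA.isUnit
  haveI : Invertible B := B.invertibleOfIsUnitDet hB.isUnit
  -- the core product
  set X0 : Matrix (Fin d) (Fin d) F := A * Mm⁻¹ * B with hX0def
  have hX0det : X0.det = A.det * Mm.det⁻¹ * B.det := by
    rw [hX0def, det_mul, det_mul, det_nonsing_inv, Ring.inverse_eq_inv']
  have hX0ne : X0.det ≠ 0 := by
    rw [hX0det]
    exact mul_ne_zero (mul_ne_zero hA (inv_ne_zero hm)) hB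
  haveI : Invertible X0 := X0.invertibleOfIsUnitDet hX0ne.isUnit
  have hX0inv : X0⁻¹ = B⁻¹ * Mm * A⁻¹ := by
    refine inv_eq_right_inv ?_
    have hstep : A * Mm⁻¹ * B * (B⁻¹ * Mm * A⁻¹) = A * Mm⁻¹ * B * B⁻¹ * Mm * A⁻¹ := by
      simp only [Matrix.mul_assoc]
    rw [hX0def, hstep, mul_nonsing_inv_cancel_right _ _ hB.isUnit,
      nonsing_inv_mul_cancel_right _ _ hm.isUnit, mul_nonsing_inv _ hA.isUnit]
  -- expansion of the quadratic pencil
  have hexp : X0 = (x * y) • Mm - (x + y) • M1m + M1m * Mm⁻¹ * M1m := by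
    have e1 : A * Mm⁻¹ = x • (1 : Matrix (Fin d) (Fin d) F) - M1m * Mm⁻¹ := by
      rw [hAdef, Matrix.sub_mul, Matrix.smul_mul, mul_nonsing_inv _ hm.isUnit]
    have e2 : X0 = x • B - M1m * Mm⁻¹ * B := by
      rw [hX0def, e1, Matrix.sub_mul, Matrix.smul_mul, Matrix.one_mul]
    have e3 : M1m * Mm⁻¹ * B = y • M1m - M1m * Mm⁻¹ * M1m := by
      rw [hBdef, Matrix.mul_sub, Matrix.mul_smul, nonsing_inv_mul_cancel_right _ _ hm.isUnit]
    rw [e2, e3, hBdef]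
    ext i j
    simp only [Matrix.sub_apply, Matrix.add_apply, Matrix.smul_apply, smul_eq_mul]
    ring
  have hG : (Matrix.of fun i j => x * y * Mm i j - (x + y) * M1m i j + M2m i j)
      = X0 + (md / Mm.det) • bumpF F d := by
    rw [hexp, hschur]
    ext i j
    simp only [Matrix.of_apply, Matrix.add_apply, Matrix.sub_apply, Matrix.smul_apply,
      smul_eq_mul]
    ring
  -- determinant of the rank-one update
  have hbump_row : X0 + (md / Mm.det) • bumpF F d
      = X0.updateRow l (X0 l + (md / Mm.det) • (Pi.single l (1 : F) : Fin d → F)) := by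
    ext i j
    by_cases h : i = l
    · subst h
      rw [Matrix.updateRow_self]
      simp only [Matrix.add_apply, Matrix.smul_apply, bumpF, Matrix.of_apply, Pi.add_apply,
        Pi.smul_apply, Pi.single_apply, smul_eq_mul]
      by_cases hj : j = l
      · subst hj
        have hld : (l : ℕ) + 1 = d := (hlv l).mpr rfl
        simp [Pi.single_apply, hld]
      · have hjd : ¬ ((j : ℕ) + 1 = d) := fun hc => hj ((hlv j).mp hc)
        simp [Pi.single_apply, hjd, hj]
    · rw [Matrix.updateRow_ne h]
      have : ¬ ((i : ℕ) + 1 = d) := fun hc => h ((hlv i).mp hc)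
      simp [bumpF, this]
  have hdetG : (X0 + (md / Mm.det) • bumpF F d).det
      = X0.det + (md / Mm.det) * (X0.det * (B⁻¹ * Mm * A⁻¹) l l) := by
    rw [hbump_row, det_updateRow_add, updateRow_eq_self, det_updateRow_smul,
      ← adjugate_apply]
    have hadj : X0.adjugate = X0.det • X0⁻¹ := by
      calc X0.adjugate = X0⁻¹ * (X0 * X0.adjugate) := by
            rw [← Matrix.mul_assoc, nonsing_inv_mul _ hX0ne.isUnit, Matrix.one_mul]
        _ = X0⁻¹ * (X0.det • 1) := by rw [mul_adjugate]
        _ = X0.det • X0⁻¹ := by rw [Matrix.mul_smul, Matrix.mul_one]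
    rw [hadj, hX0inv]
    simp [smul_eq_mul]
  -- the key resolvent identity
  have hkey : (x - y) • (B⁻¹ * Mm * A⁻¹) = B⁻¹ - A⁻¹ := by
    have h1 : (x - y) • Mm = A - B := by
      rw [hAdef, hBdef]; ext i j
      simp only [Matrix.smul_apply, Matrix.sub_apply, smul_eq_mul]; ring
    calc (x - y) • (B⁻¹ * Mm * A⁻¹) = B⁻¹ * ((x - y) • Mm) * A⁻¹ := by
          rw [Matrix.mul_smul, Matrix.smul_mul]
      _ = B⁻¹ * (A - B) * A⁻¹ := by rw [h1]
      _ = B⁻¹ * A * A⁻¹ - B⁻¹ * B * A⁻¹ := by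
          rw [Matrix.mul_sub, Matrix.sub_mul]
      _ = B⁻¹ - A⁻¹ := by
          rw [mul_nonsing_inv_cancel_right _ _ hA.isUnit, nonsing_inv_mul _ hB.isUnit,
            Matrix.one_mul]
  have hkeyl : (x - y) * (B⁻¹ * Mm * A⁻¹) l l = B⁻¹ l l - A⁻¹ l l := by
    have := congrFun (congrFun hkey l) l
    simpa using this
  -- the block determinant
  set D : Matrix (Fin d ⊕ Fin d) (Fin d ⊕ Fin d) F := fromBlocks A 0 0 (-B) with hDdef
  have hnegBdet : (-B).det = (-1 : F) ^ d * B.det := by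
    rw [det_neg]; simp
  have hDdet : D.det = A.det * ((-1 : F) ^ d * B.det) := by
    rw [hDdef, det_fromBlocks_zero₁₂, hnegBdet]
  have hDne : D.det ≠ 0 := by
    rw [hDdet]
    exact mul_ne_zero hA (mul_ne_zero (pow_ne_zero _ (neg_ne_zero.mpr one_ne_zero)) hB)
  haveI : Invertible D := D.invertibleOfIsUnitDet hDne.isUnit
  have hnegBinv : (-B)⁻¹ = -(B⁻¹) := by
    refine inv_eq_right_inv ?_
    rw [Matrix.neg_mul, Matrix.mul_neg, neg_neg, mul_nonsing_inv _ hB.isUnit]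
  have hDinv : D⁻¹ = fromBlocks A⁻¹ 0 0 (-(B⁻¹)) := by
    refine inv_eq_right_inv ?_
    rw [hDdef, fromBlocks_multiply]
    simp only [Matrix.mul_zero, Matrix.zero_mul, add_zero, zero_add,
      mul_nonsing_inv _ hA.isUnit, Matrix.mul_neg, Matrix.neg_mul, neg_neg,
      mul_nonsing_inv _ hB.isUnit]
    rw [neg_zero, ← fromBlocks_one]
  -- compute the Schur complement of the big matrix
  have hUDV : (Matrix.of fun (_ : Unit) k => Sum.elim (elF F d) (elF F d) k) * D⁻¹ *
      (Matrix.of fun k (_ : Unit) => Sum.elim (elF F d) (elF F d) k)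
      = Matrix.of fun (_ _ : Unit) => A⁻¹ l l - B⁻¹ l l := by
    rw [hDinv]
    ext _ _
    simp only [Matrix.mul_apply, Matrix.of_apply, Fintype.sum_sum_type, Sum.elim_inl,
      Sum.elim_inr, fromBlocks_apply₁₁, fromBlocks_apply₁₂, fromBlocks_apply₂₁,
      fromBlocks_apply₂₂, Matrix.zero_apply, Matrix.neg_apply, hel]
    simp only [ite_mul, one_mul, zero_mul, mul_ite, mul_one, mul_zero]
    simp [Finset.sum_ite_eq', Finset.sum_ite_eq]
    ring
  -- assemble the right-hand side
  have hRHS : (fromBlocks (Matrix.of fun (_ _ : Unit) => Mm.det / md * (x - y))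
          (Matrix.of fun (_ : Unit) k => Sum.elim (elF F d) (elF F d) k)
          (Matrix.of fun k (_ : Unit) => Sum.elim (elF F d) (elF F d) k) D).det
      = D.det * (Mm.det / md * (x - y) - (A⁻¹ l l - B⁻¹ l l)) := by
    rw [det_fromBlocks₂₂]
    congr 1
    rw [invOf_eq_nonsing_inv, det_unique, Matrix.sub_apply, hUDV]
    simp
  have hL : (x - y) * (X0.det + md / Mm.det * (X0.det * (B⁻¹ * Mm * A⁻¹) l l))
      = (x - y) * X0.det + md / Mm.det * X0.det * (B⁻¹ l l - A⁻¹ l l) := by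
    rw [← hkeyl]; ring
  have hsign : ∀ Z : F, ((-1 : F) ^ d * md / Mm.det ^ 2) * (A.det * ((-1 : F) ^ d * B.det) * Z)
      = md / Mm.det ^ 2 * (A.det * B.det * Z) := by
    intro Z
    have h1 : ((-1 : F) ^ d) * ((-1 : F) ^ d) = 1 := by
      rw [← mul_pow]; norm_num
    linear_combination (md / Mm.det ^ 2 * (A.det * B.det * Z)) * h1
  rw [hG, hdetG, hL, hRHS, hDdet, hsign, hX0det]
  field_simp
  ring


end Stmt16Aux

open Stmt16Aux in
open MvPolynomial in
set_option maxHeartbeats 2000000 in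
/-- The linear determinantal representation: with
F(x,y) = det(xy M_{d-1} - (x+y) M'_{d-1} + M''_{d-1}) and
c = (-1)^d det(M_d)/det(M_{d-1})², the identity
(x − y)·F = c · det [[(det M_{d-1}/det M_d)(x−y), e_d^T, e_d^T],
[e_d, x M_{d-1} − M'_{d-1}, 0], [e_d, 0, −y M_{d-1} + M'_{d-1}]]
holds in ℝ[x,y]. -/
theorem stmt16 (μ : Measure ℝ) (d : ℕ) (hd : 1 ≤ d) (hnd : NonDeg μ d) :
    ((MvPolynomial.X 0 - MvPolynomial.X 1 : MvPolynomial (Fin 2) ℝ)) *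
      (Matrix.det (Matrix.of fun i j : Fin d =>
        (MvPolynomial.X 0 * MvPolynomial.X 1 * MvPolynomial.C (mom μ ((i : ℕ) + (j : ℕ)))
          - (MvPolynomial.X 0 + MvPolynomial.X 1) *
              MvPolynomial.C (mom μ ((i : ℕ) + (j : ℕ) + 1))
          + MvPolynomial.C (mom μ ((i : ℕ) + (j : ℕ) + 2)) : MvPolynomial (Fin 2) ℝ)))
    = MvPolynomial.C ((-1 : ℝ) ^ d * (hank μ (d + 1) 0).det / ((hank μ d 0).det) ^ 2) *
      Matrix.det (Matrix.of
        (show (Unit ⊕ Fin d ⊕ Fin d) → (Unit ⊕ Fin d ⊕ Fin d) → MvPolynomial (Fin 2) ℝ from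
          fun a b =>
          match a, b with
          | Sum.inl _, Sum.inl _ =>
              MvPolynomial.C ((hank μ d 0).det / (hank μ (d + 1) 0).det) *
                (MvPolynomial.X 0 - MvPolynomial.X 1)
          | Sum.inl _, Sum.inr (Sum.inl j) => if (j : ℕ) + 1 = d then 1 else 0
          | Sum.inl _, Sum.inr (Sum.inr j) => if (j : ℕ) + 1 = d then 1 else 0
          | Sum.inr (Sum.inl i), Sum.inl _ => if (i : ℕ) + 1 = d then 1 else 0
          | Sum.inr (Sum.inl i), Sum.inr (Sum.inl j) =>
              MvPolynomial.X 0 * MvPolynomial.C (mom μ ((i : ℕ) + (j : ℕ)))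
                - MvPolynomial.C (mom μ ((i : ℕ) + (j : ℕ) + 1))
          | Sum.inr (Sum.inl _), Sum.inr (Sum.inr _) => 0
          | Sum.inr (Sum.inr i), Sum.inl _ => if (i : ℕ) + 1 = d then 1 else 0
          | Sum.inr (Sum.inr _), Sum.inr (Sum.inl _) => 0
          | Sum.inr (Sum.inr i), Sum.inr (Sum.inr j) =>
              - (MvPolynomial.X 1 * MvPolynomial.C (mom μ ((i : ℕ) + (j : ℕ))))
                + MvPolynomial.C (mom μ ((i : ℕ) + (j : ℕ) + 1)))) := by
  classical
  set R := MvPolynomial (Fin 2) ℝ with hR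
  set F := FractionRing R with hF
  set φ : R →+* F := algebraMap R F with hφ
  have hφinj : Function.Injective φ := IsFractionRing.injective R F
  set ψ : ℝ →+* F := φ.comp MvPolynomial.C with hψ
  have hψinj : Function.Injective ψ := ψ.injective
  -- real determinants
  have hdM : (hank μ d 0).det ≠ 0 := hank_det_ne_zero hnd (by omega)
  have hdMd : (hank μ (d + 1) 0).det ≠ 0 := hank_det_ne_zero hnd (le_refl _)
  -- field data
  set x : F := φ (MvPolynomial.X 0) with hx
  set y : F := φ (MvPolynomial.X 1) with hy
  set Mm : Matrix (Fin d) (Fin d) F := ψ.mapMatrix (hank μ d 0) with hMm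
  set M1m : Matrix (Fin d) (Fin d) F := ψ.mapMatrix (hank μ d 1) with hM1m
  set M2m : Matrix (Fin d) (Fin d) F := ψ.mapMatrix (hank μ d 2) with hM2m
  set md : F := ψ ((hank μ (d + 1) 0).det) with hmddef
  have hMmdet : Mm.det = ψ ((hank μ d 0).det) := (RingHom.map_det ψ _).symm
  have hm : Mm.det ≠ 0 := by
    rw [hMmdet]; exact fun h => hdM (hψinj (by rwa [_root_.map_zero]))
  have hmd : md ≠ 0 := fun h => hdMd (hψinj (by rwa [_root_.map_zero]))
  -- Schur identity transported to F
  have hMminv : Mm⁻¹ = ψ.mapMatrix (hank μ d 0)⁻¹ := by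
    refine Matrix.inv_eq_right_inv ?_
    rw [hMm, ← _root_.map_mul, Matrix.mul_nonsing_inv _ hdM.isUnit, _root_.map_one]
  have hbumpmap : ψ.mapMatrix (bumpF ℝ d) = bumpF F d := by
    ext i j
    by_cases h : ((i : ℕ) + 1 = d ∧ (j : ℕ) + 1 = d) <;>
      simp [bumpF, h]
  have hschur : M1m * Mm⁻¹ * M1m = M2m - (md / Mm.det) • bumpF F d := by
    rw [hMminv, hM1m, hM2m, ← _root_.map_mul, ← _root_.map_mul, schur_identity hd hdM]
    rw [RingHom.mapMatrix_apply, RingHom.mapMatrix_apply]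
    ext i j
    simp only [Matrix.map_apply, Matrix.sub_apply, Matrix.smul_apply, smul_eq_mul, _root_.map_sub,
      _root_.map_mul, _root_.map_div₀, hMmdet, hmddef]
    rw [← hbumpmap]
    simp only [RingHom.mapMatrix_apply, Matrix.map_apply]
  -- nonvanishing of pencil determinants
  obtain ⟨t₀, ht₀⟩ := exists_det_smul_sub_ne_zero (hank μ d 0) (hank μ d 1) hdM
  set AR : Matrix (Fin d) (Fin d) R := Matrix.of fun i j =>
    MvPolynomial.X 0 * MvPolynomial.C (mom μ ((i : ℕ) + (j : ℕ)))
      - MvPolynomial.C (mom μ ((i : ℕ) + (j : ℕ) + 1)) with hAR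
  set BR : Matrix (Fin d) (Fin d) R := Matrix.of fun i j =>
    MvPolynomial.X 1 * MvPolynomial.C (mom μ ((i : ℕ) + (j : ℕ)))
      - MvPolynomial.C (mom μ ((i : ℕ) + (j : ℕ) + 1)) with hBR
  have hARdet : AR.det ≠ 0 := by
    intro h
    apply ht₀
    have := congrArg (MvPolynomial.eval (fun _ : Fin 2 => t₀)) h
    rw [_root_.map_zero, RingHom.map_det] at this
    rw [← this]
    congr 1
    ext i j
    simp [hAR, hank, mom, Matrix.smul_apply, Matrix.sub_apply]
  have hBRdet : BR.det ≠ 0 := by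
    intro h
    apply ht₀
    have := congrArg (MvPolynomial.eval (fun _ : Fin 2 => t₀)) h
    rw [_root_.map_zero, RingHom.map_det] at this
    rw [← this]
    congr 1
    ext i j
    simp [hBR, hank, mom, Matrix.smul_apply, Matrix.sub_apply]
  have hARmap : φ.mapMatrix AR = x • Mm - M1m := by
    ext i j
    simp only [RingHom.mapMatrix_apply, Matrix.map_apply, hAR, Matrix.of_apply, _root_.map_sub, _root_.map_mul,
      Matrix.sub_apply, Matrix.smul_apply, smul_eq_mul, hMm, hM1m, hψ, RingHom.comp_apply, hank,
      hx, Matrix.of_apply, Nat.add_zero]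
  have hBRmap : φ.mapMatrix BR = y • Mm - M1m := by
    ext i j
    simp only [RingHom.mapMatrix_apply, Matrix.map_apply, hBR, Matrix.of_apply, _root_.map_sub, _root_.map_mul,
      Matrix.sub_apply, Matrix.smul_apply, smul_eq_mul, hMm, hM1m, hψ, RingHom.comp_apply, hank,
      hy, Matrix.of_apply, Nat.add_zero]
  have hA : (x • Mm - M1m).det ≠ 0 := by
    rw [← hARmap, ← RingHom.map_det]
    exact fun h => hARdet (hφinj (by rwa [_root_.map_zero]))
  have hB : (y • Mm - M1m).det ≠ 0 := by
    rw [← hBRmap, ← RingHom.map_det]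
    exact fun h => hBRdet (hφinj (by rwa [_root_.map_zero]))
  -- the master identity over F
  have key := field_identity hd Mm M1m M2m x y md hm hmd hschur hA hB
  -- transfer back
  apply hφinj
  rw [_root_.map_mul, _root_.map_mul, RingHom.map_det, RingHom.map_det]
  have hGmap : φ.mapMatrix (Matrix.of fun i j : Fin d =>
      (MvPolynomial.X 0 * MvPolynomial.X 1 * MvPolynomial.C (mom μ ((i : ℕ) + (j : ℕ)))
        - (MvPolynomial.X 0 + MvPolynomial.X 1) *
            MvPolynomial.C (mom μ ((i : ℕ) + (j : ℕ) + 1))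
        + MvPolynomial.C (mom μ ((i : ℕ) + (j : ℕ) + 2)) : MvPolynomial (Fin 2) ℝ))
      = Matrix.of fun i j => x * y * Mm i j - (x + y) * M1m i j + M2m i j := by
    ext i j
    simp only [RingHom.mapMatrix_apply, Matrix.map_apply, Matrix.of_apply, _root_.map_add, _root_.map_sub,
      _root_.map_mul, hMm, hM1m, hM2m, hψ, RingHom.comp_apply, hank, hx, hy, Matrix.of_apply, Nat.add_zero]
  have hNmap : φ.mapMatrix (Matrix.of
      (show (Unit ⊕ Fin d ⊕ Fin d) → (Unit ⊕ Fin d ⊕ Fin d) → MvPolynomial (Fin 2) ℝ from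
        fun a b =>
        match a, b with
        | Sum.inl _, Sum.inl _ =>
            MvPolynomial.C ((hank μ d 0).det / (hank μ (d + 1) 0).det) *
              (MvPolynomial.X 0 - MvPolynomial.X 1)
        | Sum.inl _, Sum.inr (Sum.inl j) => if (j : ℕ) + 1 = d then 1 else 0
        | Sum.inl _, Sum.inr (Sum.inr j) => if (j : ℕ) + 1 = d then 1 else 0
        | Sum.inr (Sum.inl i), Sum.inl _ => if (i : ℕ) + 1 = d then 1 else 0
        | Sum.inr (Sum.inl i), Sum.inr (Sum.inl j) =>
            MvPolynomial.X 0 * MvPolynomial.C (mom μ ((i : ℕ) + (j : ℕ)))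
              - MvPolynomial.C (mom μ ((i : ℕ) + (j : ℕ) + 1))
        | Sum.inr (Sum.inl _), Sum.inr (Sum.inr _) => 0
        | Sum.inr (Sum.inr i), Sum.inl _ => if (i : ℕ) + 1 = d then 1 else 0
        | Sum.inr (Sum.inr _), Sum.inr (Sum.inl _) => 0
        | Sum.inr (Sum.inr i), Sum.inr (Sum.inr j) =>
            - (MvPolynomial.X 1 * MvPolynomial.C (mom μ ((i : ℕ) + (j : ℕ))))
              + MvPolynomial.C (mom μ ((i : ℕ) + (j : ℕ) + 1))))
      = Matrix.fromBlocks (Matrix.of fun (_ _ : Unit) => Mm.det / md * (x - y))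
          (Matrix.of fun (_ : Unit) k => Sum.elim (elF F d) (elF F d) k)
          (Matrix.of fun k (_ : Unit) => Sum.elim (elF F d) (elF F d) k)
          (Matrix.fromBlocks (x • Mm - M1m) 0 0 (-(y • Mm - M1m))) := by
    ext a b
    rcases a with a | a | a <;> rcases b with b | b | b
    · show φ (MvPolynomial.C ((hank μ d 0).det / (hank μ (d + 1) 0).det) *
          (MvPolynomial.X 0 - MvPolynomial.X 1))
        = Mm.det / md * (x - y)
      rw [_root_.map_mul, _root_.map_sub]
      congr 1
      rw [show φ (MvPolynomial.C ((hank μ d 0).det / (hank μ (d + 1) 0).det))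
          = ψ ((hank μ d 0).det / (hank μ (d + 1) 0).det) from rfl,
        _root_.map_div₀, hMmdet, hmddef]
    · show φ (if (b : ℕ) + 1 = d then 1 else 0) = elF F d b
      rw [apply_ite φ, _root_.map_one, _root_.map_zero]; rfl
    · show φ (if (b : ℕ) + 1 = d then 1 else 0) = elF F d b
      rw [apply_ite φ, _root_.map_one, _root_.map_zero]; rfl
    · show φ (if (a : ℕ) + 1 = d then 1 else 0) = elF F d a
      rw [apply_ite φ, _root_.map_one, _root_.map_zero]; rfl
    · show φ (MvPolynomial.X 0 * MvPolynomial.C (mom μ ((a : ℕ) + (b : ℕ)))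
          - MvPolynomial.C (mom μ ((a : ℕ) + (b : ℕ) + 1))) = (x • Mm - M1m) a b
      exact congrFun (congrFun hARmap a) b
    · show φ 0 = 0
      exact _root_.map_zero φ
    · show φ (if (a : ℕ) + 1 = d then 1 else 0) = elF F d a
      rw [apply_ite φ, _root_.map_one, _root_.map_zero]; rfl
    · show φ 0 = 0
      exact _root_.map_zero φ
    · show φ (- (MvPolynomial.X 1 * MvPolynomial.C (mom μ ((a : ℕ) + (b : ℕ))))
          + MvPolynomial.C (mom μ ((a : ℕ) + (b : ℕ) + 1))) = (-(y • Mm - M1m)) a b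
      have hb := congrFun (congrFun hBRmap a) b
      rw [_root_.map_add, _root_.map_neg, _root_.map_mul]
      simp only [Matrix.neg_apply, Matrix.sub_apply, Matrix.smul_apply, smul_eq_mul, hMm, hM1m,
        RingHom.mapMatrix_apply, Matrix.map_apply, hψ, RingHom.comp_apply, hank, Matrix.of_apply,
        Nat.add_zero, hx, hy]
      ring
  have hc : φ (MvPolynomial.C ((-1 : ℝ) ^ d * (hank μ (d + 1) 0).det / ((hank μ d 0).det) ^ 2))
      = (-1 : F) ^ d * md / Mm.det ^ 2 := by
    have : φ (MvPolynomial.C ((-1 : ℝ) ^ d * (hank μ (d + 1) 0).det / ((hank μ d 0).det) ^ 2))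
        = ψ ((-1 : ℝ) ^ d * (hank μ (d + 1) 0).det / ((hank μ d 0).det) ^ 2) := rfl
    rw [this, _root_.map_div₀, _root_.map_mul, _root_.map_pow, _root_.map_neg, _root_.map_one, _root_.map_pow, hMmdet, hmddef]
  rw [hGmap, hNmap, _root_.map_sub, hc]
  exact key
end
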